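/- arXiv:2305.01305 — 5 statements merged into one kernel-verified Lean document; each statement's English description precedes it below -/
import Mathlib

section
/- Let k ≥ 3, r ∈ ℕ, and 𝒫 ⊆ [r]^k. Suppose that for every n ∈ ℕ and every coloring ψ of the (k−1)-element subsets of [n] by colors in [r], the k-graph H on [n] whose edges are the k-sets e = {i_1 < i_2 < … < i_k} with (ψ(e∖{i_1}), ψ(e∖{i_2}), …, ψ(e∖{i_k})) ∈ 𝒫 is F-free. Then π_{k−2}(F) ≥ |𝒫|/r^k. -/
open scoped Classical BigOperators

noncomputable section

/-- A family of finsets is `k`-uniform: every member has `k` elements. -/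
def HGIsUniform (k : ℕ) {V : Type*} (G : Finset (Finset V)) : Prop :=
  ∀ e ∈ G, e.card = k

/-- `𝒦_k(G)`: the `k`-element subsets of `Fin n` all of whose `j`-element subsets are
edges of the `j`-graph `G`, i.e. the `k`-sets spanning a clique `K_k^{(j)}` in `G`. -/
def cliqueSet (k j n : ℕ) (G : Finset (Finset (Fin n))) : Finset (Finset (Fin n)) :=
  (Finset.powersetCard k (Finset.univ : Finset (Fin n))).filter
    (fun e => ∀ s ∈ Finset.powersetCard j e, s ∈ G)

/-- A `k`-graph with edge set `E` on `Fin n` is `(d, μ, j)`-dense: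
`|𝒦_k(G) ∩ E| ≥ d·|𝒦_k(G)| − μ·n^k` for every `j`-graph `G` on the vertex set. -/
def IsDense (k j n : ℕ) (d μ : ℝ) (E : Finset (Finset (Fin n))) : Prop :=
  ∀ G : Finset (Finset (Fin n)), HGIsUniform j G →
    d * ((cliqueSet k j n G).card : ℝ) - μ * (n : ℝ) ^ k
      ≤ (((cliqueSet k j n G) ∩ E).card : ℝ)

/-- `E` contains no copy of the `k`-graph `F`. -/
def HGFree {f n : ℕ} (F : Finset (Finset (Fin f))) (E : Finset (Finset (Fin n))) : Prop :=
  ¬ ∃ g : Fin f → Fin n, Function.Injective g ∧ ∀ e ∈ F, e.image g ∈ E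

/-- The uniform Turán density `π_j(F)` of a `k`-graph `F`: the supremum of `d ∈ [0,1]`
such that for every `μ > 0` and every `n₀` there is an `F`-free `(d,μ,j)`-dense
`k`-graph on at least `n₀` vertices. -/
def uniformTuranDensity (k j f : ℕ) (F : Finset (Finset (Fin f))) : ℝ :=
  sSup {d : ℝ | d ∈ Set.Icc (0 : ℝ) 1 ∧ ∀ μ : ℝ, 0 < μ → ∀ n₀ : ℕ, ∃ n : ℕ, n₀ ≤ n ∧
    ∃ E : Finset (Finset (Fin n)), HGIsUniform k E ∧ HGFree F E ∧ IsDense k j n d μ E}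


/-- The `k`-graph on `[n]` determined by a coloring `ψ` of the `(k−1)`-subsets by `[r]`
and a pattern set `Pat ⊆ [r]^k`: a `k`-set `e = {i₁ < ⋯ < i_k}` is an edge iff the tuple
`(ψ(e∖{i₁}), …, ψ(e∖{i_k}))` lies in `Pat`. -/
def colorGraph (k n r : ℕ) (Pat : Finset (Fin k → Fin r))
    (ψ : Finset (Fin n) → Fin r) : Finset (Finset (Fin n)) :=
  (Finset.powersetCard k (Finset.univ : Finset (Fin n))).filter
    (fun e => ∃ h : e.card = k,
      (fun ℓ : Fin k => ψ (e.erase (e.orderEmbOfFin h ℓ))) ∈ Pat)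

lemma sum_mul_sum_factor {κ β : Type*} [DecidableEq κ] [Fintype κ] [Fintype β] (A : Finset κ)
    (F G : (κ → β) → ℝ)
    (hF : ∀ ψ ψ' : κ → β, (∀ i ∈ A, ψ i = ψ' i) → F ψ = F ψ')
    (hG : ∀ ψ ψ' : κ → β, (∀ i ∉ A, ψ i = ψ' i) → G ψ = G ψ') :
    (∑ ψ : κ → β, F ψ) * (∑ ψ : κ → β, G ψ)
      = (Fintype.card (κ → β) : ℝ) * ∑ ψ : κ → β, F ψ * G ψ := by
  classical
  set sel : (κ → β) → (κ → β) → (κ → β) := fun a b i => if i ∈ A then a i else b i with hsel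
  have hinv : Function.Involutive
      (fun q : (κ → β) × (κ → β) => (sel q.1 q.2, sel q.2 q.1)) := by
    rintro ⟨a, b⟩
    simp only [Prod.mk.injEq]
    constructor <;> funext i <;> by_cases hi : i ∈ A <;> simp [sel, hi]
  calc (∑ ψ : κ → β, F ψ) * (∑ ψ : κ → β, G ψ)
      = ∑ q : (κ → β) × (κ → β), F q.1 * G q.2 := by
        rw [Finset.sum_mul_sum, ← Fintype.sum_prod_type']
    _ = ∑ q : (κ → β) × (κ → β), F (sel q.1 q.2) * G (sel q.2 q.1) :=
        (Fintype.sum_bijective _ hinv.bijective _ _ (fun q => rfl)).symm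
    _ = ∑ q : (κ → β) × (κ → β), F q.1 * G q.1 := by
        refine Finset.sum_congr rfl fun q _ => ?_
        rw [hF (sel q.1 q.2) q.1 (fun i hi => by simp [sel, hi]),
            hG (sel q.2 q.1) q.1 (fun i hi => by simp [sel, hi])]
    _ = (Fintype.card (κ → β) : ℝ) * ∑ ψ : κ → β, F ψ * G ψ := by
        rw [show (∑ q : (κ → β) × (κ → β), F q.1 * G q.1)
            = ∑ a : κ → β, ∑ _b : κ → β, F a * G a from Fintype.sum_prod_type _]
        simp [Finset.sum_const, Finset.card_univ, Finset.mul_sum]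

lemma count_comp {κ β : Type*} [DecidableEq κ] [Fintype κ] [Fintype β] [DecidableEq β] {k : ℕ} (m : Fin k → κ)
    (hm : Function.Injective m) (P : Finset (Fin k → β)) :
    (Finset.univ.filter fun ψ : κ → β => (fun ℓ => ψ (m ℓ)) ∈ P).card
      = P.card * Fintype.card β ^ (Fintype.card κ - k) := by
  classical
  have hfiber : ∀ σ : Fin k → β,
      (Finset.univ.filter fun ψ : κ → β => (fun ℓ => ψ (m ℓ)) = σ).card
        = Fintype.card β ^ (Fintype.card κ - k) := by
    intro σ
    rw [← Fintype.card_subtype]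
    have e1 : {ψ : κ → β // (fun ℓ => ψ (m ℓ)) = σ}
        ≃ {ψ : κ → β // ψ ∘ (Subtype.val : {a : κ // a ∈ Set.range m} → κ)
            = σ ∘ (Equiv.ofInjective m hm).symm} := by
      apply Equiv.subtypeEquivRight
      intro ψ
      constructor
      · intro h
        funext a
        have h1 : ((Equiv.ofInjective m hm) ((Equiv.ofInjective m hm).symm a) : κ) = a := by
          rw [Equiv.apply_symm_apply]
        have h2 : m ((Equiv.ofInjective m hm).symm a) = (a : κ) := h1
        simp only [Function.comp_apply, ← h2, ← h]
      · intro h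
        funext ℓ
        have := congrFun h ((Equiv.ofInjective m hm) ℓ)
        simpa [Equiv.ofInjective_apply] using this
    have e2 := Equiv.subtypePreimage (fun a : κ => a ∈ Set.range m)
        (σ ∘ (Equiv.ofInjective m hm).symm)
    rw [Fintype.card_congr (e1.trans e2), Fintype.card_fun]
    congr 1
    rw [Fintype.card_subtype_compl]
    congr 1
    exact (Fintype.card_congr (Equiv.ofInjective m hm).symm).trans (Fintype.card_fin k)
  rw [Finset.card_eq_sum_card_fiberwise
      (f := fun ψ : κ → β => fun ℓ => ψ (m ℓ)) (t := P)
      (s := Finset.univ.filter fun ψ : κ → β => (fun ℓ => ψ (m ℓ)) ∈ P)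
      (fun ψ hψ => (Finset.mem_filter.mp hψ).2)]
  rw [← Finset.sum_const_nat (m := Fintype.card β ^ (Fintype.card κ - k)) (fun σ hσ => rfl)]
  apply Finset.sum_congr rfl
  intro σ hσ
  rw [← hfiber σ]
  congr 1
  ext ψ
  simp only [Finset.mem_filter, Finset.mem_univ, true_and]
  exact ⟨fun ⟨_, h⟩ => h, fun h => ⟨h ▸ hσ, h⟩⟩

/-- the `(k-1)`-subsets of `e`: the coordinates the edge-indicator of `e` depends on. -/
def SCoords {n : ℕ} (e : Finset (Fin n)) : Finset (Finset (Fin n)) :=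
  e.image fun a => e.erase a

/-- sum-class of a `k`-set. -/
def SC {n : ℕ} (e : Finset (Fin n)) : ℕ := (∑ x ∈ e, (x : ℕ)) % n

lemma mem_colorGraph_iff {k n r : ℕ} (Pat : Finset (Fin k → Fin r))
    (ψ : Finset (Fin n) → Fin r) {e : Finset (Fin n)} (he : e.card = k) :
    e ∈ colorGraph k n r Pat ψ
      ↔ (fun ℓ : Fin k => ψ (e.erase (e.orderEmbOfFin he ℓ))) ∈ Pat := by
  simp only [colorGraph, Finset.mem_filter, Finset.mem_powersetCard_univ]
  constructor
  · rintro ⟨-, h, hp⟩; exact hp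
  · intro hp; exact ⟨he, he, hp⟩

lemma mem_colorGraph_congr {k n r : ℕ} (Pat : Finset (Fin k → Fin r))
    {e : Finset (Fin n)} (he : e.card = k) {ψ ψ' : Finset (Fin n) → Fin r}
    (h : ∀ s ∈ SCoords e, ψ s = ψ' s) :
    (e ∈ colorGraph k n r Pat ψ ↔ e ∈ colorGraph k n r Pat ψ') := by
  rw [mem_colorGraph_iff Pat ψ he, mem_colorGraph_iff Pat ψ' he]
  have hfun : (fun ℓ : Fin k => ψ (e.erase (e.orderEmbOfFin he ℓ)))
      = fun ℓ : Fin k => ψ' (e.erase (e.orderEmbOfFin he ℓ)) := by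
    funext ℓ
    exact h _ (Finset.mem_image_of_mem _ (e.orderEmbOfFin_mem he ℓ))
  rw [hfun]

lemma scoords_disjoint {n k : ℕ} {e e' : Finset (Fin n)} (he : e.card = k)
    (he' : e'.card = k) (hsc : SC e = SC e') (hne : e ≠ e') :
    Disjoint (SCoords e) (SCoords e') := by
  rw [Finset.disjoint_left]
  rintro S hS hS'
  obtain ⟨a, ha, rfl⟩ := Finset.mem_image.mp hS
  obtain ⟨b, hb, hEq⟩ := Finset.mem_image.mp hS'
  have h1 : (∑ x ∈ e.erase a, (x : ℕ)) + (a : ℕ) = ∑ x ∈ e, (x : ℕ) :=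
    Finset.sum_erase_add e _ ha
  have h2 : (∑ x ∈ e.erase a, (x : ℕ)) + (b : ℕ) = ∑ x ∈ e', (x : ℕ) := by
    rw [← hEq]; exact Finset.sum_erase_add e' _ hb
  have hmod : ((∑ x ∈ e.erase a, (x : ℕ)) + (a : ℕ)) % n
      = ((∑ x ∈ e.erase a, (x : ℕ)) + (b : ℕ)) % n := by
    rw [h1, h2]; exact hsc
  have hab : (a : ℕ) % n = (b : ℕ) % n := Nat.ModEq.add_left_cancel' _ hmod
  have : a = b := by
    apply Fin.ext
    rwa [Nat.mod_eq_of_lt a.isLt, Nat.mod_eq_of_lt b.isLt] at hab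
  subst this
  apply hne
  rw [← Finset.insert_erase ha, ← Finset.insert_erase hb, hEq]

lemma class_card {n k c : ℕ} (hk : 1 ≤ k) (C : Finset (Finset (Fin n)))
    (hC : ∀ e ∈ C, e.card = k) (hsc : ∀ e ∈ C, SC e = c) : C.card ≤ n ^ (k - 1) := by
  classical
  set φ : Finset (Fin n) → Finset (Fin n) :=
    fun e => if h : e.Nonempty then e.erase (e.max' h) else ∅ with hφ
  have hmem : ∀ e ∈ C, φ e ∈ SCoords e := by
    intro e heC
    have hne : e.Nonempty := Finset.card_pos.mp (by rw [hC e heC]; omega)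
    simp only [φ, dif_pos hne]
    exact Finset.mem_image_of_mem _ (e.max'_mem hne)
  have hinj : Set.InjOn φ C := by
    intro e heC e' heC' hEq
    by_contra hne
    have hd := scoords_disjoint (hC e heC) (hC e' heC')
      ((hsc e heC).trans (hsc e' heC').symm) hne
    exact (Finset.disjoint_left.mp hd (hmem e heC)) (hEq ▸ hmem e' heC')
  calc C.card ≤ (Finset.powersetCard (k-1) (Finset.univ : Finset (Fin n))).card := by
        apply Finset.card_le_card_of_injOn φ _ hinj
        intro e heC
        rw [Finset.mem_coe, Finset.mem_powersetCard_univ]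
        have hne : e.Nonempty := Finset.card_pos.mp (by rw [hC e heC]; omega)
        simp only [φ, dif_pos hne]
        rw [Finset.card_erase_of_mem (e.max'_mem hne), hC e heC]
    _ ≤ n ^ (k - 1) := by
        rw [Finset.card_powersetCard, Finset.card_univ, Fintype.card_fin]
        exact Nat.choose_le_pow _ _

lemma edge_count {k n r : ℕ} (Pat : Finset (Fin k → Fin r)) {e : Finset (Fin n)}
    (he : e.card = k) :
    (Finset.univ.filter fun ψ : Finset (Fin n) → Fin r => e ∈ colorGraph k n r Pat ψ).card
      = Pat.card * r ^ (2 ^ n - k) := by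
  classical
  set m : Fin k → Finset (Fin n) := fun ℓ => e.erase (e.orderEmbOfFin he ℓ) with hm
  have hinj : Function.Injective m := by
    intro ℓ ℓ' h
    have := (Finset.erase_inj e (e.orderEmbOfFin_mem he ℓ)).mp h
    exact (e.orderEmbOfFin he).injective this
  have hset : (Finset.univ.filter fun ψ : Finset (Fin n) → Fin r => e ∈ colorGraph k n r Pat ψ)
      = Finset.univ.filter fun ψ : Finset (Fin n) → Fin r => (fun ℓ => ψ (m ℓ)) ∈ Pat := by
    ext ψ
    simp only [Finset.mem_filter, Finset.mem_univ, true_and]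
    exact mem_colorGraph_iff Pat ψ he
  rw [hset]
  calc _ = Pat.card * Fintype.card (Fin r) ^ (Fintype.card (Finset (Fin n)) - k) :=
        count_comp m hinj Pat
    _ = Pat.card * r ^ (2 ^ n - k) := by
        rw [Fintype.card_finset, Fintype.card_fin, Fintype.card_fin]

lemma sum_ite_edge {k n r : ℕ} (hr : 0 < r) (Pat : Finset (Fin k → Fin r)) (hkn : k ≤ 2 ^ n)
    {e : Finset (Fin n)} (he : e.card = k) (t : ℝ) :
    ∑ ψ : Finset (Fin n) → Fin r, (if e ∈ colorGraph k n r Pat ψ then t else 1)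
      = (r : ℝ) ^ (2 ^ n) *
          (((Pat.card : ℝ) / (r : ℝ) ^ k) * t + (1 - (Pat.card : ℝ) / (r : ℝ) ^ k)) := by
  classical
  have hcardU : (Finset.univ : Finset (Finset (Fin n) → Fin r)).card = r ^ (2 ^ n) := by
    rw [Finset.card_univ, Fintype.card_fun, Fintype.card_finset, Fintype.card_fin,
      Fintype.card_fin]
  have step1 : ∑ ψ : Finset (Fin n) → Fin r, (if e ∈ colorGraph k n r Pat ψ then t else 1)
      = ∑ ψ : Finset (Fin n) → Fin r,
          ((t - 1) * (if e ∈ colorGraph k n r Pat ψ then (1:ℝ) else 0) + 1) := by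
    apply Finset.sum_congr rfl
    intro ψ _
    by_cases h : e ∈ colorGraph k n r Pat ψ <;> simp [h]
  rw [step1, Finset.sum_add_distrib, ← Finset.mul_sum, Finset.sum_boole, Finset.sum_const,
    hcardU, edge_count Pat he, nsmul_eq_mul, mul_one]
  have hpow : (r : ℝ) ^ k * (r : ℝ) ^ (2 ^ n - k) = (r : ℝ) ^ (2 ^ n) := by
    rw [← pow_add]; congr 1; omega
  have hrk : ((r:ℝ) ^ k) ≠ 0 := by positivity
  push_cast
  field_simp
  linear_combination ((Pat.card : ℝ)) * (t - 1) * hpow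

lemma sum_prod_count {k n r : ℕ} (hr : 0 < r) (Pat : Finset (Fin k → Fin r)) (hkn : k ≤ 2 ^ n)
    (t : ℝ) :
    ∀ C : Finset (Finset (Fin n)), (∀ e ∈ C, e.card = k) →
      (∀ e ∈ C, ∀ e' ∈ C, e ≠ e' → Disjoint (SCoords e) (SCoords e')) →
      ∑ ψ : Finset (Fin n) → Fin r, ∏ e ∈ C, (if e ∈ colorGraph k n r Pat ψ then t else 1)
        = (r : ℝ) ^ (2 ^ n) *
            (((Pat.card : ℝ) / (r : ℝ) ^ k) * t + (1 - (Pat.card : ℝ) / (r : ℝ) ^ k)) ^ C.card := by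
  classical
  intro C
  induction C using Finset.cons_induction with
  | empty =>
      intro _ _
      simp [Finset.card_univ, Fintype.card_fun, Fintype.card_finset]
  | cons e₀ C' hne ih =>
      intro hC hdisj
      have hC' : ∀ e ∈ C', e.card = k := fun e he => hC e (Finset.mem_cons_of_mem he)
      have hdisj' : ∀ e ∈ C', ∀ e' ∈ C', e ≠ e' → Disjoint (SCoords e) (SCoords e') :=
        fun e he e' he' => hdisj e (Finset.mem_cons_of_mem he) e' (Finset.mem_cons_of_mem he')
      have he₀ : e₀.card = k := hC e₀ (Finset.mem_cons_self e₀ C')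
      set F : (Finset (Fin n) → Fin r) → ℝ :=
        fun ψ => if e₀ ∈ colorGraph k n r Pat ψ then t else 1 with hFdef
      set G : (Finset (Fin n) → Fin r) → ℝ :=
        fun ψ => ∏ e ∈ C', (if e ∈ colorGraph k n r Pat ψ then t else 1) with hGdef
      have hF : ∀ ψ ψ' : Finset (Fin n) → Fin r,
          (∀ i ∈ SCoords e₀, ψ i = ψ' i) → F ψ = F ψ' := by
        intro ψ ψ' hag
        simp only [hFdef, mem_colorGraph_congr Pat he₀ hag]
      have hG : ∀ ψ ψ' : Finset (Fin n) → Fin r,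
          (∀ i ∉ SCoords e₀, ψ i = ψ' i) → G ψ = G ψ' := by
        intro ψ ψ' hag
        simp only [hGdef]
        refine Finset.prod_congr rfl fun e he' => ?_
        have hne0 : e₀ ≠ e := fun h => hne (h ▸ he')
        have hd := hdisj e₀ (Finset.mem_cons_self e₀ C') e (Finset.mem_cons_of_mem he') hne0
        have hagree : ∀ s ∈ SCoords e, ψ s = ψ' s := fun s hs =>
          hag s (fun hmem => Finset.disjoint_left.mp hd hmem hs)
        simp only [mem_colorGraph_congr Pat (hC' e he') hagree]
      have key := sum_mul_sum_factor (SCoords e₀) F G hF hG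
      have hcard : (Fintype.card (Finset (Fin n) → Fin r) : ℝ) = (r : ℝ) ^ (2 ^ n) := by
        rw [Fintype.card_fun, Fintype.card_finset, Fintype.card_fin, Fintype.card_fin]
        push_cast
        rfl
      have hSF : ∑ ψ : Finset (Fin n) → Fin r, F ψ
          = (r : ℝ) ^ (2 ^ n) *
            (((Pat.card : ℝ) / (r : ℝ) ^ k) * t + (1 - (Pat.card : ℝ) / (r : ℝ) ^ k)) :=
        sum_ite_edge hr Pat hkn he₀ t
      have hSG := ih hC' hdisj'
      have hM : ((r : ℝ) ^ (2 ^ n)) ≠ 0 := by positivity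
      have hstep : ∑ ψ : Finset (Fin n) → Fin r,
          ∏ e ∈ Finset.cons e₀ C' hne, (if e ∈ colorGraph k n r Pat ψ then t else 1)
          = ∑ ψ : Finset (Fin n) → Fin r, F ψ * G ψ := by
        refine Finset.sum_congr rfl fun ψ _ => ?_
        rw [Finset.prod_cons]
      rw [hstep, Finset.card_cons]
      apply mul_left_cancel₀ hM
      rw [hcard] at key
      rw [← key, hSF, hSG]
      ring

lemma exp_neg_le {lam : ℝ} (h0 : 0 ≤ lam) (h1 : lam ≤ 1) :
    Real.exp (-lam) ≤ 1 - lam + 3/4 * lam ^ 2 := by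
  have habs : |(-lam)| ≤ 1 := by rwa [abs_neg, abs_of_nonneg h0]
  have hb := Real.exp_bound habs (n := 2) (by norm_num)
  have hsum : ∑ m ∈ Finset.range 2, (-lam) ^ m / (m.factorial : ℝ) = 1 - lam := by
    simp [Finset.sum_range_succ, Nat.factorial]
    ring
  rw [hsum] at hb
  rw [abs_neg, abs_of_nonneg h0] at hb
  norm_num [Nat.factorial] at hb
  have := (abs_sub_le_iff.mp hb).1
  nlinarith [sq_nonneg lam]

lemma tail_bound {k n r : ℕ} (hr : 0 < r) (Pat : Finset (Fin k → Fin r)) (hkn : k ≤ 2 ^ n)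
    {lam s : ℝ} (hlam0 : 0 < lam) (hlam1 : lam ≤ 1) {B : ℕ}
    (C : Finset (Finset (Fin n))) (hC : ∀ e ∈ C, e.card = k)
    (hdisj : ∀ e ∈ C, ∀ e' ∈ C, e ≠ e' → Disjoint (SCoords e) (SCoords e'))
    (hCB : C.card ≤ B) :
    ((Finset.univ.filter fun ψ : Finset (Fin n) → Fin r =>
        ((C ∩ colorGraph k n r Pat ψ).card : ℝ)
          < ((Pat.card : ℝ) / (r : ℝ) ^ k) * C.card - s).card : ℝ)
      ≤ (r : ℝ) ^ (2 ^ n) * Real.exp (-(lam * s) + 3/4 * lam ^ 2 * B) := by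
  classical
  set p := (Pat.card : ℝ) / (r : ℝ) ^ k with hpdef
  have hp0 : 0 ≤ p := by positivity
  have hp1 : p ≤ 1 := by
    rw [hpdef, div_le_one (by positivity)]
    calc (Pat.card : ℝ) ≤ (Fintype.card (Fin k → Fin r) : ℝ) := by
          exact_mod_cast Finset.card_le_univ Pat
      _ = (r : ℝ) ^ k := by rw [Fintype.card_fun, Fintype.card_fin, Fintype.card_fin]; push_cast; rfl
  have hfac : ∀ (ψ : Finset (Fin n) → Fin r) (e : Finset (Fin n)),
      (0:ℝ) ≤ (if e ∈ colorGraph k n r Pat ψ then Real.exp (-lam) else 1) := by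
    intro ψ e
    split_ifs
    · exact (Real.exp_pos _).le
    · exact zero_le_one
  have hA : ∀ ψ : Finset (Fin n) → Fin r,
      ∏ e ∈ C, (if e ∈ colorGraph k n r Pat ψ then Real.exp (-lam) else 1)
        = Real.exp (-(lam * ((C ∩ colorGraph k n r Pat ψ).card : ℝ))) := by
    intro ψ
    have h1 : ((C ∩ colorGraph k n r Pat ψ).card : ℝ)
        = ∑ e ∈ C, (if e ∈ colorGraph k n r Pat ψ then (1:ℝ) else 0) := by
      rw [← Finset.filter_mem_eq_inter, Finset.card_filter]
      push_cast
      rfl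
    calc ∏ e ∈ C, (if e ∈ colorGraph k n r Pat ψ then Real.exp (-lam) else 1)
        = ∏ e ∈ C, Real.exp (-(lam * (if e ∈ colorGraph k n r Pat ψ then (1:ℝ) else 0))) := by
          refine Finset.prod_congr rfl fun e _ => ?_
          by_cases h : e ∈ colorGraph k n r Pat ψ <;> simp [h]
      _ = Real.exp (∑ e ∈ C, -(lam * (if e ∈ colorGraph k n r Pat ψ then (1:ℝ) else 0))) :=
          (Real.exp_sum _ _).symm
      _ = Real.exp (-(lam * ((C ∩ colorGraph k n r Pat ψ).card : ℝ))) := by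
          congr 1
          rw [h1, Finset.mul_sum, ← Finset.sum_neg_distrib]
  set Bad := Finset.univ.filter (fun ψ : Finset (Fin n) → Fin r =>
      ((C ∩ colorGraph k n r Pat ψ).card : ℝ) < p * C.card - s) with hBaddef
  set y := lam * (p * C.card - s) with hydef
  have hmark : (Bad.card : ℝ) * Real.exp (-y)
      ≤ ∑ ψ : Finset (Fin n) → Fin r,
          ∏ e ∈ C, (if e ∈ colorGraph k n r Pat ψ then Real.exp (-lam) else 1) := by
    have h2 : ∀ ψ ∈ Bad, Real.exp (-y)
        ≤ ∏ e ∈ C, (if e ∈ colorGraph k n r Pat ψ then Real.exp (-lam) else 1) := by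
      intro ψ hψ
      rw [hA ψ]
      apply Real.exp_le_exp.mpr
      have hx : ((C ∩ colorGraph k n r Pat ψ).card : ℝ) ≤ p * C.card - s :=
        le_of_lt (Finset.mem_filter.mp hψ).2
      rw [hydef]
      nlinarith [hlam0.le]
    calc (Bad.card : ℝ) * Real.exp (-y) = ∑ _ψ ∈ Bad, Real.exp (-y) := by
          rw [Finset.sum_const, nsmul_eq_mul]
      _ ≤ ∑ ψ ∈ Bad, ∏ e ∈ C, (if e ∈ colorGraph k n r Pat ψ then Real.exp (-lam) else 1) :=
          Finset.sum_le_sum h2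
      _ ≤ ∑ ψ : Finset (Fin n) → Fin r,
            ∏ e ∈ C, (if e ∈ colorGraph k n r Pat ψ then Real.exp (-lam) else 1) :=
          Finset.sum_le_sum_of_subset_of_nonneg (Finset.subset_univ Bad)
            (fun ψ _ _ => Finset.prod_nonneg fun e _ => hfac ψ e)
  have hsum := sum_prod_count hr Pat hkn (Real.exp (-lam)) C hC hdisj
  rw [hsum] at hmark
  have hbase0 : (0:ℝ) ≤ p * Real.exp (-lam) + (1 - p) := by
    have := (Real.exp_pos (-lam)).le
    nlinarith
  have hbase : p * Real.exp (-lam) + (1 - p) ≤ Real.exp (p * (Real.exp (-lam) - 1)) := by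
    have := Real.add_one_le_exp (p * (Real.exp (-lam) - 1))
    nlinarith
  have hpow : (p * Real.exp (-lam) + (1 - p)) ^ C.card
      ≤ Real.exp ((C.card : ℝ) * (p * (Real.exp (-lam) - 1))) := by
    rw [Real.exp_nat_mul]
    exact pow_le_pow_left₀ hbase0 hbase C.card
  have hM0 : (0:ℝ) < (r : ℝ) ^ (2 ^ n) := by positivity
  have hstep : (Bad.card : ℝ)
      ≤ (r : ℝ) ^ (2 ^ n) *
          Real.exp ((C.card : ℝ) * (p * (Real.exp (-lam) - 1)) + y) := by
    have h3 : (Bad.card : ℝ)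
        = ((Bad.card : ℝ) * Real.exp (-y)) * Real.exp y := by
      rw [mul_assoc, ← Real.exp_add]
      simp
    rw [h3, Real.exp_add]
    calc ((Bad.card : ℝ) * Real.exp (-y)) * Real.exp y
        ≤ ((r : ℝ) ^ (2 ^ n) * (p * Real.exp (-lam) + (1 - p)) ^ C.card) * Real.exp y :=
          mul_le_mul_of_nonneg_right hmark (Real.exp_pos y).le
      _ ≤ ((r : ℝ) ^ (2 ^ n) * Real.exp ((C.card : ℝ) * (p * (Real.exp (-lam) - 1))))
            * Real.exp y := by
          apply mul_le_mul_of_nonneg_right _ (Real.exp_pos y).le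
          exact mul_le_mul_of_nonneg_left hpow hM0.le
      _ = (r : ℝ) ^ (2 ^ n) *
            (Real.exp ((C.card : ℝ) * (p * (Real.exp (-lam) - 1))) * Real.exp y) := by ring
  refine hstep.trans ?_
  apply mul_le_mul_of_nonneg_left _ hM0.le
  apply Real.exp_le_exp.mpr
  have hexp1 : 1 - lam ≤ Real.exp (-lam) := Real.one_sub_le_exp_neg lam
  have hexp2 : Real.exp (-lam) ≤ 1 - lam + 3/4 * lam ^ 2 := exp_neg_le hlam0.le hlam1
  have hCBr : (C.card : ℝ) ≤ (B : ℝ) := by exact_mod_cast hCB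
  have hC0 : (0:ℝ) ≤ (C.card : ℝ) := by positivity
  have hB0 : (0:ℝ) ≤ (B : ℝ) := by positivity
  rw [hydef]
  nlinarith [mul_le_mul_of_nonneg_left hexp2 (mul_nonneg hp0 hC0),
    mul_le_mul_of_nonneg_left hexp1 (mul_nonneg hp0 hC0),
    mul_le_mul_of_nonneg_right hCBr (mul_nonneg (mul_nonneg (by norm_num : (0:ℝ) ≤ 3/4) (sq_nonneg lam)) hp0),
    mul_le_mul_of_nonneg_right hp1 (mul_nonneg (by norm_num : (0:ℝ) ≤ 3/4) (sq_nonneg lam))]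

lemma exists_good {k r : ℕ} (hk : 3 ≤ k) (hr : 0 < r) (Pat : Finset (Fin k → Fin r))
    {mu' : ℝ} (hm0 : 0 < mu') (hm1 : mu' ≤ 1) {n : ℕ} (hkn : k ≤ n)
    (hbig : (2:ℝ) ^ (n ^ (k-2)) * n * Real.exp (-(5/16 * mu' ^ 2) * (n:ℝ) ^ (k-1)) < 1) :
    ∃ ψ : Finset (Fin n) → Fin r, ∀ G : Finset (Finset (Fin n)), HGIsUniform (k-2) G →
      ∀ c ∈ Finset.range n,
        ((Pat.card : ℝ) / (r : ℝ) ^ k) *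
            ((((cliqueSet k (k-2) n G).filter fun e => SC e = c)).card : ℝ)
          - mu' * (n:ℝ) ^ (k-1)
        ≤ ((((cliqueSet k (k-2) n G).filter fun e => SC e = c)
              ∩ colorGraph k n r Pat ψ).card : ℝ) := by
  classical
  have hn3 : 3 ≤ n := le_trans hk hkn
  have hk2 : k ≤ 2 ^ n := le_trans hkn (Nat.lt_two_pow_self (n := n)).le
  set p := (Pat.card : ℝ) / (r : ℝ) ^ k with hpdef
  set lam := mu' / 2 with hlam
  set s := mu' * (n:ℝ) ^ (k-1) with hs
  set CL : Finset (Finset (Fin n)) → ℕ → Finset (Finset (Fin n)) :=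
    fun G c => (cliqueSet k (k-2) n G).filter (fun e => SC e = c) with hCL
  set BadGC : Finset (Finset (Fin n)) → ℕ → Finset (Finset (Fin n) → Fin r) :=
    fun G c => Finset.univ.filter (fun ψ =>
      ((CL G c ∩ colorGraph k n r Pat ψ).card : ℝ) < p * (CL G c).card - s) with hBadGC
  have hCLcard : ∀ G c, ∀ e ∈ CL G c, e.card = k := by
    intro G c e he
    have h1 := (Finset.mem_filter.mp he).1
    have h2 := (Finset.mem_filter.mp h1).1
    exact Finset.mem_powersetCard_univ.mp h2
  have hCLdisj : ∀ G c, ∀ e ∈ CL G c, ∀ e' ∈ CL G c, e ≠ e' →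
      Disjoint (SCoords e) (SCoords e') := by
    intro G c e he e' he' hne
    exact scoords_disjoint (hCLcard G c e he) (hCLcard G c e' he')
      (((Finset.mem_filter.mp he).2).trans ((Finset.mem_filter.mp he').2).symm) hne
  have hCLB : ∀ G c, (CL G c).card ≤ n ^ (k-1) := fun G c =>
    class_card (by omega) _ (hCLcard G c) (fun e he => (Finset.mem_filter.mp he).2)
  have htail : ∀ G c, ((BadGC G c).card : ℝ)
      ≤ (r:ℝ)^(2^n) * Real.exp (-(5/16 * mu' ^ 2) * (n:ℝ)^(k-1)) := by
    intro G c
    have hl0 : 0 < lam := by rw [hlam]; linarith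
    have hl1 : lam ≤ 1 := by rw [hlam]; linarith
    have h := tail_bound hr Pat hk2 (s := s) hl0 hl1 (B := n^(k-1))
      (CL G c) (hCLcard G c) (hCLdisj G c) (hCLB G c)
    refine le_trans h ?_
    apply mul_le_mul_of_nonneg_left _ (by positivity)
    apply Real.exp_le_exp.mpr
    have hcast : ((n ^ (k-1) : ℕ) : ℝ) = (n:ℝ) ^ (k-1) := by push_cast; rfl
    rw [hcast, hlam, hs]
    apply le_of_eq
    ring
  set GG := (Finset.powersetCard (k-2) (Finset.univ : Finset (Fin n))).powerset with hGG
  set Bad := Finset.univ.filter (fun ψ : Finset (Fin n) → Fin r =>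
      ∃ G, HGIsUniform (k-2) G ∧ ∃ c ∈ Finset.range n,
        ((CL G c ∩ colorGraph k n r Pat ψ).card : ℝ) < p * (CL G c).card - s) with hBaddef
  have hsub : Bad ⊆ (GG ×ˢ Finset.range n).biUnion (fun Gc => BadGC Gc.1 Gc.2) := by
    intro ψ hψ
    obtain ⟨G, hGuni, c, hc, hlt⟩ := (Finset.mem_filter.mp hψ).2
    apply Finset.mem_biUnion.mpr
    refine ⟨(G, c), Finset.mem_product.mpr ⟨?_, hc⟩, Finset.mem_filter.mpr ⟨Finset.mem_univ _, hlt⟩⟩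
    rw [hGG, Finset.mem_powerset]
    intro e heG
    rw [Finset.mem_powersetCard_univ]
    exact hGuni e heG
  have hGGcard : ((GG.card : ℕ) : ℝ) ≤ (2:ℝ) ^ (n ^ (k-2)) := by
    rw [hGG, Finset.card_powerset, Finset.card_powersetCard, Finset.card_univ, Fintype.card_fin]
    have h1 : (2:ℕ) ^ (Nat.choose n (k-2)) ≤ 2 ^ (n ^ (k-2)) :=
      Nat.pow_le_pow_right (by norm_num) (Nat.choose_le_pow _ _)
    calc ((2 ^ (Nat.choose n (k-2)) : ℕ) : ℝ) ≤ ((2 ^ (n ^ (k-2)) : ℕ) : ℝ) := by exact_mod_cast h1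
      _ = (2:ℝ) ^ (n ^ (k-2)) := by push_cast; rfl
  have hcount : (Bad.card : ℝ) < (r:ℝ)^(2^n) := by
    have h1 : Bad.card ≤ ∑ Gc ∈ GG ×ˢ Finset.range n, (BadGC Gc.1 Gc.2).card :=
      le_trans (Finset.card_le_card hsub) Finset.card_biUnion_le
    have h2 : ((Bad.card : ℕ) : ℝ)
        ≤ ((GG.card * n : ℕ) : ℝ) * ((r:ℝ)^(2^n) * Real.exp (-(5/16 * mu' ^ 2) * (n:ℝ)^(k-1))) := by
      calc ((Bad.card : ℕ) : ℝ)
          ≤ ((∑ Gc ∈ GG ×ˢ Finset.range n, (BadGC Gc.1 Gc.2).card : ℕ) : ℝ) := by exact_mod_cast h1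
        _ = ∑ Gc ∈ GG ×ˢ Finset.range n, ((BadGC Gc.1 Gc.2).card : ℝ) := by push_cast; rfl
        _ ≤ ∑ _Gc ∈ GG ×ˢ Finset.range n,
              ((r:ℝ)^(2^n) * Real.exp (-(5/16 * mu' ^ 2) * (n:ℝ)^(k-1))) :=
            Finset.sum_le_sum fun Gc _ => htail Gc.1 Gc.2
        _ = ((GG.card * n : ℕ) : ℝ) * ((r:ℝ)^(2^n) * Real.exp (-(5/16 * mu' ^ 2) * (n:ℝ)^(k-1))) := by
            rw [Finset.sum_const, Finset.card_product, Finset.card_range, nsmul_eq_mul]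
            try push_cast
            try ring
    have h3 : ((GG.card * n : ℕ) : ℝ) * ((r:ℝ)^(2^n) * Real.exp (-(5/16 * mu' ^ 2) * (n:ℝ)^(k-1)))
        ≤ ((2:ℝ) ^ (n ^ (k-2)) * n * Real.exp (-(5/16 * mu' ^ 2) * (n:ℝ)^(k-1))) * (r:ℝ)^(2^n) := by
      push_cast
      have hexp0 : (0:ℝ) < Real.exp (-(5/16 * mu' ^ 2) * (n:ℝ)^(k-1)) := Real.exp_pos _
      have hn0 : (0:ℝ) ≤ (n:ℝ) := by positivity
      have hrM : (0:ℝ) ≤ (r:ℝ)^(2^n) := by positivity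
      calc ((GG.card : ℝ) * (n:ℝ)) * ((r:ℝ)^(2^n) * Real.exp (-(5/16 * mu' ^ 2) * (n:ℝ)^(k-1)))
          ≤ ((2:ℝ) ^ (n ^ (k-2)) * (n:ℝ)) * ((r:ℝ)^(2^n) * Real.exp (-(5/16 * mu' ^ 2) * (n:ℝ)^(k-1))) := by
            apply mul_le_mul_of_nonneg_right _ (by positivity)
            exact mul_le_mul_of_nonneg_right hGGcard hn0
        _ = ((2:ℝ) ^ (n ^ (k-2)) * n * Real.exp (-(5/16 * mu' ^ 2) * (n:ℝ)^(k-1))) * (r:ℝ)^(2^n) := by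
            ring
    have h4 : ((2:ℝ) ^ (n ^ (k-2)) * n * Real.exp (-(5/16 * mu' ^ 2) * (n:ℝ)^(k-1))) * (r:ℝ)^(2^n)
        < 1 * (r:ℝ)^(2^n) := by
      apply mul_lt_mul_of_pos_right hbig (by positivity)
    calc (Bad.card : ℝ) ≤ _ := h2
      _ ≤ _ := h3
      _ < 1 * (r:ℝ)^(2^n) := h4
      _ = (r:ℝ)^(2^n) := one_mul _
  have hex : ∃ ψ : Finset (Fin n) → Fin r, ψ ∉ Bad := by
    by_contra h
    push_neg at h
    have huniv : Bad = Finset.univ := Finset.eq_univ_iff_forall.mpr h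
    rw [huniv] at hcount
    have hcard : ((Finset.univ : Finset (Finset (Fin n) → Fin r)).card : ℝ) = (r:ℝ)^(2^n) := by
      rw [Finset.card_univ, Fintype.card_fun, Fintype.card_finset, Fintype.card_fin,
        Fintype.card_fin]
      push_cast
      rfl
    rw [hcard] at hcount
    exact lt_irrefl _ hcount
  obtain ⟨ψ, hψ⟩ := hex
  refine ⟨ψ, fun G hGuni c hc => ?_⟩
  by_contra hlt
  push_neg at hlt
  exact hψ (Finset.mem_filter.mpr ⟨Finset.mem_univ _, ⟨G, hGuni, c, hc, hlt⟩⟩)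

lemma exists_n {k : ℕ} (hk : 3 ≤ k) {mu' : ℝ} (hm0 : 0 < mu') (n₀ : ℕ) :
    ∃ n : ℕ, n₀ ≤ n ∧ k ≤ n ∧
      (2:ℝ) ^ (n ^ (k-2)) * n * Real.exp (-(5/16 * mu' ^ 2) * (n:ℝ) ^ (k-1)) < 1 := by
  set β : ℝ := 5/16 * mu' ^ 2 with hβ
  have hβ0 : 0 < β := by positivity
  set N := max (max n₀ k) (Nat.ceil (3 / β)) with hN
  have hn₀N : n₀ ≤ N := le_trans (le_max_left _ _) (le_max_left _ _)
  have hkN : k ≤ N := le_trans (le_max_right _ _) (le_max_left _ _)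
  have hN1 : 1 ≤ N := by omega
  have hNr1 : (1:ℝ) ≤ (N:ℝ) := by exact_mod_cast hN1
  have hceil : (3 / β : ℝ) ≤ (N:ℝ) := by
    refine le_trans (Nat.le_ceil _) ?_
    exact_mod_cast le_max_right (max n₀ k) (Nat.ceil (3 / β))
  have hβN : 3 ≤ β * (N:ℝ) := by
    rw [div_le_iff₀ hβ0] at hceil
    linarith [hceil]
  refine ⟨N, hn₀N, hkN, ?_⟩
  have hX1 : (1:ℝ) ≤ (N:ℝ) ^ (k-2) := by
    calc (1:ℝ) = 1 ^ (k-2) := (one_pow _).symm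
      _ ≤ (N:ℝ) ^ (k-2) := pow_le_pow_left₀ (by norm_num) hNr1 _
  have hX0 : (0:ℝ) ≤ (N:ℝ) ^ (k-2) := by positivity
  have hNpow : (N:ℝ) ≤ (N:ℝ) ^ (k-2) := by
    calc (N:ℝ) = (N:ℝ) ^ 1 := (pow_one _).symm
      _ ≤ (N:ℝ) ^ (k-2) := pow_le_pow_right₀ hNr1 (by omega)
  have h2 : (2:ℝ) ^ (N ^ (k-2)) ≤ Real.exp ((N:ℝ) ^ (k-2)) := by
    calc (2:ℝ) ^ (N ^ (k-2)) ≤ (Real.exp 1) ^ (N ^ (k-2)) := by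
          apply pow_le_pow_left₀ (by norm_num)
          linarith [Real.add_one_le_exp 1]
      _ = Real.exp (((N ^ (k-2) : ℕ) : ℝ) * 1) := (Real.exp_nat_mul 1 _).symm
      _ = Real.exp ((N:ℝ) ^ (k-2)) := by rw [mul_one]; congr 1; push_cast; rfl
  have h3 : (N:ℝ) ≤ Real.exp ((N:ℝ) ^ (k-2)) := by
    have ha := Real.add_one_le_exp (N:ℝ)
    have hb : Real.exp (N:ℝ) ≤ Real.exp ((N:ℝ) ^ (k-2)) := Real.exp_le_exp.mpr hNpow
    linarith
  have hprod : (2:ℝ) ^ (N ^ (k-2)) * N * Real.exp (-β * (N:ℝ) ^ (k-1))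
      ≤ Real.exp ((N:ℝ) ^ (k-2) + (N:ℝ) ^ (k-2) + -β * (N:ℝ) ^ (k-1)) := by
    rw [Real.exp_add, Real.exp_add]
    have e1 : (0:ℝ) ≤ Real.exp (-β * (N:ℝ) ^ (k-1)) := (Real.exp_pos _).le
    have e2 : (0:ℝ) ≤ (N:ℝ) := by linarith
    have e3 : (0:ℝ) ≤ (2:ℝ) ^ (N ^ (k-2)) := by positivity
    apply mul_le_mul_of_nonneg_right _ e1
    apply mul_le_mul h2 h3 e2 (Real.exp_pos _).le
  refine lt_of_le_of_lt hprod ?_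
  have hpowsplit : (N:ℝ) ^ (k-1) = (N:ℝ) ^ (k-2) * (N:ℝ) := by
    rw [← pow_succ]
    congr 1
    omega
  have hneg : (N:ℝ) ^ (k-2) + (N:ℝ) ^ (k-2) + -β * (N:ℝ) ^ (k-1) < 0 := by
    rw [hpowsplit]
    nlinarith [mul_le_mul_of_nonneg_left hβN hX0]
  calc Real.exp ((N:ℝ) ^ (k-2) + (N:ℝ) ^ (k-2) + -β * (N:ℝ) ^ (k-1))
      < Real.exp 0 := Real.exp_lt_exp.mpr hneg
    _ = 1 := Real.exp_zero


/-- Theorem 1.7. Let `k ≥ 3`, `r ∈ ℕ` and `Pat ⊆ [r]^k`.  If for every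
`n` and every coloring `ψ` of the `(k−1)`-subsets of `[n]` by `[r]` the `k`-graph
`colorGraph k n r Pat ψ` is `F`-free, then `π_{k−2}(F) ≥ |Pat| / r^k`. -/
theorem stmt3 (k r f : ℕ) (hk : 3 ≤ k) (hr : 0 < r)
    (F : Finset (Finset (Fin f))) (hF : HGIsUniform k F)
    (Pat : Finset (Fin k → Fin r))
    (hfree : ∀ (n : ℕ) (ψ : Finset (Fin n) → Fin r), HGFree F (colorGraph k n r Pat ψ)) :
    (Pat.card : ℝ) / (r : ℝ) ^ k ≤ uniformTuranDensity k (k - 2) f F := by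
  classical
  have hp0 : (0:ℝ) ≤ (Pat.card : ℝ) / (r : ℝ) ^ k := by positivity
  have hp1 : (Pat.card : ℝ) / (r : ℝ) ^ k ≤ 1 := by
    rw [div_le_one (by positivity)]
    calc (Pat.card : ℝ) ≤ (Fintype.card (Fin k → Fin r) : ℝ) := by
          exact_mod_cast Finset.card_le_univ Pat
      _ = (r : ℝ) ^ k := by
          rw [Fintype.card_fun, Fintype.card_fin, Fintype.card_fin]; push_cast; rfl
  apply le_csSup
  · refine ⟨1, ?_⟩
    rintro d ⟨⟨_, hd1⟩, -⟩
    exact hd1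
  · refine ⟨⟨hp0, hp1⟩, ?_⟩
    intro μ hμ n₀
    set mu' : ℝ := min μ 1 with hmu'
    have hm0 : 0 < mu' := lt_min hμ one_pos
    have hm1 : mu' ≤ 1 := min_le_right _ _
    have hmμ : mu' ≤ μ := min_le_left _ _
    obtain ⟨n, hn₀, hkn, hbig⟩ := exists_n hk hm0 n₀
    obtain ⟨ψ, hψ⟩ := exists_good hk hr Pat hm0 hm1 hkn hbig
    refine ⟨n, hn₀, colorGraph k n r Pat ψ, ?_, hfree n ψ, ?_⟩
    · intro e he
      exact Finset.mem_powersetCard_univ.mp (Finset.mem_filter.mp he).1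
    · intro G hG
      have hn0 : 0 < n := by omega
      have hK : (cliqueSet k (k-2) n G).card
          = ∑ c ∈ Finset.range n,
              ((cliqueSet k (k-2) n G).filter (fun e => SC e = c)).card :=
        Finset.card_eq_sum_card_fiberwise (fun e _ => Finset.mem_range.mpr (Nat.mod_lt _ hn0))
      have hKE : ((cliqueSet k (k-2) n G) ∩ colorGraph k n r Pat ψ).card
          = ∑ c ∈ Finset.range n,
              (((cliqueSet k (k-2) n G).filter (fun e => SC e = c))
                ∩ colorGraph k n r Pat ψ).card := by
        rw [Finset.card_eq_sum_card_fiberwise (f := SC) (t := Finset.range n)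
          (fun e _ => Finset.mem_range.mpr (Nat.mod_lt _ hn0))]
        refine Finset.sum_congr rfl fun c _ => ?_
        congr 1
        ext e
        simp only [Finset.mem_filter, Finset.mem_inter]
        tauto
      have hKr : ((cliqueSet k (k-2) n G).card : ℝ)
          = ∑ c ∈ Finset.range n,
              (((cliqueSet k (k-2) n G).filter (fun e => SC e = c)).card : ℝ) := by
        rw [hK]; push_cast; rfl
      have hKEr : (((cliqueSet k (k-2) n G) ∩ colorGraph k n r Pat ψ).card : ℝ)
          = ∑ c ∈ Finset.range n,
              ((((cliqueSet k (k-2) n G).filter (fun e => SC e = c))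
                ∩ colorGraph k n r Pat ψ).card : ℝ) := by
        rw [hKE]; push_cast; rfl
      have hpow : (n:ℝ) * (n:ℝ) ^ (k-1) = (n:ℝ) ^ k := by
        rw [← pow_succ']
        congr 1
        omega
      have hsum := Finset.sum_le_sum (fun c hc => hψ G hG c hc)
      calc ((Pat.card : ℝ) / (r : ℝ) ^ k) * ((cliqueSet k (k-2) n G).card : ℝ)
            - μ * (n:ℝ) ^ k
          ≤ ((Pat.card : ℝ) / (r : ℝ) ^ k) * ((cliqueSet k (k-2) n G).card : ℝ)
            - mu' * (n:ℝ) ^ k := by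
            have hnk : (0:ℝ) ≤ (n:ℝ) ^ k := by positivity
            nlinarith
        _ = ∑ c ∈ Finset.range n,
              (((Pat.card : ℝ) / (r : ℝ) ^ k) *
                  ((((cliqueSet k (k-2) n G).filter (fun e => SC e = c)).card : ℝ))
                - mu' * (n:ℝ) ^ (k-1)) := by
            rw [Finset.sum_sub_distrib, ← Finset.mul_sum, ← hKr, Finset.sum_const,
              Finset.card_range, nsmul_eq_mul, ← hpow]
            ring
        _ ≤ ∑ c ∈ Finset.range n,
              ((((cliqueSet k (k-2) n G).filter (fun e => SC e = c))
                ∩ colorGraph k n r Pat ψ).card : ℝ) := hsum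
        _ = _ := hKEr.symm


end
end

section
/- For k ≥ 3, a k-uniform hypergraph F has a vanishing ordering of its vertices if and only if there exists a k-edge-colored simple (k−1)-uniform directed hypergraph D on V(F) (with colors in ℤ_k) such that each k-edge of F corresponds to a directed tight (k−1)-uniform cycle of length k whose k directed edges are colored 0, 1, …, k−1 in cyclic order, and there exist two consecutive colors β, β+1 ∈ ℤ_k such that the transitive digraph T(D_{β,β+1}) of the sub-digraph D_{β,β+1} consisting of directed edges colored β or β+1 contains no directed cycles. -/
open scoped Classical BigOperators

noncomputable section

/-- The rank (number of elements of `e` smaller under `ord`) of `x` in the finset `e`. -/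
def rankIn {V : Type*} [DecidableEq V] (ord : V → ℕ) (e : Finset V) (x : V) : ℕ :=
  (e.filter (fun y => ord y < ord x)).card

/-- `F` is vanishing w.r.t. the vertex ordering induced by `ord`: the shadow `∂F` can be
partitioned into `k` classes `𝒞_1, …, 𝒞_k` (encoded by `C : Finset V → ℕ` with values
`< k`, class `ℓ` corresponding to value `ℓ − 1`) such that for every edge `e` and every
`x ∈ e`, the `(k−1)`-set `e ∖ {x}` lies in the class indexed by the rank of `x` in `e`. -/
def IsVanishing {V : Type*} [DecidableEq V] (k : ℕ) (F : Finset (Finset V))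
    (ord : V → ℕ) : Prop :=
  ∃ C : Finset V → ℕ, (∀ S, C S < k) ∧ ∀ e ∈ F, ∀ x ∈ e, C (e.erase x) = rankIn ord e x

/-- `F` has a vanishing ordering of its vertex set. -/
def HasVanishingOrdering {V : Type*} [DecidableEq V] (k : ℕ)
    (F : Finset (Finset V)) : Prop :=
  ∃ ord : V → ℕ, Function.Injective ord ∧ IsVanishing k F ord

/-- Arc relation of the transitive digraph `T(D_{β,β+1})` of the sub-digraph of the
colored `(k−1)`-uniform directed hypergraph `D` consisting of directed edges colored `β`
or `β+1`: there is an arc `x → y` whenever some directed edge colored `β` or `β+1` has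
`x` at an earlier position than `y`. -/
def TArc {V : Type*} (k : ℕ) (D : (Fin (k - 1) → V) → Option (ZMod k)) (β : ZMod k)
    (x y : V) : Prop :=
  ∃ t : Fin (k - 1) → V, (D t = some β ∨ D t = some (β + 1)) ∧
    ∃ a b : Fin (k - 1), a < b ∧ t a = x ∧ t b = y

section Helpers
variable {V : Type*} [DecidableEq V] {ord : V → ℕ} {e : Finset V} {x y : V}

theorem rankIn_lt_card (hx : x ∈ e) : rankIn ord e x < e.card :=
  Finset.card_lt_card (Finset.filter_ssubset.2 ⟨x, hx, by simp⟩)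

theorem rankIn_lt_rankIn (hx : x ∈ e) (h : ord x < ord y) :
    rankIn ord e x < rankIn ord e y := by
  apply Finset.card_lt_card
  rw [Finset.ssubset_def]
  refine ⟨fun z hz => ?_, fun hsub => ?_⟩
  · simp only [Finset.mem_filter] at hz ⊢
    exact ⟨hz.1, hz.2.trans h⟩
  · have hx' : x ∈ e.filter (fun y_1 => ord y_1 < ord y) := Finset.mem_filter.2 ⟨hx, h⟩
    have := hsub hx'
    simp at this

theorem rankIn_lt_iff (hord : Function.Injective ord) (hx : x ∈ e) (hy : y ∈ e) :
    rankIn ord e x < rankIn ord e y ↔ ord x < ord y := by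
  constructor
  · intro h
    rcases lt_trichotomy (ord x) (ord y) with h' | h' | h'
    · exact h'
    · have := hord h'; subst this; omega
    · exact absurd (rankIn_lt_rankIn hy h') (by omega)
  · exact rankIn_lt_rankIn hx

theorem rankIn_injOn (hord : Function.Injective ord) (hx : x ∈ e) (hy : y ∈ e)
    (h : rankIn ord e x = rankIn ord e y) : x = y := by
  rcases lt_trichotomy (ord x) (ord y) with h' | h' | h'
  · exact absurd (rankIn_lt_rankIn hx h') (by omega)
  · exact hord h'
  · exact absurd (rankIn_lt_rankIn hy h') (by omega)

theorem exists_rankIn (hord : Function.Injective ord) {m : ℕ} (hm : m < e.card) :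
    ∃ x ∈ e, rankIn ord e x = m := by
  have himg : e.image (rankIn ord e) = Finset.range e.card := by
    apply Finset.eq_of_subset_of_card_le
    · intro n hn
      simp only [Finset.mem_image] at hn
      obtain ⟨x, hx, rfl⟩ := hn
      exact Finset.mem_range.2 (rankIn_lt_card hx)
    · rw [Finset.card_range, Finset.card_image_of_injOn]
      intro a ha b hb hab
      exact rankIn_injOn hord ha hb hab
  have : m ∈ e.image (rankIn ord e) := himg ▸ Finset.mem_range.2 hm
  simpa only [Finset.mem_image] using this

theorem rankIn_erase (hord : Function.Injective ord) (hx : x ∈ e) (hxy : x ≠ y) :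
    rankIn ord (e.erase x) y = if ord x < ord y then rankIn ord e y - 1 else rankIn ord e y := by
  unfold rankIn
  rw [Finset.filter_erase]
  by_cases h : ord x < ord y
  · rw [if_pos h, Finset.card_erase_of_mem (Finset.mem_filter.2 ⟨hx, h⟩)]
  · rw [if_neg h, Finset.erase_eq_of_notMem (by simp [h])]

end Helpers

section Fwd
variable {k f : ℕ} [NeZero k]

theorem zmod_cast_val {a : ZMod k} : ((a.val : ℕ) : ZMod k) = a := by
  rw [ZMod.natCast_val, ZMod.cast_id]

theorem zmod_val_inj {a b : ZMod k} (h : a.val = b.val) : a = b :=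
  ZMod.val_injective k h

theorem castj_val (hk : 3 ≤ k) (j : Fin (k-1)) : (((j : ℕ) : ZMod k)).val = (j : ℕ) :=
  ZMod.val_cast_of_lt (lt_of_lt_of_le j.isLt (by omega))

theorem posmap_inj (hk : 3 ≤ k) (c : ZMod k) :
    Function.Injective (fun j : Fin (k-1) => c + ((j : ℕ) : ZMod k)) := by
  intro j j' h
  simp only [add_right_inj] at h
  have := congrArg ZMod.val h
  rw [castj_val hk, castj_val hk] at this
  exact Fin.ext this

theorem posmap_ne (hk : 3 ≤ k) (c : ZMod k) (j : Fin (k-1)) :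
    c + ((j : ℕ) : ZMod k) ≠ c - 1 := by
  intro h
  have h2 : (((j : ℕ) + 1 : ℕ) : ZMod k) = 0 := by
    push_cast
    linear_combination h
  rw [ZMod.natCast_eq_zero_iff] at h2
  have := Nat.le_of_dvd (by omega) h2
  have := j.isLt
  omega

end Fwd

section Fwd2
variable {k f : ℕ} [NeZero k]

theorem key_fwd (hk : 3 ≤ k) {ord : Fin f → ℕ} (hord : Function.Injective ord)
    {e : Finset (Fin f)} (hcard : e.card = k) {c : ZMod k} {t : Fin (k-1) → Fin f}
    (hyp : ∀ j, t j ∈ e ∧ rankIn ord e (t j) = (c + ((j : ℕ) : ZMod k)).val) :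
    Function.Injective t ∧
      ∃ x ∈ e, rankIn ord e x = (c - 1).val ∧ Finset.image t Finset.univ = e.erase x := by
  have htinj : Function.Injective t := by
    intro j j' h
    apply posmap_inj hk c
    apply zmod_val_inj
    rw [← (hyp j).2, ← (hyp j').2, h]
  refine ⟨htinj, ?_⟩
  obtain ⟨x, hx, hxr⟩ := exists_rankIn hord (m := (c - 1).val) (by rw [hcard]; exact ZMod.val_lt _)
  refine ⟨x, hx, hxr, ?_⟩
  apply Finset.eq_of_subset_of_card_le
  · intro y hy
    simp only [Finset.mem_image, Finset.mem_univ, true_and] at hy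
    obtain ⟨j, rfl⟩ := hy
    refine Finset.mem_erase.2 ⟨?_, (hyp j).1⟩
    intro hxeq
    apply posmap_ne hk c j
    apply zmod_val_inj
    rw [← (hyp j).2, hxeq, hxr]
  · rw [Finset.card_erase_of_mem hx, Finset.card_image_of_injective _ htinj,
      Finset.card_univ, Fintype.card_fin, hcard]

end Fwd2

section Fwd3
variable {k f : ℕ} [NeZero k]

theorem fwd (hk : 3 ≤ k) (F : Finset (Finset (Fin f))) (hF : ∀ e ∈ F, e.card = k)
    (h : HasVanishingOrdering k F) :
    ∃ D : (Fin (k - 1) → Fin f) → Option (ZMod k),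
        (∀ t, D t ≠ none → Function.Injective t) ∧
        (∀ t t', D t ≠ none → D t' ≠ none → Set.range t = Set.range t' → t = t') ∧
        (∀ e ∈ F, ∃ w : ZMod k → Fin f, Function.Injective w ∧
          Finset.univ.image w = e ∧
          ∀ i : ZMod k, D (fun j : Fin (k - 1) => w (i + ((j : ℕ) : ZMod k))) = some i) ∧
        (∃ β : ZMod k, ∀ x : Fin f, ¬ Relation.TransGen (TArc k D β) x x) := by
  obtain ⟨ord, hord, C, hC, hCF⟩ := h
  set cond : (Fin (k-1) → Fin f) → Prop := fun t =>
    ∃ e ∈ F, ∃ c : ZMod k, ∀ j : Fin (k-1),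
      t j ∈ e ∧ rankIn ord e (t j) = (c + ((j : ℕ) : ZMod k)).val with hcond
  set D : (Fin (k - 1) → Fin f) → Option (ZMod k) := fun t =>
    if cond t then some ((C (Finset.image t Finset.univ) : ZMod k) + 1) else none with hD
  -- the color assigned to a tuple coming from (e, c) is c
  have hcolor : ∀ {e : Finset (Fin f)}, e ∈ F → ∀ {c : ZMod k} {t : Fin (k-1) → Fin f},
      (∀ j, t j ∈ e ∧ rankIn ord e (t j) = (c + ((j : ℕ) : ZMod k)).val) →
      D t = some c := by
    intro e he c t hyp
    obtain ⟨-, x, hx, hxr, himg⟩ := key_fwd hk hord (hF e he) hyp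
    have : D t = some ((C (Finset.image t Finset.univ) : ZMod k) + 1) :=
      if_pos ⟨e, he, c, hyp⟩
    rw [this, himg, hCF e he x hx, hxr, zmod_cast_val]
    ring_nf
  have hDnone : ∀ t, D t ≠ none → cond t := by
    intro t ht
    by_contra hc
    exact ht (if_neg hc)
  refine ⟨D, ?_, ?_, ?_, ?_⟩
  · -- injectivity
    intro t ht
    obtain ⟨e, he, c, hyp⟩ := hDnone t ht
    exact (key_fwd hk hord (hF e he) hyp).1
  · -- simplicity
    intro t t' ht ht' hrange
    obtain ⟨e, he, c, hyp⟩ := hDnone t ht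
    obtain ⟨e', he', c', hyp'⟩ := hDnone t' ht'
    obtain ⟨-, x, hx, hxr, himg⟩ := key_fwd hk hord (hF e he) hyp
    obtain ⟨-, x', hx', hxr', himg'⟩ := key_fwd hk hord (hF e' he') hyp'
    have himgeq : Finset.image t Finset.univ = Finset.image t' Finset.univ := by
      apply Finset.coe_injective
      rw [Finset.coe_image, Finset.coe_image, Finset.coe_univ, Set.image_univ,
        Set.image_univ, hrange]
    have hSeq : e.erase x = e'.erase x' := by rw [← himg, ← himg', himgeq]
    have hceq : c = c' := by
      have h1 : C (e.erase x) = (c - 1).val := by rw [hCF e he x hx, hxr]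
      have h2 : C (e'.erase x') = (c' - 1).val := by rw [hCF e' he' x' hx', hxr']
      rw [hSeq, h2] at h1
      have := zmod_val_inj h1.symm
      linear_combination this
    subst hceq
    funext j
    -- t j and t' j lie in S := e.erase x and have the same rank there
    have hmem : ∀ {u : Finset (Fin f)} {z : Fin f} {tt : Fin (k-1) → Fin f} {y : Fin f},
        (∀ j, tt j ∈ u ∧ rankIn ord u (tt j) = (c + ((j : ℕ) : ZMod k)).val) →
        y ∈ u → rankIn ord u y = (c - 1).val → z ∈ u →
        tt j ∈ u.erase y ∧ rankIn ord (u.erase y) (tt j) =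
          (if (c - 1).val < (c + ((j : ℕ) : ZMod k)).val
            then (c + ((j : ℕ) : ZMod k)).val - 1 else (c + ((j : ℕ) : ZMod k)).val) := by
      intro u z tt y hyp2 hy hyr hz
      have htj : tt j ∈ u := (hyp2 j).1
      have hne : y ≠ tt j := by
        intro hxeq
        apply posmap_ne hk c j
        apply zmod_val_inj
        rw [← (hyp2 j).2, ← hxeq, hyr]
      refine ⟨Finset.mem_erase.2 ⟨fun h => hne h.symm, htj⟩, ?_⟩
      rw [rankIn_erase hord hy hne, (hyp2 j).2]
      by_cases hlt : ord y < ord (tt j)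
      · rw [if_pos hlt, if_pos]
        rw [← (hyp2 j).2, ← hyr]
        exact rankIn_lt_rankIn hy hlt
      · rw [if_neg hlt, if_neg]
        rw [← (hyp2 j).2, ← hyr, rankIn_lt_iff hord hy htj]
        exact hlt
    obtain ⟨hm1, hr1⟩ := hmem (z := x) hyp hx hxr hx
    obtain ⟨hm2, hr2⟩ := hmem (z := x') hyp' hx' hxr' hx'
    rw [← hSeq] at hm2 hr2
    exact rankIn_injOn hord hm1 hm2 (hr1.trans hr2.symm)
  · -- cycles
    intro e he
    have hcard := hF e he
    have hex : ∀ i : ZMod k, ∃ x ∈ e, rankIn ord e x = i.val := fun i =>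
      exists_rankIn hord (by rw [hcard]; exact ZMod.val_lt i)
    choose w hw1 hw2 using hex
    have hwinj : Function.Injective w := by
      intro i i' hww
      apply zmod_val_inj
      rw [← hw2 i, ← hw2 i', hww]
    refine ⟨w, hwinj, ?_, ?_⟩
    · apply Finset.eq_of_subset_of_card_le
      · intro y hy
        simp only [Finset.mem_image, Finset.mem_univ, true_and] at hy
        obtain ⟨i, rfl⟩ := hy
        exact hw1 i
      · rw [Finset.card_image_of_injective _ hwinj, Finset.card_univ, ZMod.card, hcard]
    · intro i
      apply hcolor he
      intro j
      exact ⟨hw1 _, hw2 _⟩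
  · -- acyclicity
    refine ⟨0, ?_⟩
    have harc : ∀ x y, TArc k D 0 x y → ord x < ord y := by
      intro x y ⟨t, hDt, a, b, hab, hta, htb⟩
      have htne : D t ≠ none := by
        rcases hDt with h | h <;> simp [h]
      obtain ⟨e, he, c, hyp⟩ := hDnone t htne
      have hc : D t = some c := hcolor he hyp
      have hc01 : c = 0 ∨ c = 1 := by
        rcases hDt with h | h
        · left; rw [hc] at h; exact (Option.some_inj.1 h).symm ▸ rfl
        · right; rw [hc] at h; exact (Option.some_inj.1 h).symm ▸ (by norm_num)
      have hval : (c + ((a : ℕ) : ZMod k)).val < (c + ((b : ℕ) : ZMod k)).val := by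
        have ha := a.isLt; have hb := b.isLt
        rcases hc01 with rfl | rfl
        · rw [zero_add, zero_add, castj_val hk, castj_val hk]
          exact hab
        · have e1 : (1 : ZMod k) + ((a : ℕ) : ZMod k) = (((1 + (a:ℕ)) : ℕ) : ZMod k) := by
            push_cast; ring
          have e2 : (1 : ZMod k) + ((b : ℕ) : ZMod k) = (((1 + (b:ℕ)) : ℕ) : ZMod k) := by
            push_cast; ring
          rw [e1, e2, ZMod.val_cast_of_lt (by omega), ZMod.val_cast_of_lt (by omega)]
          omega
      subst hta htb
      rw [← rankIn_lt_iff hord (hyp a).1 (hyp b).1, (hyp a).2, (hyp b).2]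
      exact hval
    have hmono : ∀ x y, Relation.TransGen (TArc k D 0) x y → ord x < ord y := by
      intro x y hxy
      induction hxy with
      | single h => exact harc _ _ h
      | tail _ h ih => exact ih.trans (harc _ _ h)
    intro x hx
    exact absurd (hmono x x hx) (lt_irrefl _)
end Fwd3
theorem exists_ord {V : Type*} [Fintype V] [DecidableEq V] (r : V → V → Prop)
    (htrans : Transitive r) (hirr : ∀ x, ¬ r x x) :
    ∃ ord : V → ℕ, Function.Injective ord ∧ ∀ x y, r x y → ord x < ord y := by
  set p : V → V → Prop := fun x y => x = y ∨ r x y with hp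
  haveI : IsRefl V p := ⟨fun x => Or.inl rfl⟩
  haveI : IsTrans V p := ⟨by
    rintro a b c (rfl | hab) (rfl | hbc)
    · exact Or.inl rfl
    · exact Or.inr hbc
    · exact Or.inr hab
    · exact Or.inr (htrans hab hbc)⟩
  haveI : IsAntisymm V p := ⟨by
    rintro a b (rfl | hab) (h | hba)
    · rfl
    · rfl
    · exact h.symm
    · exact absurd (htrans hab hba) (hirr a)⟩
  haveI : IsPreorder V p := ⟨⟩
  haveI hpart : IsPartialOrder V p := ⟨⟩
  obtain ⟨s, hs, hps⟩ := extend_partialOrder p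
  haveI := hs
  set ord : V → ℕ := fun x => (Finset.univ.filter (fun y => s y x ∧ y ≠ x)).card with hord
  have hmono : ∀ x y, x ≠ y → s x y → ord x < ord y := by
    intro x y hxy hsxy
    apply Finset.card_lt_card
    rw [Finset.ssubset_def]
    constructor
    · intro z hz
      simp only [Finset.mem_filter, Finset.mem_univ, true_and] at hz ⊢
      refine ⟨IsTrans.trans _ _ _ hz.1 hsxy, ?_⟩
      rintro rfl
      exact hxy (Std.Antisymm.antisymm _ _ hsxy hz.1)
    · intro hsub
      have hx : x ∈ Finset.univ.filter (fun z => s z y ∧ z ≠ y) :=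
        Finset.mem_filter.2 ⟨Finset.mem_univ _, hsxy, hxy⟩
      have := hsub hx
      simp only [Finset.mem_filter, Finset.mem_univ, true_and] at this
      exact this.2 rfl
  have hinj : Function.Injective ord := by
    intro x y h
    by_contra hxy
    rcases Std.Total.total (r := s) x y with hs' | hs'
    · exact absurd h (Nat.ne_of_lt (hmono x y hxy hs'))
    · exact absurd h.symm (Nat.ne_of_lt (hmono y x (Ne.symm hxy) hs'))
  refine ⟨ord, hinj, fun x y hr => ?_⟩
  have hxy : x ≠ y := by rintro rfl; exact hirr x hr
  exact hmono x y hxy (hps x y (Or.inr hr))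

section Bwd
variable {k f : ℕ} [NeZero k]

theorem bwd (hk : 3 ≤ k) (F : Finset (Finset (Fin f)))
    (D : (Fin (k - 1) → Fin f) → Option (ZMod k))
    (hsimp : ∀ t t', D t ≠ none → D t' ≠ none → Set.range t = Set.range t' → t = t')
    (hcyc : ∀ e ∈ F, ∃ w : ZMod k → Fin f, Function.Injective w ∧
          Finset.univ.image w = e ∧
          ∀ i : ZMod k, D (fun j : Fin (k - 1) => w (i + ((j : ℕ) : ZMod k))) = some i)
    (β : ZMod k) (hacyc : ∀ x : Fin f, ¬ Relation.TransGen (TArc k D β) x x) :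
    HasVanishingOrdering k F := by
  obtain ⟨ord, hord, hmono⟩ := exists_ord (Relation.TransGen (TArc k D β))
    (fun a b c h1 h2 => h1.trans h2) hacyc
  have harc : ∀ x y, TArc k D β x y → ord x < ord y :=
    fun x y h => hmono _ _ (Relation.TransGen.single h)
  refine ⟨ord, hord, ?_⟩
  set C : Finset (Fin f) → ℕ := fun S =>
    if h : ∃ c : ZMod k, ∃ t, D t = some c ∧ Finset.image t Finset.univ = S
    then (h.choose - 1 - β).val else 0 with hC
  refine ⟨C, fun S => ?_, ?_⟩
  · dsimp only [C]
    split
    · exact ZMod.val_lt _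
    · omega
  intro e he x hx
  obtain ⟨w, hwinj, hwim, hDw⟩ := hcyc e he
  -- consecutive steps are arcs
  have hstep : ∀ j : ℕ, j + 1 < k →
      TArc k D β (w (β + (j : ZMod k))) (w (β + ((j + 1 : ℕ) : ZMod k))) := by
    intro j hj
    by_cases hcase : j + 1 < k - 1
    · refine ⟨fun j' => w (β + ((j' : ℕ) : ZMod k)), Or.inl (hDw β),
        ⟨j, by omega⟩, ⟨j + 1, by omega⟩, Fin.mk_lt_mk.2 (by omega), rfl, rfl⟩
    · have hj2 : j = k - 2 := by omega
      subst hj2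
      refine ⟨fun j' => w (β + 1 + ((j' : ℕ) : ZMod k)), Or.inr (hDw (β + 1)),
        ⟨k - 3, by omega⟩, ⟨k - 2, by omega⟩, Fin.mk_lt_mk.2 (by omega), ?_, ?_⟩
      · show w (β + 1 + ((k - 3 : ℕ) : ZMod k)) = w (β + ((k - 2 : ℕ) : ZMod k))
        congr 1
        have h1 : ((k - 2 : ℕ) : ZMod k) = ((1 : ℕ) : ZMod k) + ((k - 3 : ℕ) : ZMod k) := by
          rw [← Nat.cast_add]
          congr 1
          omega
        rw [h1, Nat.cast_one]
        ring
      · show w (β + 1 + ((k - 2 : ℕ) : ZMod k)) = w (β + ((k - 2 + 1 : ℕ) : ZMod k))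
        congr 1
        have h1 : ((k - 2 + 1 : ℕ) : ZMod k) = ((1 : ℕ) : ZMod k) + ((k - 2 : ℕ) : ZMod k) := by
          rw [← Nat.cast_add]
          congr 1
          omega
        rw [h1, Nat.cast_one]
        ring
  -- ord increases along the cycle starting at β
  have hmono2 : ∀ j2 : ℕ, j2 < k → ∀ j1 : ℕ, j1 < j2 →
      ord (w (β + (j1 : ZMod k))) < ord (w (β + (j2 : ZMod k))) := by
    intro j2
    induction j2 with
    | zero => omega
    | succ n ih =>
      intro h2 j1 h1
      have hstepn : ord (w (β + (n : ZMod k))) < ord (w (β + ((n + 1 : ℕ) : ZMod k))) :=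
        harc _ _ (hstep n (by omega))
      rcases Nat.lt_succ_iff_lt_or_eq.1 h1 with h | rfl
      · exact (ih (by omega) j1 h).trans hstepn
      · exact hstepn
  -- the rank formula
  have hrank : ∀ i : ZMod k, rankIn ord e (w i) = (i - β).val := by
    intro i
    have hrw : ∀ a : ZMod k, w a = w (β + (((a - β).val : ℕ) : ZMod k)) := by
      intro a
      congr 1
      rw [zmod_cast_val]
      ring
    have hkey : ∀ i' : ZMod k, ord (w i') < ord (w i) ↔ (i' - β).val < (i - β).val := by
      intro i'
      constructor
      · intro hlt
        by_contra hge
        push_neg at hge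
        rcases eq_or_lt_of_le hge with heq | hlt2
        · have : i = i' := by
            have := zmod_val_inj heq
            linear_combination this
          subst this
          omega
        · have := hmono2 _ (ZMod.val_lt (i' - β)) _ hlt2
          rw [← hrw, ← hrw] at this
          omega
      · intro hlt
        have := hmono2 _ (ZMod.val_lt (i - β)) _ hlt
        rw [← hrw, ← hrw] at this
        exact this
    unfold rankIn
    have h1 : e.filter (fun y => ord y < ord (w i)) =
        Finset.image w (Finset.univ.filter (fun i' => ord (w i') < ord (w i))) := by
      ext y
      simp only [Finset.mem_filter, Finset.mem_image, Finset.mem_univ, true_and, ← hwim]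
      constructor
      · rintro ⟨⟨i', rfl⟩, hlt⟩
        exact ⟨i', hlt, rfl⟩
      · rintro ⟨i', hlt, rfl⟩
        exact ⟨⟨i', rfl⟩, hlt⟩
    rw [h1, Finset.card_image_of_injective _ hwinj]
    have h2 : Finset.univ.filter (fun i' => ord (w i') < ord (w i)) =
        Finset.image (fun m : ℕ => β + (m : ZMod k)) (Finset.range (i - β).val) := by
      ext i'
      simp only [Finset.mem_filter, Finset.mem_univ, true_and, Finset.mem_image,
        Finset.mem_range, hkey i']
      constructor
      · intro h
        exact ⟨(i' - β).val, h, by rw [zmod_cast_val]; ring⟩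
      · rintro ⟨m, hm, rfl⟩
        have hv := ZMod.val_lt (i - β)
        have h3 : β + (m : ZMod k) - β = ((m : ℕ) : ZMod k) := by ring
        rw [h3, ZMod.val_cast_of_lt (by omega)]
        exact hm
    rw [h2, Finset.card_image_of_injOn, Finset.card_range]
    intro m hm m' hm' hmm
    simp only [Finset.coe_range, Set.mem_Iio] at hm hm'
    have hv := ZMod.val_lt (i - β)
    have h3 : ((m : ℕ) : ZMod k) = ((m' : ℕ) : ZMod k) := by
      have := add_left_cancel hmm
      exact this
    have h4 := congrArg ZMod.val h3
    rw [ZMod.val_cast_of_lt (by omega), ZMod.val_cast_of_lt (by omega)] at h4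
    exact h4
  -- identify x with a cycle vertex
  have hxw : x ∈ Finset.univ.image w := hwim.symm ▸ hx
  obtain ⟨i, -, rfl⟩ := Finset.mem_image.1 hxw
  -- the witness tuple for the erased set
  set t : Fin (k - 1) → Fin f := fun j => w (i + 1 + ((j : ℕ) : ZMod k)) with htdef
  have hDt : D t = some (i + 1) := hDw (i + 1)
  have hidx : Finset.image (fun j : Fin (k - 1) => i + 1 + ((j : ℕ) : ZMod k)) Finset.univ =
      Finset.univ.erase i := by
    apply Finset.eq_of_subset_of_card_le
    · intro c hc
      simp only [Finset.mem_image, Finset.mem_univ, true_and] at hc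
      obtain ⟨j, rfl⟩ := hc
      refine Finset.mem_erase.2 ⟨?_, Finset.mem_univ _⟩
      intro hceq
      have h2 : (((j : ℕ) + 1 : ℕ) : ZMod k) = 0 := by
        push_cast
        linear_combination hceq
      rw [ZMod.natCast_eq_zero_iff] at h2
      have := Nat.le_of_dvd (by omega) h2
      have := j.isLt
      omega
    · rw [Finset.card_erase_of_mem (Finset.mem_univ _), Finset.card_univ, ZMod.card,
        Finset.card_image_of_injective _ (posmap_inj hk (i + 1)), Finset.card_univ,
        Fintype.card_fin]
  have himg : Finset.image t Finset.univ = e.erase (w i) := by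
    rw [← hwim, ← Finset.image_erase hwinj, ← hidx, Finset.image_image]
    rfl
  have hex : ∃ c : ZMod k, ∃ t', D t' = some c ∧
      Finset.image t' Finset.univ = e.erase (w i) := ⟨i + 1, t, hDt, himg⟩
  rw [hrank i]
  dsimp only [C]
  rw [dif_pos hex]
  obtain ⟨t', hDt', himg'⟩ := hex.choose_spec
  have hrange : Set.range t' = Set.range t := by
    rw [← Set.image_univ, ← Set.image_univ, ← Finset.coe_univ, ← Finset.coe_image,
      ← Finset.coe_image, himg', himg]
  have htt : t' = t := hsimp t' t (by simp [hDt']) (by simp [hDt]) hrange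
  rw [htt, hDt] at hDt'
  have hch : hex.choose = i + 1 := (Option.some_inj.1 hDt').symm
  rw [hch]
  congr 1
  ring
end Bwd

/-- Lemma 6.1. For `k ≥ 3`, a `k`-graph `F` has a vanishing ordering
of its vertices if and only if there is a `k`-edge-colored simple `(k−1)`-uniform
directed hypergraph `D` on `V(F)` (encoded as `D : (Fin (k−1) → V) → Option (ZMod k)`,
whose present directed edges are injective tuples, with at most one ordering of each
`(k−1)`-set present) such that every `k`-edge of `F` corresponds to a directed tight
`(k−1)`-uniform cycle of length `k` whose `k` directed edges are colored `0,1,…,k−1` in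
cyclic order, and for some two consecutive colors `β, β+1 ∈ ℤ_k` the transitive digraph
`T(D_{β,β+1})` contains no directed cycles. -/
theorem stmt6 (k f : ℕ) [NeZero k] (hk : 3 ≤ k)
    (F : Finset (Finset (Fin f))) (hF : ∀ e ∈ F, e.card = k) :
    HasVanishingOrdering k F ↔
      ∃ D : (Fin (k - 1) → Fin f) → Option (ZMod k),
        (∀ t, D t ≠ none → Function.Injective t) ∧
        (∀ t t', D t ≠ none → D t' ≠ none → Set.range t = Set.range t' → t = t') ∧
        (∀ e ∈ F, ∃ w : ZMod k → Fin f, Function.Injective w ∧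
          Finset.univ.image w = e ∧
          ∀ i : ZMod k, D (fun j : Fin (k - 1) => w (i + ((j : ℕ) : ZMod k))) = some i) ∧
        (∃ β : ZMod k, ∀ x : Fin f, ¬ Relation.TransGen (TArc k D β) x x) := by
  constructor
  · intro h
    exact fwd hk F hF h
  · rintro ⟨D, hinj, hsimp, hcyc, β, hacyc⟩
    exact bwd hk F D hsimp hcyc β hacyc

end
end

section
/- Let k ≥ 3 and t ≥ k−2, and let F_t^{(k)} be the k-graph on vertices a_1,…,a_{k−1}, b_0,…,b_t, c_0,…,c_t, d_0,…,d_t consisting of the three tight k-uniform paths (a_1,…,a_{k−1},b_0,…,b_t,c_t), (a_1,…,a_{k−1},c_0,…,c_t,d_t), and (a_1,…,a_{k−1},d_0,…,d_t,b_t). Then F_t^{(k)} has no vanishing ordering of its vertices. -/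
open scoped Classical BigOperators

noncomputable section

/-- The vertex set of `F_t^{(k)}`: the vertices `a_1, …, a_{k−1}` (left summand) and the
vertices `x_r` for `x ∈ {b, c, d}` (encoded `0, 1, 2 : Fin 3`) and `0 ≤ r ≤ t`. -/
abbrev Vtx (k t : ℕ) := Fin (k - 1) ⊕ (Fin 3 × Fin (t + 1))

/-- The `i`-th vertex (0-based) of the tight path
`(a_1, …, a_{k−1}, x_0, x_1, …, x_t, (x+1)_t)` of `F_t^{(k)}`, for `x ∈ {b, c, d}`. -/
def pathSeq (k t : ℕ) (x : Fin 3) (i : ℕ) : Vtx k t :=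
  if h : i < k - 1 then Sum.inl ⟨i, h⟩
  else if h2 : i < k - 1 + (t + 1) then Sum.inr (x, ⟨i - (k - 1), by omega⟩)
  else Sum.inr (x + 1, Fin.last t)

/-- The `k`-graph `F_t^{(k)}`: the union of the edges of the three tight `k`-uniform
paths `(a_1,…,a_{k−1},b_0,…,b_t,c_t)`, `(a_1,…,a_{k−1},c_0,…,c_t,d_t)` and
`(a_1,…,a_{k−1},d_0,…,d_t,b_t)`, each of length `t+k+1`; the edge starting at position
`i` (for `0 ≤ i ≤ t+1`) consists of the `k` consecutive vertices at positions
`i, …, i+k−1`. -/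
def Fkt (k t : ℕ) : Finset (Finset (Vtx k t)) :=
  Finset.univ.image (fun p : Fin 3 × Fin (t + 2) =>
    (Finset.range k).image (fun j => pathSeq k t p.1 ((p.2 : ℕ) + j)))

lemma sameGap {V : Type*} [DecidableEq V] (ord : V → ℕ) (S : Finset V) (a b : ℕ)
    (h : (S.filter fun y => ord y < a).card = (S.filter fun y => ord y < b).card)
    {z : V} (hz : z ∈ S) : ord z < a ↔ ord z < b := by
  have key : S.filter (fun y => ord y < a) = S.filter (fun y => ord y < b) := by
    rcases le_total a b with hab | hab
    · refine Finset.eq_of_subset_of_card_le (fun y hy => ?_) h.ge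
      simp only [Finset.mem_filter] at hy ⊢
      exact ⟨hy.1, by omega⟩
    · refine (Finset.eq_of_subset_of_card_le (fun y hy => ?_) h.le).symm
      simp only [Finset.mem_filter] at hy ⊢
      exact ⟨hy.1, by omega⟩
  constructor
  · intro h1
    have : z ∈ S.filter (fun y => ord y < b) := key ▸ (Finset.mem_filter.mpr ⟨hz, h1⟩)
    exact (Finset.mem_filter.mp this).2
  · intro h1
    have : z ∈ S.filter (fun y => ord y < a) := key.symm ▸ (Finset.mem_filter.mpr ⟨hz, h1⟩)
    exact (Finset.mem_filter.mp this).2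

lemma pathSeq_low {k t : ℕ} (x : Fin 3) {i : ℕ} (h : i < k - 1) :
    pathSeq k t x i = Sum.inl ⟨i, h⟩ := by
  unfold pathSeq; rw [dif_pos h]

lemma pathSeq_mid {k t : ℕ} (x : Fin 3) {i : ℕ} (h1 : k - 1 ≤ i) (h2 : i < k - 1 + (t + 1)) :
    pathSeq k t x i = Sum.inr (x, ⟨i - (k - 1), by omega⟩) := by
  unfold pathSeq; rw [dif_neg (by omega), dif_pos h2]

lemma pathSeq_top {k t : ℕ} (hk : 1 ≤ k) (x : Fin 3) {i : ℕ} (h : k + t ≤ i) :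
    pathSeq k t x i = Sum.inr (x + 1, Fin.last t) := by
  unfold pathSeq; rw [dif_neg (by omega), dif_neg (by omega)]

lemma pathSeq_inj {k t : ℕ} (hk : 3 ≤ k) {x : Fin 3} {i j : ℕ}
    (hi : i ≤ k + t) (hj : j ≤ k + t) (h : pathSeq k t x i = pathSeq k t x j) : i = j := by
  have hx : x + 1 ≠ x := by fin_cases x <;> decide
  have hk1 : 1 ≤ k := by omega
  rcases Nat.lt_or_ge i (k-1) with h1 | h1 <;> rcases Nat.lt_or_ge j (k-1) with h2 | h2
  · rw [pathSeq_low x h1, pathSeq_low x h2] at h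
    simp only [Sum.inl.injEq, Fin.mk.injEq] at h
    exact h
  · rcases Nat.lt_or_ge j (k-1+(t+1)) with h3 | h3
    · rw [pathSeq_low x h1, pathSeq_mid x h2 h3] at h
      simp at h
    · rw [pathSeq_low x h1, pathSeq_top hk1 x (by omega)] at h
      simp at h
  · rcases Nat.lt_or_ge i (k-1+(t+1)) with h3 | h3
    · rw [pathSeq_mid x h1 h3, pathSeq_low x h2] at h
      simp at h
    · rw [pathSeq_top hk1 x (by omega), pathSeq_low x h2] at h
      simp at h
  · rcases Nat.lt_or_ge i (k-1+(t+1)) with h3 | h3 <;> rcases Nat.lt_or_ge j (k-1+(t+1)) with h4 | h4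
    · rw [pathSeq_mid x h1 h3, pathSeq_mid x h2 h4] at h
      simp only [Sum.inr.injEq, Prod.mk.injEq, Fin.mk.injEq] at h
      omega
    · rw [pathSeq_mid x h1 h3, pathSeq_top hk1 x (by omega)] at h
      simp only [Sum.inr.injEq, Prod.mk.injEq] at h
      exact absurd h.1.symm hx
    · rw [pathSeq_top hk1 x (by omega), pathSeq_mid x h2 h4] at h
      simp only [Sum.inr.injEq, Prod.mk.injEq] at h
      exact absurd h.1 hx
    · omega

/-- part of Theorem 1.11. For `k ≥ 3` and `t ≥ k − 2`, the `k`-graph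
`F_t^{(k)}` has no vanishing ordering of its vertices. -/
theorem stmt7 (k t : ℕ) (hk : 3 ≤ k) (ht : k - 2 ≤ t) :
    ¬ HasVanishingOrdering k (Fkt k t) := by
  rintro ⟨ord, hinj, C, hCk, hcol⟩
  have ht1 : 1 ≤ t := by omega
  -- membership of edges
  have edge_mem : ∀ (x : Fin 3) (p : ℕ), p ≤ t + 1 →
      (Finset.range k).image (fun j => pathSeq k t x (p + j)) ∈ Fkt k t := by
    intro x p hp
    exact Finset.mem_image.mpr ⟨(x, ⟨p, by omega⟩), Finset.mem_univ _, rfl⟩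
  -- bottom decomposition of an edge
  have edge_lo : ∀ (x : Fin 3) (p : ℕ),
      (Finset.range k).image (fun j => pathSeq k t x (p + j)) =
        insert (pathSeq k t x p)
          ((Finset.range (k-1)).image (fun j => pathSeq k t x (p+1+j))) := by
    intro x p
    ext a
    simp only [Finset.mem_image, Finset.mem_range, Finset.mem_insert]
    constructor
    · rintro ⟨j, hj, rfl⟩
      rcases Nat.eq_zero_or_pos j with rfl | hj0
      · left; rw [Nat.add_zero]
      · right; exact ⟨j - 1, by omega, by rw [show p + 1 + (j-1) = p + j by omega]⟩
    · rintro (rfl | ⟨j, hj, rfl⟩)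
      · exact ⟨0, by omega, by rw [Nat.add_zero]⟩
      · exact ⟨j + 1, by omega, by rw [show p + (j+1) = p+1+j by omega]⟩
  -- top decomposition of an edge
  have edge_hi : ∀ (x : Fin 3) (p : ℕ),
      (Finset.range k).image (fun j => pathSeq k t x (p + j)) =
        insert (pathSeq k t x (p + (k-1)))
          ((Finset.range (k-1)).image (fun j => pathSeq k t x (p+j))) := by
    intro x p
    ext a
    simp only [Finset.mem_image, Finset.mem_range, Finset.mem_insert]
    constructor
    · rintro ⟨j, hj, rfl⟩
      by_cases hj' : j = k - 1
      · left; rw [hj']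
      · right; exact ⟨j, by omega, rfl⟩
    · rintro (rfl | ⟨j, hj, rfl⟩)
      · exact ⟨k-1, by omega, rfl⟩
      · exact ⟨j, by omega, rfl⟩
  -- rank within an insert
  have rank_insert : ∀ (S : Finset (Vtx k t)) (u : Vtx k t),
      rankIn ord (insert u S) u = (S.filter fun y => ord y < ord u).card := by
    intro S u
    unfold rankIn
    rw [Finset.filter_insert, if_neg (lt_irrefl _)]
  -- non-membership helper
  have notin : ∀ (x : Fin 3) (p q : ℕ), p + k ≤ k + t → q ≤ k + t →
      (q < p + 1 ∨ p + k ≤ q) →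
      pathSeq k t x q ∉ (Finset.range (k-1)).image (fun j => pathSeq k t x (p+1+j)) := by
    intro x p q hpk hq hout hmem
    obtain ⟨j, hj, hje⟩ := Finset.mem_image.mp hmem
    rw [Finset.mem_range] at hj
    have := pathSeq_inj hk (by omega) hq hje
    omega
  -- distinct ords
  have NE : ∀ (x : Fin 3) (i j : ℕ), i ≤ k + t → j ≤ k + t → i ≠ j →
      ord (pathSeq k t x i) ≠ ord (pathSeq k t x j) := by
    intro x i j hi hj hij h
    exact hij (pathSeq_inj hk hi hj (hinj h))
  -- the key same-gap relation along a path
  have REL : ∀ (x : Fin 3) (p q : ℕ), p ≤ t → p < q → q < p + k →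
      (ord (pathSeq k t x q) < ord (pathSeq k t x p) ↔
       ord (pathSeq k t x q) < ord (pathSeq k t x (p + k))) := by
    intro x p q hp hpq hqk
    set S := (Finset.range (k-1)).image (fun j => pathSeq k t x (p+1+j)) with hS
    have hnp : pathSeq k t x p ∉ S := notin x p p (by omega) (by omega) (Or.inl (by omega))
    have hnk : pathSeq k t x (p+k) ∉ S := notin x p (p+k) (by omega) (by omega) (Or.inr le_rfl)
    have memp : pathSeq k t x p ∈ (Finset.range k).image (fun j => pathSeq k t x (p + j)) := by
      rw [edge_lo x p]; exact Finset.mem_insert_self _ _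
    have h1 := hcol _ (edge_mem x p (by omega)) (pathSeq k t x p) memp
    rw [edge_lo x p, Finset.erase_insert hnp, rank_insert] at h1
    have e2 : (Finset.range k).image (fun j => pathSeq k t x (p+1+j)) =
        insert (pathSeq k t x (p+k)) S := by
      rw [edge_hi x (p+1), show p + 1 + (k-1) = p + k by omega]
    have memk : pathSeq k t x (p+k) ∈ (Finset.range k).image (fun j => pathSeq k t x (p+1+j)) := by
      rw [e2]; exact Finset.mem_insert_self _ _
    have h2 := hcol _ (edge_mem x (p+1) (by omega)) (pathSeq k t x (p+k)) memk
    rw [e2, Finset.erase_insert hnk, rank_insert] at h2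
    have hq' : pathSeq k t x q ∈ S :=
      Finset.mem_image.mpr ⟨q - (p+1), by rw [Finset.mem_range]; omega,
        by rw [show p+1+(q-(p+1)) = q by omega]⟩
    exact sameGap ord S _ _ (h1.symm.trans h2) hq'
  -- the shared initial shadow {a_1, ..., a_{k-1}}
  have A0 : ∀ x y : Fin 3,
      (Finset.range (k-1)).image (fun j => pathSeq k t x (0+j)) =
      (Finset.range (k-1)).image (fun j => pathSeq k t y (0+j)) := by
    intro x y
    apply Finset.image_congr
    intro j hj
    simp only [Finset.coe_range, Set.mem_Iio] at hj
    show pathSeq k t x (0+j) = pathSeq k t y (0+j)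
    rw [pathSeq_low x (show 0+j < k-1 by omega), pathSeq_low y (show 0+j < k-1 by omega)]
  have GAP0 : ∀ (x y : Fin 3) (j : ℕ), j < k - 1 →
      (ord (pathSeq k t x j) < ord (pathSeq k t x (k-1)) ↔
       ord (pathSeq k t x j) < ord (pathSeq k t y (k-1))) := by
    intro x y j hj
    have key : ∀ z : Fin 3, C ((Finset.range (k-1)).image (fun j => pathSeq k t z (0+j))) =
        (((Finset.range (k-1)).image (fun j => pathSeq k t z (0+j))).filter
          (fun y => ord y < ord (pathSeq k t z (k-1)))).card := by
      intro z
      have hdec : (Finset.range k).image (fun j => pathSeq k t z (0 + j)) =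
          insert (pathSeq k t z (k-1))
            ((Finset.range (k-1)).image (fun j => pathSeq k t z (0+j))) := by
        rw [edge_hi z 0, show 0 + (k-1) = k-1 by omega]
      have hn : pathSeq k t z (k-1) ∉
          (Finset.range (k-1)).image (fun j => pathSeq k t z (0+j)) := by
        intro hmem
        obtain ⟨j', hj', hje⟩ := Finset.mem_image.mp hmem
        rw [Finset.mem_range] at hj'
        have := pathSeq_inj hk (by omega) (by omega) hje
        omega
      have memz : pathSeq k t z (k-1) ∈ (Finset.range k).image (fun j => pathSeq k t z (0 + j)) := by
        rw [hdec]; exact Finset.mem_insert_self _ _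
      have h1 := hcol _ (edge_mem z 0 (by omega)) (pathSeq k t z (k-1)) memz
      rw [hdec, Finset.erase_insert hn, rank_insert] at h1
      exact h1
    have hx := key x
    have hy := key y
    rw [← A0 x y] at hy
    have hz : pathSeq k t x j ∈ (Finset.range (k-1)).image (fun j => pathSeq k t x (0+j)) :=
      Finset.mem_image.mpr ⟨j, by rw [Finset.mem_range]; omega, by rw [Nat.zero_add]⟩
    exact sameGap ord _ _ _ (hx.symm.trans hy) hz
  -- main chain down each path
  have CHAIN : ∀ m : ℕ, m ≤ t → 1 ≤ m → ∀ x y : Fin 3,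
      (ord (pathSeq k t x m) < ord (pathSeq k t x (m-1)) ↔
       ord (pathSeq k t y m) < ord (pathSeq k t y (m-1))) := by
    intro m
    induction m using Nat.strong_induction_on with
    | _ m IH =>
      intro hmt hm1 x y
      by_cases hA : m ≤ k - 2
      · have e1 : pathSeq k t y m = pathSeq k t x m := by
          rw [pathSeq_low y (show m < k-1 by omega), pathSeq_low x (show m < k-1 by omega)]
        have e2 : pathSeq k t y (m-1) = pathSeq k t x (m-1) := by
          rw [pathSeq_low y (show m-1 < k-1 by omega), pathSeq_low x (show m-1 < k-1 by omega)]
        rw [e1, e2]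
      · by_cases hB : m = k - 1
        · subst hB
          rw [show k-1-1 = k-2 by omega]
          have g := GAP0 x y (k-2) (by omega)
          have exy : pathSeq k t x (k-2) = pathSeq k t y (k-2) := by
            rw [pathSeq_low x (show k-2 < k-1 by omega), pathSeq_low y (show k-2 < k-1 by omega)]
          have heq : ord (pathSeq k t x (k-2)) = ord (pathSeq k t y (k-2)) := by rw [exy]
          have hne1 := NE x (k-1) (k-2) (by omega) (by omega) (by omega)
          have hne2 := NE y (k-1) (k-2) (by omega) (by omega) (by omega)
          omega
        · by_cases hC : m = k
          · rw [hC, show k-1 = k-1 from rfl]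
            have r1 := REL x 0 (k-1) (by omega) (by omega) (by omega)
            rw [Nat.zero_add] at r1
            have r2 := REL y 0 (k-1) (by omega) (by omega) (by omega)
            rw [Nat.zero_add] at r2
            have g := GAP0 x y 0 (by omega)
            have exy : pathSeq k t x 0 = pathSeq k t y 0 := by
              rw [pathSeq_low x (show 0 < k-1 by omega), pathSeq_low y (show 0 < k-1 by omega)]
            have heq : ord (pathSeq k t x 0) = ord (pathSeq k t y 0) := by rw [exy]
            have hne1 := NE x k (k-1) (by omega) (by omega) (by omega)
            have hne2 := NE y k (k-1) (by omega) (by omega) (by omega)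
            have hne3 := NE x 0 (k-1) (by omega) (by omega) (by omega)
            have hne4 := NE y 0 (k-1) (by omega) (by omega) (by omega)
            omega
          · have hm : k + 1 ≤ m := by omega
            have r1 := REL x (m-k-1) (m-k) (by omega) (by omega) (by omega)
            rw [show m-k-1+k = m-1 by omega] at r1
            have r2 := REL x (m-k) (m-1) (by omega) (by omega) (by omega)
            rw [show m-k+k = m by omega] at r2
            have r3 := REL y (m-k-1) (m-k) (by omega) (by omega) (by omega)
            rw [show m-k-1+k = m-1 by omega] at r3
            have r4 := REL y (m-k) (m-1) (by omega) (by omega) (by omega)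
            rw [show m-k+k = m by omega] at r4
            have ih := IH (m-k) (by omega) (by omega) (by omega) x y
            have hne1 := NE x m (m-1) (by omega) (by omega) (by omega)
            have hne2 := NE x (m-1) (m-k) (by omega) (by omega) (by omega)
            have hne3 := NE x (m-k) (m-k-1) (by omega) (by omega) (by omega)
            have hne4 := NE y m (m-1) (by omega) (by omega) (by omega)
            have hne5 := NE y (m-1) (m-k) (by omega) (by omega) (by omega)
            have hne6 := NE y (m-k) (m-k-1) (by omega) (by omega) (by omega)
            omega
  -- transfer to the last pair of each path
  have hT : ∀ x y : Fin 3,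
      (ord (pathSeq k t x (k+t)) < ord (pathSeq k t x (k+t-1)) ↔
       ord (pathSeq k t y (k+t)) < ord (pathSeq k t y (k+t-1))) := by
    intro x y
    have r1 := REL x t (t+k-1) le_rfl (by omega) (by omega)
    rw [show t+k-1 = k+t-1 by omega, show t+k = k+t by omega] at r1
    have r2 := REL x (t-1) t (by omega) (by omega) (by omega)
    rw [show t-1+k = k+t-1 by omega] at r2
    have r3 := REL y t (t+k-1) le_rfl (by omega) (by omega)
    rw [show t+k-1 = k+t-1 by omega, show t+k = k+t by omega] at r3
    have r4 := REL y (t-1) t (by omega) (by omega) (by omega)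
    rw [show t-1+k = k+t-1 by omega] at r4
    have c := CHAIN t le_rfl (by omega) x y
    have hne1 := NE x (k+t) (k+t-1) (by omega) (by omega) (by omega)
    have hne2 := NE x (k+t-1) t (by omega) (by omega) (by omega)
    have hne3 := NE y (k+t) (k+t-1) (by omega) (by omega) (by omega)
    have hne4 := NE y (k+t-1) t (by omega) (by omega) (by omega)
    omega
  -- identify the endpoints
  have ptop : ∀ x : Fin 3, pathSeq k t x (k+t) = Sum.inr (x+1, Fin.last t) :=
    fun x => pathSeq_top (by omega) x le_rfl
  have pmid : ∀ x : Fin 3, pathSeq k t x (k+t-1) = Sum.inr (x, Fin.last t) := by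
    intro x
    rw [pathSeq_mid x (by omega) (by omega)]
    simp only [Sum.inr.injEq, Prod.mk.injEq, true_and]
    exact Fin.ext (by show k + t - 1 - (k-1) = (Fin.last t).val; rw [Fin.val_last]; omega)
  have dist : ∀ u v : Fin 3, u ≠ v →
      ord (Sum.inr (u, Fin.last t) : Vtx k t) ≠ ord (Sum.inr (v, Fin.last t)) := by
    intro u v huv h
    have h2 := hinj h
    simp only [Sum.inr.injEq, Prod.mk.injEq] at h2
    exact huv h2.1
  have h01 := hT 0 1
  have h12 := hT 1 2
  rw [ptop 0, pmid 0, ptop 1, pmid 1] at h01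
  rw [ptop 1, pmid 1, ptop 2, pmid 2] at h12
  rw [show (0:Fin 3)+1 = 1 by decide] at h01
  rw [show (1:Fin 3)+1 = 2 by decide] at h01 h12
  rw [show (2:Fin 3)+1 = 0 by decide] at h12
  have d01 := dist 0 1 (by decide)
  have d12 := dist 1 2 (by decide)
  have d02 := dist 0 2 (by decide)
  omega

end
end

section
/- Let ε ∈ (0, 1/2), k ≥ 3, ρ₀ = ε·k^{1−k}, and let t_1, …, t_k ∈ [0,1] with ∑_{ℓ=1}^k t_ℓ < 1 + ρ₀·binom(k,2). Suppose A is a k-partite k-graph with parts P_1, …, P_k such that for each ℓ ∈ [k], the set of vertices v ∈ P_ℓ contained in at least ρ₀·binom(k,2)·∏_{j≠ℓ}|P_j| edges has size less than (t_ℓ + ρ₀·binom(k,2))·|P_ℓ|. Then |E(A)| < (k^{−k} + ε)·∏_{ℓ=1}^k |P_ℓ|. -/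
open scoped Classical BigOperators

noncomputable section

private lemma stmt8_amgm (k : ℕ) (hk : k ≠ 0) (d : Fin k → ℝ) (hd : ∀ i, 0 ≤ d i) :
    ∏ i, d i ≤ ((∑ i, d i) / k) ^ k := by
  have hk' : (0:ℝ) < k := by positivity
  have h := Real.geom_mean_le_arith_mean_weighted Finset.univ (fun _ => (k:ℝ)⁻¹) d
    (fun i _ => by positivity)
    (by simp [Finset.card_univ]; field_simp)
    (fun i _ => hd i)
  have hG : ∀ i : Fin k, 0 ≤ d i ^ ((k:ℝ)⁻¹) := fun i => Real.rpow_nonneg (hd i) _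
  have hprod : (∏ i, d i ^ ((k:ℝ)⁻¹ : ℝ)) ^ k = ∏ i, d i := by
    rw [← Finset.prod_pow]
    refine Finset.prod_congr rfl fun i _ => ?_
    rw [← Real.rpow_natCast (d i ^ ((k:ℝ)⁻¹)) k, ← Real.rpow_mul (hd i)]
    simp [inv_mul_cancel₀ (ne_of_gt hk')]
  calc ∏ i, d i = (∏ i, d i ^ ((k:ℝ)⁻¹ : ℝ)) ^ k := hprod.symm
    _ ≤ ((∑ i, d i) / k) ^ k := by
        apply pow_le_pow_left₀ (Finset.prod_nonneg fun i _ => hG i)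
        calc (∏ i, d i ^ ((k:ℝ)⁻¹ : ℝ)) ≤ ∑ i, (k:ℝ)⁻¹ * d i := h
          _ = (∑ i, d i) / k := by rw [← Finset.mul_sum]; ring

private lemma stmt8_n1 (k : ℕ) (hk : 3 ≤ k) (ε : ℝ) (hε : 0 < ε) :
    (k : ℝ) * (ε * (k.choose 2) / (k:ℝ) ^ (k-1)) ≤ ε := by
  obtain ⟨m, rfl⟩ : ∃ m, k = m + 3 := ⟨k - 3, by omega⟩
  set k := m + 3 with hkdef
  have hK : (3:ℝ) ≤ (k:ℝ) := by exact_mod_cast (by omega : 3 ≤ k)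
  have hKpos : (0:ℝ) < (k:ℝ) := by linarith
  have hch : ((k.choose 2 : ℕ) : ℝ) = (k:ℝ) * ((k:ℝ) - 1) / 2 := by
    rw [Nat.cast_choose_two]
  have he : k - 1 = m + 2 := by omega
  rw [he, hch]
  have hpow : (k:ℝ)^(m+2) = (k:ℝ)^m * (k:ℝ)^2 := by ring
  have h1 : (1:ℝ) ≤ (k:ℝ)^m := one_le_pow₀ (by linarith)
  -- need k * (ε * (k(k-1)/2) / k^(m+2)) ≤ ε  ⟺ k²(k-1)/2 ≤ k^(m+2) = k^m k²
  -- ⟺ (k-1)/2 ≤ k^m.  k=3 (m=0): 1 ≤ 1. m ≥ 1: (k-1)/2 < k ≤ k^m.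
  have key : ((k:ℝ) - 1) / 2 ≤ (k:ℝ)^m := by
    rcases Nat.eq_zero_or_pos m with hm | hm
    · subst hm; simp [hkdef]; norm_num
    · have : (k:ℝ) ≤ (k:ℝ)^m := le_self_pow₀ (by linarith) (by omega)
      linarith
  rw [mul_div_assoc', div_le_iff₀ (by positivity)]
  calc (k:ℝ) * (ε * ((k:ℝ) * ((k:ℝ)-1)/2)) = ε * (((k:ℝ)-1)/2 * (k:ℝ)^2) := by ring
    _ ≤ ε * ((k:ℝ)^m * (k:ℝ)^2) := by
        apply mul_le_mul_of_nonneg_left _ hε.le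
        apply mul_le_mul_of_nonneg_right key (by positivity)
    _ = ε * (k:ℝ)^(m+2) := by rw [hpow]

set_option maxHeartbeats 1000000 in
private lemma stmt8_n2 (k : ℕ) (hk : 3 ≤ k) (ε : ℝ) (hε : 0 < ε) (hε2 : ε < 1/2)
    (c : ℝ) (hc : c = ε * (k.choose 2) / (k:ℝ) ^ (k-1)) :
    (1 + ((k:ℝ)+1)*c)^k / (k:ℝ)^k + c * ((k:ℝ) - (1 + ((k:ℝ)+1)*c))
      < ((k:ℝ)^k)⁻¹ + ε := by
  rcases eq_or_lt_of_le hk with h3 | h4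
  · -- k = 3
    subst c
    rw [← h3]
    norm_num [Nat.choose]
    nlinarith [sq_nonneg ε, pow_pos hε 3, sq_nonneg (1-2*ε), mul_pos hε hε]
  · rcases eq_or_lt_of_le (show 4 ≤ k by omega) with h4' | h5
    · -- k = 4
      subst c
      rw [← h4']
      norm_num [Nat.choose]
      nlinarith [sq_nonneg ε, pow_pos hε 3, pow_pos hε 4, sq_nonneg (1-2*ε), mul_pos hε hε]
    · -- k ≥ 5
      obtain ⟨m, rfl⟩ : ∃ m, k = m + 5 := ⟨k - 5, by omega⟩
      set k := m + 5 with hkdef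
      set K : ℝ := (k:ℝ) with hKdef
      have hK : (5:ℝ) ≤ K := by
        rw [hKdef]; exact_mod_cast (by omega : 5 ≤ k)
      have hKpos : (0:ℝ) < K := by linarith
      have hch : ((k.choose 2 : ℕ) : ℝ) = K * (K - 1) / 2 := by
        rw [Nat.cast_choose_two]
      have he : k - 1 = m + 4 := by omega
      have hp4 : K^4 ≤ K^(m+4) := by
        calc K^4 = 1 * K^4 := by ring
          _ ≤ K^m * K^4 := by
              apply mul_le_mul_of_nonneg_right (one_le_pow₀ (by linarith)) (by positivity)
          _ = K^(m+4) := by ring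
      have hcpos : 0 < c := by
        rw [hc, he]
        have : (0:ℝ) < (k.choose 2 : ℝ) := by rw [hch]; nlinarith
        positivity
      -- c ≤ ε / (2 K²)
      have hcle : c ≤ ε / (2 * K^2) := by
        rw [hc, he, div_le_div_iff₀ (by positivity) (by positivity)]
        calc ε * (k.choose 2:ℝ) * (2*K^2) = ε * ((K-1) * K^3) := by rw [hch]; ring
          _ ≤ ε * (K * K^3) := by gcongr <;> linarith
          _ = ε * K^4 := by ring
          _ ≤ ε * K^(m+4) := by gcongr
      set x : ℝ := (K+1)*c with hx
      have hx0 : 0 ≤ x := by positivity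
      have hKx : K * x ≤ 3/5 * ε := by
        have h1 : K * x = (K*(K+1)) * c := by rw [hx]; ring
        have h2 : (K*(K+1)) * c ≤ (K*(K+1)) * (ε/(2*K^2)) := by
          apply mul_le_mul_of_nonneg_left hcle (by nlinarith)
        have h3 : (K*(K+1)) * (ε/(2*K^2)) ≤ 3/5 * ε := by
          rw [mul_div_assoc', div_le_iff₀ (by positivity)]
          have h6 : K + 1 ≤ 6/5 * K := by linarith
          calc K * (K+1) * ε ≤ K * (6/5*K) * ε := by gcongr
            _ = 3/5 * ε * (2*K^2) := by ring
        linarith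
      have hKx' : K * x ≤ 3/10 := by linarith
      set S : ℝ := 1 + x with hS
      have hS1 : (1:ℝ) ≤ S := by linarith
      have hSpos : (0:ℝ) < S := by linarith
      -- S^k - 1 ≤ K x S^k
      have hgeom : S^k - 1 ≤ (K*x) * S^k := by
        have hgs : (∑ i ∈ Finset.range k, S ^ i) * (S - 1) = S ^ k - 1 := geom_sum_mul S k
        have hsum : (∑ i ∈ Finset.range k, S ^ i) ≤ (k:ℝ) * S^k := by
          calc (∑ i ∈ Finset.range k, S ^ i) ≤ ∑ i ∈ Finset.range k, S ^ k := by
                apply Finset.sum_le_sum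
                intro i hi
                exact pow_le_pow_right₀ hS1 (le_of_lt (Finset.mem_range.mp hi))
            _ = (k:ℝ) * S^k := by rw [Finset.sum_const, Finset.card_range, nsmul_eq_mul]
        have hS1' : S - 1 = x := by rw [hS]; ring
        calc S^k - 1 = (∑ i ∈ Finset.range k, S ^ i) * x := by rw [← hgs, hS1']
          _ ≤ ((k:ℝ) * S^k) * x := mul_le_mul_of_nonneg_right hsum hx0
          _ = (K*x) * S^k := by rw [hKdef]; ring
      have hSk0 : (0:ℝ) < S^k := by positivity
      have haux : (K*x) * S^k ≤ (3/10) * S^k :=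
        mul_le_mul_of_nonneg_right hKx' hSk0.le
      have hSkle : S^k ≤ 10/7 := by linarith
      have hSk1 : S^k - 1 ≤ 6/7 * ε := by
        have haux2 : (K*x) * S^k ≤ (3/5*ε) * (10/7) := by
          apply mul_le_mul hKx hSkle hSk0.le (by linarith)
        linarith
      have hSk1' : 0 ≤ S^k - 1 := by
        have : (1:ℝ) ≤ S^k := one_le_pow₀ hS1
        linarith
      have hKk : (3125:ℝ) ≤ K^k := by
        calc (3125:ℝ) = 5^5 := by norm_num
          _ ≤ K^5 := by apply pow_le_pow_left₀ (by norm_num) hK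
          _ ≤ K^k := by
              apply pow_le_pow_right₀ (by linarith) (by omega)
      have hKkpos : (0:ℝ) < K^k := by positivity
      -- (S^k - 1)/K^k ≤ 6ε/7/3125
      have hterm1 : (S^k - 1)/K^k ≤ (6/7*ε)/3125 :=
        div_le_div₀ (by positivity) hSk1 (by norm_num) hKk
      have hterm2 : c * (K - S) ≤ ε / 10 := by
        have h1 : c * (K - S) ≤ c * (K - 1) := by
          apply mul_le_mul_of_nonneg_left _ hcpos.le
          linarith
        have h2 : c * (K-1) ≤ (ε/(2*K^2)) * (K-1) := by
          apply mul_le_mul_of_nonneg_right hcle (by linarith)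
        have h3 : (ε/(2*K^2)) * (K-1) ≤ ε / 10 := by
          rw [div_mul_eq_mul_div, div_le_div_iff₀ (by positivity) (by norm_num)]
          have h6 : (K-1)*10 ≤ 2*K^2 := by nlinarith
          calc ε*(K-1)*10 = ε*((K-1)*10) := by ring
            _ ≤ ε*(2*K^2) := by gcongr
        exact le_trans h1 (le_trans h2 h3)
      have hgoal : S^k / K^k - (K^k)⁻¹ = (S^k - 1)/K^k := by
        field_simp
      have : S^k / K^k + c * (K - S) - ((K^k)⁻¹ + ε) < 0 := by
        have := hterm1
        have := hterm2
        rw [show S^k / K^k + c * (K - S) - ((K^k)⁻¹ + ε)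
            = (S^k/K^k - (K^k)⁻¹) + c*(K-S) - ε by ring, hgoal]
        linarith
      linarith

private lemma stmt8_core (k : ℕ) (hk : 3 ≤ k) (ε : ℝ) (hε : 0 < ε) (hε2 : ε < 1/2)
    (c : ℝ) (hc : c = ε * (k.choose 2) / (k:ℝ) ^ (k-1))
    (d : Fin k → ℝ) (hd0 : ∀ i, 0 ≤ d i)
    (hs : ∑ i, d i < 1 + ((k:ℝ)+1)*c) :
    ∏ i, d i + c * ((k:ℝ) - ∑ i, d i) < ((k:ℝ)^k)⁻¹ + ε := by
  have hKpos : (0:ℝ) < (k:ℝ) := by exact_mod_cast (by omega : 0 < k)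
  have hcpos : 0 < c := by
    have h2 : (0:ℝ) < (k.choose 2 : ℝ) := by
      exact_mod_cast Nat.choose_pos (by omega : 2 ≤ k)
    rw [hc]; positivity
  set s : ℝ := ∑ i, d i with hsdef
  set S : ℝ := 1 + ((k:ℝ)+1)*c with hSdef
  have hSpos : 0 < S := by positivity
  have hs0 : 0 ≤ s := Finset.sum_nonneg fun i _ => hd0 i
  set lam : ℝ := s / S with hlam
  have hlam0 : 0 ≤ lam := by positivity
  have hlam1 : lam < 1 := (div_lt_one hSpos).mpr hs
  have hlS : lam * S = s := div_mul_cancel₀ s (ne_of_gt hSpos)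
  -- ∏ d ≤ lam * S^k / k^k
  have hprod : ∏ i, d i ≤ lam * (S^k / (k:ℝ)^k) := by
    have h1 : ∏ i, d i ≤ (s / (k:ℝ))^k := stmt8_amgm k (by omega) d hd0
    have h2 : s^k ≤ lam * S^k := by
      have : s^k = lam^k * S^k := by
        rw [← mul_pow, hlS]
      rw [this]
      have hl : lam^k ≤ lam := pow_le_of_le_one hlam0 hlam1.le (by omega)
      apply mul_le_mul_of_nonneg_right hl (by positivity)
    calc ∏ i, d i ≤ (s / (k:ℝ))^k := h1
      _ = s^k / (k:ℝ)^k := by rw [div_pow]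
      _ ≤ (lam * S^k) / (k:ℝ)^k := by
          gcongr
      _ = lam * (S^k / (k:ℝ)^k) := by ring
  have hlin : c * ((k:ℝ) - s) = (1-lam) * (c * k) + lam * (c * ((k:ℝ) - S)) := by
    have : lam * S = s := hlS
    nlinarith [hlS]
  have hA := stmt8_n2 k hk ε hε hε2 c hc
  have hB := stmt8_n1 k hk ε hε
  have hB' : c * (k:ℝ) < ((k:ℝ)^k)⁻¹ + ε := by
    have : (0:ℝ) < ((k:ℝ)^k)⁻¹ := by positivity
    have : (k:ℝ) * c ≤ ε := by rw [hc]; exact hB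
    nlinarith
  set B : ℝ := ((k:ℝ)^k)⁻¹ + ε with hBdef
  calc ∏ i, d i + c * ((k:ℝ) - s)
      ≤ lam * (S^k / (k:ℝ)^k) + ((1-lam) * (c*k) + lam * (c * ((k:ℝ) - S))) := by
        rw [← hlin]; exact add_le_add hprod le_rfl
    _ = lam * (S^k / (k:ℝ)^k + c * ((k:ℝ) - S)) + (1-lam) * (c*k) := by ring
    _ < lam * B + (1-lam) * B := by
        apply add_lt_add_of_le_of_lt
        · exact mul_le_mul_of_nonneg_left hA.le hlam0
        · exact mul_lt_mul_of_pos_left hB' (by linarith)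
    _ = B := by ring

/-- counting step in Lemma 5.2.  Let `ε ∈ (0, 1/2)`, `k ≥ 3`,
`ρ₀ = ε·k^{1−k}`, and `t 1, …, t k ∈ [0,1]` with `∑ ℓ, t ℓ < 1 + ρ₀·binom(k,2)`.
Suppose `A` is a `k`-partite `k`-graph with parts `P 1, …, P k` (edges modelled as
transversal functions `e : Fin k → α` with `e ℓ ∈ P ℓ`) such that for each `ℓ`, the set
of vertices `v ∈ P ℓ` contained in at least `ρ₀·binom(k,2)·∏_{j≠ℓ}|P j|` edges has size
less than `(t ℓ + ρ₀·binom(k,2))·|P ℓ|`.  Then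
`|E(A)| < (k^{−k} + ε)·∏ ℓ, |P ℓ|`. -/
theorem stmt8 {α : Type*} [DecidableEq α] (k : ℕ) (hk : 3 ≤ k)
    (ε : ℝ) (hε : 0 < ε) (hε2 : ε < 1 / 2)
    (ρ₀ : ℝ) (hρ₀ : ρ₀ = ε / (k : ℝ) ^ (k - 1))
    (t : Fin k → ℝ) (ht : ∀ ℓ, t ℓ ∈ Set.Icc (0 : ℝ) 1)
    (htsum : ∑ ℓ, t ℓ < 1 + ρ₀ * (k.choose 2 : ℝ))
    (P : Fin k → Finset α) (hPne : ∀ ℓ, (P ℓ).Nonempty)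
    (E : Finset (Fin k → α)) (hE : ∀ e ∈ E, ∀ ℓ, e ℓ ∈ P ℓ)
    (hdeg : ∀ ℓ : Fin k,
      ((((P ℓ).filter (fun v =>
          ρ₀ * (k.choose 2 : ℝ) * ∏ j ∈ Finset.univ.erase ℓ, ((P j).card : ℝ)
            ≤ ((E.filter (fun e => e ℓ = v)).card : ℝ))).card : ℝ)
        < (t ℓ + ρ₀ * (k.choose 2 : ℝ)) * ((P ℓ).card : ℝ))) :
    (E.card : ℝ) < (((k : ℝ) ^ k)⁻¹ + ε) * ∏ ℓ, ((P ℓ).card : ℝ) := by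
  have hKpos : (0:ℝ) < (k:ℝ) := by exact_mod_cast (by omega : 0 < k)
  set C : ℝ := ρ₀ * (k.choose 2 : ℝ) with hCdef
  have hC : C = ε * (k.choose 2) / (k:ℝ) ^ (k-1) := by rw [hCdef, hρ₀]; ring
  have hCpos : 0 < C := by
    have h2 : (0:ℝ) < (k.choose 2 : ℝ) := by
      exact_mod_cast Nat.choose_pos (by omega : 2 ≤ k)
    rw [hC]; positivity
  set D : Fin k → Finset α := fun ℓ => (P ℓ).filter (fun v =>
      ρ₀ * (k.choose 2 : ℝ) * ∏ j ∈ Finset.univ.erase ℓ, ((P j).card : ℝ)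
        ≤ ((E.filter (fun e => e ℓ = v)).card : ℝ)) with hDdef
  have hDsub : ∀ ℓ, D ℓ ⊆ P ℓ := fun ℓ => Finset.filter_subset _ _
  have hp : ∀ ℓ, (0:ℝ) < ((P ℓ).card : ℝ) := fun ℓ => by
    exact_mod_cast (hPne ℓ).card_pos
  have hdeg' : ∀ ℓ, (((D ℓ).card : ℝ)) < (t ℓ + C) * ((P ℓ).card : ℝ) := by
    intro ℓ
    simpa [hDdef, hCdef] using hdeg ℓ
  -- Step A
  have hsplit : E.card ≤ (∏ ℓ, (D ℓ).card) +
      ∑ ℓ, (E.filter fun e => e ℓ ∉ D ℓ).card := by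
    have h1 : (E.filter fun e => ∀ ℓ, e ℓ ∈ D ℓ).card
        + (E.filter fun e => ¬ ∀ ℓ, e ℓ ∈ D ℓ).card = E.card :=
      Finset.card_filter_add_card_filter_not _
    have h2 : (E.filter fun e => ∀ ℓ, e ℓ ∈ D ℓ) ⊆ Fintype.piFinset D := by
      intro e he
      rw [Fintype.mem_piFinset]
      exact (Finset.mem_filter.mp he).2
    have h3 : (E.filter fun e => ¬ ∀ ℓ, e ℓ ∈ D ℓ) ⊆
        Finset.univ.biUnion (fun ℓ => E.filter fun e => e ℓ ∉ D ℓ) := by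
      intro e he
      rcases Finset.mem_filter.mp he with ⟨heE, hne⟩
      push_neg at hne
      obtain ⟨ℓ, hℓ⟩ := hne
      exact Finset.mem_biUnion.mpr ⟨ℓ, Finset.mem_univ _,
        Finset.mem_filter.mpr ⟨heE, hℓ⟩⟩
    calc E.card = (E.filter fun e => ∀ ℓ, e ℓ ∈ D ℓ).card
        + (E.filter fun e => ¬ ∀ ℓ, e ℓ ∈ D ℓ).card := h1.symm
      _ ≤ (Fintype.piFinset D).card
          + (Finset.univ.biUnion (fun ℓ => E.filter fun e => e ℓ ∉ D ℓ)).card :=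
        add_le_add (Finset.card_le_card h2) (Finset.card_le_card h3)
      _ ≤ (∏ ℓ, (D ℓ).card) + ∑ ℓ, (E.filter fun e => e ℓ ∉ D ℓ).card := by
          rw [Fintype.card_piFinset]
          exact add_le_add le_rfl Finset.card_biUnion_le
  -- Step B
  have hBd : ∀ ℓ, ((E.filter fun e => e ℓ ∉ D ℓ).card : ℝ)
      ≤ (((P ℓ).card : ℝ) - ((D ℓ).card : ℝ))
        * (C * ∏ j ∈ Finset.univ.erase ℓ, ((P j).card : ℝ)) := by
    intro ℓ
    have hfib : (E.filter fun e => e ℓ ∉ D ℓ).card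
        = ∑ v ∈ (P ℓ) \ (D ℓ),
            ((E.filter fun e => e ℓ ∉ D ℓ).filter fun e => e ℓ = v).card := by
      apply Finset.card_eq_sum_card_fiberwise
      intro e he
      rcases Finset.mem_filter.mp he with ⟨heE, hnot⟩
      exact Finset.mem_sdiff.mpr ⟨hE e heE ℓ, hnot⟩
    have hblk : ∀ v ∈ (P ℓ) \ (D ℓ),
        ((((E.filter fun e => e ℓ ∉ D ℓ).filter fun e => e ℓ = v).card : ℝ))
          ≤ C * ∏ j ∈ Finset.univ.erase ℓ, ((P j).card : ℝ) := by
      intro v hv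
      rcases Finset.mem_sdiff.mp hv with ⟨hvP, hvD⟩
      have hsub : ((E.filter fun e => e ℓ ∉ D ℓ).filter fun e => e ℓ = v)
          ⊆ E.filter fun e => e ℓ = v := by
        intro e he
        simp only [Finset.mem_filter] at he ⊢
        exact ⟨he.1.1, he.2⟩
      have h1 : ((((E.filter fun e => e ℓ ∉ D ℓ).filter fun e => e ℓ = v).card : ℝ))
          ≤ ((E.filter fun e => e ℓ = v).card : ℝ) := by
        exact_mod_cast Finset.card_le_card hsub
      have h2 : ¬ (ρ₀ * (k.choose 2:ℝ) * ∏ j ∈ Finset.univ.erase ℓ, ((P j).card : ℝ)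
          ≤ ((E.filter fun e => e ℓ = v).card : ℝ)) := by
        intro hcon
        apply hvD
        rw [hDdef]
        exact Finset.mem_filter.mpr ⟨hvP, hcon⟩
      push_neg at h2
      calc ((((E.filter fun e => e ℓ ∉ D ℓ).filter fun e => e ℓ = v).card : ℝ))
          ≤ ((E.filter fun e => e ℓ = v).card : ℝ) := h1
        _ ≤ C * ∏ j ∈ Finset.univ.erase ℓ, ((P j).card : ℝ) := by
            rw [hCdef]; exact le_of_lt h2
    calc ((E.filter fun e => e ℓ ∉ D ℓ).card : ℝ)
        = ∑ v ∈ (P ℓ) \ (D ℓ),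
            ((((E.filter fun e => e ℓ ∉ D ℓ).filter fun e => e ℓ = v).card : ℝ)) := by
          rw [hfib]; push_cast; ring
      _ ≤ ∑ v ∈ (P ℓ) \ (D ℓ),
            (C * ∏ j ∈ Finset.univ.erase ℓ, ((P j).card : ℝ)) :=
          Finset.sum_le_sum hblk
      _ = (((P ℓ) \ (D ℓ)).card : ℝ)
            * (C * ∏ j ∈ Finset.univ.erase ℓ, ((P j).card : ℝ)) := by
          rw [Finset.sum_const, nsmul_eq_mul]
      _ = (((P ℓ).card : ℝ) - ((D ℓ).card : ℝ))
            * (C * ∏ j ∈ Finset.univ.erase ℓ, ((P j).card : ℝ)) := by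
          rw [Finset.card_sdiff_of_subset (hDsub ℓ),
            Nat.cast_sub (Finset.card_le_card (hDsub ℓ))]
  -- Step C : pass to normalized densities
  set d : Fin k → ℝ := fun ℓ => ((D ℓ).card : ℝ) / ((P ℓ).card : ℝ) with hddef
  have hd0 : ∀ ℓ, 0 ≤ d ℓ := fun ℓ => by
    simp only [hddef]; positivity
  have hdp : ∀ ℓ, d ℓ * ((P ℓ).card : ℝ) = ((D ℓ).card : ℝ) := fun ℓ => by
    simp only [hddef]; field_simp
  have hdlt : ∀ ℓ, d ℓ < t ℓ + C := by
    intro ℓ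
    simp only [hddef]
    rw [div_lt_iff₀ (hp ℓ)]
    exact hdeg' ℓ
  have hsum : ∑ ℓ, d ℓ < 1 + ((k:ℝ)+1)*C := by
    haveI : Nonempty (Fin k) := Fin.pos_iff_nonempty.mp (Nat.lt_of_lt_of_le (by norm_num) hk)
    calc ∑ ℓ, d ℓ < ∑ ℓ, (t ℓ + C) :=
        Finset.sum_lt_sum_of_nonempty Finset.univ_nonempty (fun i _ => hdlt i)
      _ = (∑ ℓ, t ℓ) + (k:ℝ)*C := by
          rw [Finset.sum_add_distrib, Finset.sum_const, Finset.card_univ,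
            Fintype.card_fin, nsmul_eq_mul]
      _ < (1 + C) + (k:ℝ)*C := by
          have := htsum; linarith
      _ = 1 + ((k:ℝ)+1)*C := by ring
  have hQ : (0:ℝ) < ∏ ℓ, ((P ℓ).card : ℝ) := Finset.prod_pos fun ℓ _ => hp ℓ
  -- assemble
  have hDP : (∏ ℓ, ((D ℓ).card : ℝ)) = (∏ ℓ, d ℓ) * ∏ ℓ, ((P ℓ).card : ℝ) := by
    rw [← Finset.prod_mul_distrib]
    exact Finset.prod_congr rfl fun ℓ _ => (hdp ℓ).symm
  have hterm : ∀ ℓ : Fin k, (((P ℓ).card : ℝ) - ((D ℓ).card : ℝ))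
        * (C * ∏ j ∈ Finset.univ.erase ℓ, ((P j).card : ℝ))
      = (1 - d ℓ) * C * ∏ j, ((P j).card : ℝ) := by
    intro ℓ
    have hQe : ((P ℓ).card : ℝ) * ∏ j ∈ Finset.univ.erase ℓ, ((P j).card : ℝ)
        = ∏ j, ((P j).card : ℝ) :=
      Finset.mul_prod_erase Finset.univ (fun j => ((P j).card : ℝ)) (Finset.mem_univ ℓ)
    have h1 : (((P ℓ).card : ℝ) - ((D ℓ).card : ℝ)) = (1 - d ℓ) * ((P ℓ).card : ℝ) := by
      rw [sub_mul, one_mul, hdp ℓ]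
    rw [h1, ← hQe]; ring
  have hmain : (E.card : ℝ) ≤
      ((∏ ℓ, d ℓ) + C * ((k:ℝ) - ∑ ℓ, d ℓ)) * ∏ ℓ, ((P ℓ).card : ℝ) := by
    have hcast : (E.card : ℝ) ≤ (∏ ℓ, ((D ℓ).card : ℝ))
        + ∑ ℓ, ((E.filter fun e => e ℓ ∉ D ℓ).card : ℝ) := by
      exact_mod_cast hsplit
    have hsumB : ∑ ℓ, ((E.filter fun e => e ℓ ∉ D ℓ).card : ℝ)
        ≤ ∑ ℓ, (1 - d ℓ) * C * ∏ j, ((P j).card : ℝ) := by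
      apply Finset.sum_le_sum
      intro ℓ _
      calc ((E.filter fun e => e ℓ ∉ D ℓ).card : ℝ) ≤ _ := hBd ℓ
        _ = (1 - d ℓ) * C * ∏ j, ((P j).card : ℝ) := hterm ℓ
    have hsimp : ∑ ℓ, (1 - d ℓ) * C * ∏ j, ((P j).card : ℝ)
        = C * ((k:ℝ) - ∑ ℓ, d ℓ) * ∏ j, ((P j).card : ℝ) := by
      rw [← Finset.sum_mul, ← Finset.sum_mul]
      congr 1
      rw [Finset.sum_sub_distrib, Finset.sum_const, Finset.card_univ, Fintype.card_fin,
        nsmul_eq_mul, mul_one]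
      ring
    calc (E.card : ℝ) ≤ (∏ ℓ, ((D ℓ).card : ℝ))
          + ∑ ℓ, ((E.filter fun e => e ℓ ∉ D ℓ).card : ℝ) := hcast
      _ ≤ (∏ ℓ, d ℓ) * (∏ ℓ, ((P ℓ).card : ℝ))
          + C * ((k:ℝ) - ∑ ℓ, d ℓ) * ∏ j, ((P j).card : ℝ) := by
          rw [hDP]
          exact add_le_add le_rfl (le_trans hsumB (le_of_eq hsimp))
      _ = ((∏ ℓ, d ℓ) + C * ((k:ℝ) - ∑ ℓ, d ℓ)) * ∏ ℓ, ((P ℓ).card : ℝ) := by ring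
  calc (E.card : ℝ) ≤ _ := hmain
    _ < (((k:ℝ)^k)⁻¹ + ε) * ∏ ℓ, ((P ℓ).card : ℝ) := by
        apply mul_lt_mul_of_pos_right _ hQ
        exact stmt8_core k hk ε hε hε2 C hC d hd0 hsum

end
end

section
/- Let k ≥ 3 and let F be a k-graph that fails to satisfy the following property (♠*) for some pair i < j in [k]: F can be partitioned into two spanning subhypergraphs F¹ and F² admitting a common vanishing vertex ordering such that for any edges e₁ ∈ E(F¹), e₂ ∈ E(F²) with |e₁ ∩ e₂| = k−1, the (k−1)-set e₁ ∩ e₂ is either the same ℓ-type with respect to both F¹ and F² for some ℓ ∈ [k], or is i-type w.r.t. F¹ and j-type w.r.t. F². Then π_{k−2}(F) ≥ 3(k+1)^{−k}. -/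
open scoped Classical BigOperators

noncomputable section

/-- Under the ordering `ord`, the `(k−1)`-set `S` is `ℓ`-type w.r.t. the hypergraph `G`
(`ℓ ∈ [k]`, 1-based): there is a vertex `v` with `S ∪ {v} ∈ E(G)` such that `v` occupies
the `ℓ`-th position of the ordered edge `S ∪ {v}`. -/
def IsType {V : Type*} [DecidableEq V] (ord : V → ℕ) (G : Finset (Finset V))
    (S : Finset V) (ℓ : ℕ) : Prop :=
  ∃ v, v ∉ S ∧ insert v S ∈ G ∧ rankIn ord (insert v S) v + 1 = ℓ

/-- Property (♠*) for the pair `i < j`: `F` can be partitioned into two spanning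
subhypergraphs `F₁`, `F₂` admitting a common vanishing vertex ordering such that for any
edges `e₁ ∈ F₁`, `e₂ ∈ F₂` with `|e₁ ∩ e₂| = k−1`, the set `e₁ ∩ e₂` is either the same
`ℓ`-type w.r.t. both `F₁` and `F₂` for some `ℓ ∈ [k]`, or is `i`-type w.r.t. `F₁` and
`j`-type w.r.t. `F₂`. -/
def SpadeStar (k f : ℕ) (F : Finset (Finset (Fin f))) (i j : ℕ) : Prop :=
  ∃ F1 F2 : Finset (Finset (Fin f)), F1 ∪ F2 = F ∧ Disjoint F1 F2 ∧
    ∃ ord : Fin f → ℕ, Function.Injective ord ∧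
      IsVanishing k F1 ord ∧ IsVanishing k F2 ord ∧
      ∀ e1 ∈ F1, ∀ e2 ∈ F2, (e1 ∩ e2).card = k - 1 →
        ((∃ ℓ ∈ Finset.Icc 1 k, IsType ord F1 (e1 ∩ e2) ℓ ∧ IsType ord F2 (e1 ∩ e2) ℓ) ∨
          (IsType ord F1 (e1 ∩ e2) i ∧ IsType ord F2 (e1 ∩ e2) j))

namespace Stmt10Aux

/-- colorings of the `(k-1)`-subsets (in fact of all subsets) of `Fin n` by `k+1` colors -/
abbrev Col (n k : ℕ) := Finset (Fin n) → Fin (k + 1)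

def vord {n : ℕ} : Fin n → ℕ := fun v => (v : ℕ)

/-- the three palette patterns: pattern `t ∈ {0,1,2}` assigns to rank `ρ` a color. -/
def patv (k i j t ρ : ℕ) : ℕ :=
  if t = 0 then ρ else if t = 1 then (if ρ = i - 1 then k else ρ)
    else (if ρ = j - 1 then k else ρ)

def Epred {n : ℕ} (k i j : ℕ) (r : Col n k) (t : ℕ) (e : Finset (Fin n)) : Prop :=
  ∀ x ∈ e, (r (e.erase x) : ℕ) = patv k i j t (rankIn vord e x)

def Econ (k i j n : ℕ) (r : Col n k) : Finset (Finset (Fin n)) :=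
  (Finset.powersetCard k (Finset.univ : Finset (Fin n))).filter
    (fun e => Epred k i j r 0 e ∨ Epred k i j r 1 e ∨ Epred k i j r 2 e)

section RankLemmas

variable {V : Type*} [DecidableEq V]

lemma rankIn_lt_card (ord : V → ℕ) {e : Finset V} {x : V} (hx : x ∈ e) :
    rankIn ord e x < e.card := by
  have h1 : e.filter (fun y => ord y < ord x) ⊆ e.erase x := by
    intro y hy
    simp only [Finset.mem_filter] at hy
    exact Finset.mem_erase.2 ⟨fun h => by simp [h] at hy, hy.1⟩
  calc rankIn ord e x ≤ (e.erase x).card := Finset.card_le_card h1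
  _ < e.card := Finset.card_erase_lt_of_mem hx

lemma rankIn_lt_rankIn (ord : V → ℕ) {e : Finset V} {x y : V} (hx : x ∈ e)
    (hxy : ord x < ord y) : rankIn ord e x < rankIn ord e y := by
  apply Finset.card_lt_card
  constructor
  · intro z hz
    simp only [Finset.mem_filter] at hz ⊢
    exact ⟨hz.1, hz.2.trans hxy⟩
  · intro hsub
    have := hsub (Finset.mem_filter.2 ⟨hx, hxy⟩)
    simp at this

lemma rankIn_injOn (ord : V → ℕ) (hord : Function.Injective ord) {e : Finset V}
    {x y : V} (hx : x ∈ e) (hy : y ∈ e) (hr : rankIn ord e x = rankIn ord e y) : x = y := by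
  rcases lt_trichotomy (ord x) (ord y) with h | h | h
  · exact absurd hr (Nat.ne_of_lt (rankIn_lt_rankIn ord hx h))
  · exact hord h
  · exact absurd hr.symm (Nat.ne_of_lt (rankIn_lt_rankIn ord hy h))

lemma rankIn_surj (ord : V → ℕ) (hord : Function.Injective ord) (e : Finset V)
    {ρ : ℕ} (hρ : ρ < e.card) : ∃ x ∈ e, rankIn ord e x = ρ := by
  have himg : e.image (rankIn ord e) = Finset.range e.card := by
    apply Finset.eq_of_subset_of_card_le
    · intro m hm
      obtain ⟨x, hx, rfl⟩ := Finset.mem_image.1 hm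
      exact Finset.mem_range.2 (rankIn_lt_card ord hx)
    · rw [Finset.card_range, Finset.card_image_of_injOn
        (fun x hx y hy hxy => rankIn_injOn ord hord hx hy hxy)]
  have : ρ ∈ e.image (rankIn ord e) := by rw [himg]; exact Finset.mem_range.2 hρ
  obtain ⟨x, hx, hxe⟩ := Finset.mem_image.1 this
  exact ⟨x, hx, hxe⟩

end RankLemmas

lemma rankIn_comp {f' n : ℕ} (g : Fin f' → Fin n) (hg : Function.Injective g)
    (e : Finset (Fin f')) (x : Fin f') :
    rankIn (fun v => ((g v : Fin n) : ℕ)) e x = rankIn vord (e.image g) (g x) := by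
  unfold rankIn vord
  rw [Finset.filter_image]
  rw [Finset.card_image_of_injective _ hg]

lemma exists_apex {α : Type*} [DecidableEq α] {k : ℕ} (hk : 1 ≤ k) {e1 e2 : Finset α}
    (h1 : e1.card = k) (hc : (e1 ∩ e2).card = k - 1) :
    ∃ x, x ∉ e1 ∩ e2 ∧ e1 = insert x (e1 ∩ e2) := by
  have hsd : (e1 \ e2).card = 1 := by
    have := Finset.card_sdiff_add_card_inter e1 e2
    omega
  obtain ⟨x, hx⟩ := Finset.card_eq_one.1 hsd
  refine ⟨x, ?_, ?_⟩
  · have hxmem : x ∈ e1 \ e2 := by rw [hx]; exact Finset.mem_singleton_self x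
    simp only [Finset.mem_sdiff] at hxmem
    simp only [Finset.mem_inter]
    tauto
  · apply Finset.eq_of_subset_of_card_le
    · intro y hy
      by_cases hy2 : y ∈ e2
      · exact Finset.mem_insert.2 (Or.inr (Finset.mem_inter.2 ⟨hy, hy2⟩))
      · have : y ∈ e1 \ e2 := Finset.mem_sdiff.2 ⟨hy, hy2⟩
        rw [hx] at this
        exact Finset.mem_insert.2 (Or.inl (Finset.mem_singleton.1 this))
    · calc (insert x (e1 ∩ e2)).card ≤ (e1 ∩ e2).card + 1 := Finset.card_insert_le _ _
      _ ≤ e1.card := by omega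

end Stmt10Aux
namespace Stmt10Aux

lemma patv0 {k i j ρ : ℕ} : patv k i j 0 ρ = ρ := by simp [patv]
lemma patv1 {k i j ρ : ℕ} : patv k i j 1 ρ = if ρ = i - 1 then k else ρ := by simp [patv]
lemma patv2 {k i j ρ : ℕ} : patv k i j 2 ρ = if ρ = j - 1 then k else ρ := by simp [patv]

lemma epred_pull {n k i j f : ℕ} (r : Col n k) (g : Fin f → Fin n) (hg : Function.Injective g)
    {t : ℕ} {e : Finset (Fin f)} (he : Epred k i j r t (e.image g)) {x : Fin f} (hx : x ∈ e) :
    (r ((e.erase x).image g) : ℕ)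
      = patv k i j t (rankIn (fun v => ((g v : Fin n) : ℕ)) e x) := by
  have h1 := he (g x) (Finset.mem_image_of_mem g hx)
  rw [← Finset.image_erase hg] at h1
  rw [h1, rankIn_comp g hg e x]

/-- the freeness part: for every coloring `r`, `Econ k i j n r` is `F`-free. -/
lemma free_of_not_spade {k f : ℕ} (hk : 3 ≤ k) {F : Finset (Finset (Fin f))}
    (hF : HGIsUniform k F) {i j : ℕ} (hi : 1 ≤ i) (hij : i < j) (hj : j ≤ k)
    (h : ¬ SpadeStar k f F i j) {n : ℕ} (r : Col n k) :
    HGFree F (Econ k i j n r) := by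
  rintro ⟨g, hg, hmap⟩
  apply h
  set ord : Fin f → ℕ := fun v => ((g v : Fin n) : ℕ) with hord
  have hordinj : Function.Injective ord := fun a b hab => hg (Fin.val_injective hab)
  set P : Finset (Fin f) → Prop :=
    fun e => Epred k i j r 0 (e.image g) ∨ Epred k i j r 1 (e.image g) with hP
  have hpat : ∀ e ∈ F, Epred k i j r 0 (e.image g) ∨ Epred k i j r 1 (e.image g) ∨
      Epred k i j r 2 (e.image g) := by
    intro e he
    exact (Finset.mem_filter.1 (hmap e he)).2
  have hF2pat : ∀ e ∈ F.filter (fun e => ¬ P e), Epred k i j r 2 (e.image g) := by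
    intro e he
    rw [Finset.mem_filter] at he
    rcases hpat e he.1 with h0 | h1 | h2
    · exact absurd (Or.inl h0) he.2
    · exact absurd (Or.inr h1) he.2
    · exact h2
  refine ⟨F.filter P, F.filter (fun e => ¬ P e), Finset.filter_union_filter_not_eq _ _,
    Finset.disjoint_filter_filter_not _ _ _, ord, hordinj, ?_, ?_, ?_⟩
  · -- vanishing for F1
    refine ⟨fun S => if (r (S.image g) : ℕ) < k then (r (S.image g) : ℕ) else i - 1,
      fun S => by dsimp only; split <;> omega, ?_⟩
    intro e he x hx
    rw [Finset.mem_filter] at he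
    have hcard : e.card = k := hF e he.1
    have hrk : rankIn ord e x < k := by
      have := rankIn_lt_card ord hx; omega
    dsimp only
    rcases he.2 with h0 | h1
    · have hpull := epred_pull r g hg h0 hx
      rw [← hord] at hpull
      rw [hpull, patv0, if_pos hrk]
    · have hpull := epred_pull r g hg h1 hx
      rw [← hord] at hpull
      rw [hpull, patv1]
      by_cases hri : rankIn ord e x = i - 1
      · rw [if_pos hri, if_neg (by omega)]; omega
      · rw [if_neg hri, if_pos hrk]
  · -- vanishing for F2
    refine ⟨fun S => if (r (S.image g) : ℕ) < k then (r (S.image g) : ℕ) else j - 1,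
      fun S => by dsimp only; split <;> omega, ?_⟩
    intro e he x hx
    have hcard : e.card = k := hF e (Finset.mem_filter.1 he).1
    have hrk : rankIn ord e x < k := by
      have := rankIn_lt_card ord hx; omega
    dsimp only
    have hpull := epred_pull r g hg (hF2pat e he) hx
    rw [← hord] at hpull
    rw [hpull, patv2]
    by_cases hrj : rankIn ord e x = j - 1
    · rw [if_pos hrj, if_neg (by omega)]; omega
    · rw [if_neg hrj, if_pos hrk]
  · -- cross condition
    intro e1 he1 e2 he2 hcap
    have he1' := he1
    have he2' := he2
    rw [Finset.mem_filter] at he1' he2'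
    have hc1 : e1.card = k := hF e1 he1'.1
    have hc2 : e2.card = k := hF e2 he2'.1
    obtain ⟨x1, hx1S, hx1e⟩ := exists_apex (by omega) hc1 hcap
    have hcap' : (e2 ∩ e1).card = k - 1 := by rw [Finset.inter_comm]; exact hcap
    obtain ⟨x2, hx2S', hx2e'⟩ := exists_apex (by omega) hc2 hcap'
    rw [Finset.inter_comm e2 e1] at hx2S' hx2e'
    set S : Finset (Fin f) := e1 ∩ e2 with hS
    have hx1 : x1 ∈ e1 := by rw [hx1e]; exact Finset.mem_insert_self _ _
    have hx2 : x2 ∈ e2 := by rw [hx2e']; exact Finset.mem_insert_self _ _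
    have herase1 : e1.erase x1 = S := by rw [hx1e, Finset.erase_insert hx1S]
    have herase2 : e2.erase x2 = S := by rw [hx2e', Finset.erase_insert hx2S']
    set ρ1 := rankIn ord e1 x1 with hρ1
    set ρ2 := rankIn ord e2 x2 with hρ2
    have hρ1k : ρ1 < k := by
      have := rankIn_lt_card ord hx1; omega
    have hρ2k : ρ2 < k := by
      have := rankIn_lt_card ord hx2; omega
    set c : ℕ := (r (S.image g) : ℕ) with hc
    have hck : c < k + 1 := (r (S.image g)).isLt
    have hval2 : c = patv k i j 2 ρ2 := by
      have h2 := epred_pull r g hg (hF2pat e2 he2) hx2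
      rw [herase2, ← hord, ← hρ2] at h2
      rw [hc]; exact h2
    have hval1 : ∃ t1, (t1 = 0 ∨ t1 = 1) ∧ c = patv k i j t1 ρ1 := by
      rcases he1'.2 with h0 | h1
      · refine ⟨0, Or.inl rfl, ?_⟩
        have h2 := epred_pull r g hg h0 hx1
        rw [herase1, ← hord, ← hρ1] at h2
        rw [hc]; exact h2
      · refine ⟨1, Or.inr rfl, ?_⟩
        have h2 := epred_pull r g hg h1 hx1
        rw [herase1, ← hord, ← hρ1] at h2
        rw [hc]; exact h2
    obtain ⟨t1, ht1, hval1⟩ := hval1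
    by_cases hcase : c < k
    · -- common type c+1
      have hr1 : ρ1 = c := by
        rcases ht1 with rfl | rfl
        · rw [patv0] at hval1; omega
        · rw [patv1] at hval1
          by_cases hri : ρ1 = i - 1
          · rw [if_pos hri] at hval1; omega
          · rw [if_neg hri] at hval1; omega
      have hr2 : ρ2 = c := by
        rw [patv2] at hval2
        by_cases hrj : ρ2 = j - 1
        · rw [if_pos hrj] at hval2; omega
        · rw [if_neg hrj] at hval2; omega
      left
      refine ⟨c + 1, Finset.mem_Icc.2 ⟨by omega, by omega⟩, ⟨x1, hx1S, ?_, ?_⟩,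
        ⟨x2, hx2S', ?_, ?_⟩⟩
      · rw [← hx1e]; exact he1
      · rw [← hx1e, ← hρ1]; omega
      · rw [← hx2e']; exact he2
      · rw [← hx2e', ← hρ2]; omega
    · -- (i,j) type
      have hr1 : ρ1 = i - 1 := by
        rcases ht1 with rfl | rfl
        · rw [patv0] at hval1; omega
        · rw [patv1] at hval1
          by_cases hri : ρ1 = i - 1
          · exact hri
          · rw [if_neg hri] at hval1; omega
      have hr2 : ρ2 = j - 1 := by
        rw [patv2] at hval2
        by_cases hrj : ρ2 = j - 1
        · exact hrj
        · rw [if_neg hrj] at hval2; omega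
      right
      refine ⟨⟨x1, hx1S, ?_, ?_⟩, ⟨x2, hx2S', ?_, ?_⟩⟩
      · rw [← hx1e]; exact he1
      · rw [← hx1e, ← hρ1]; omega
      · rw [← hx2e']; exact he2
      · rw [← hx2e', ← hρ2]; omega

end Stmt10Aux
namespace Stmt10Aux

variable {n k : ℕ}

def NΩ (n k : ℕ) : ℕ := Fintype.card (Col n k)

lemma NΩ_pos : 0 < NΩ n k := Fintype.card_pos

/-- `φ` depends only on the colors of the sets in `A`. -/
def DepOn (A : Finset (Finset (Fin n))) (φ : Col n k → ℝ) : Prop :=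
  ∀ r r' : Col n k, (∀ S ∈ A, r S = r' S) → φ r = φ r'

lemma sum_mul_of_depOn {A B : Finset (Finset (Fin n))} {φ ψ : Col n k → ℝ}
    (hφ : DepOn A φ) (hψ : DepOn B ψ) (hAB : Disjoint A B) :
    (∑ r : Col n k, φ r * ψ r) * (NΩ n k : ℝ)
      = (∑ r : Col n k, φ r) * (∑ r : Col n k, ψ r) := by
  classical
  set p : Finset (Fin n) → Prop := fun S => S ∈ A with hp
  set E := Equiv.piEquivPiSubtypeProd p (fun _ => Fin (k + 1)) with hE
  set Φ : (∀ _ : { S // p S }, Fin (k + 1)) → ℝ :=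
    fun a => φ (E.symm (a, fun _ => 0)) with hΦ
  set Ψ : (∀ _ : { S // ¬ p S }, Fin (k + 1)) → ℝ :=
    fun b => ψ (E.symm (fun _ => 0, b)) with hΨ
  have hφ' : ∀ a b, φ (E.symm (a, b)) = Φ a := by
    intro a b
    apply hφ
    intro S hS
    have hpS : p S := hS
    simp [hE, Equiv.piEquivPiSubtypeProd, hpS]
  have hψ' : ∀ a b, ψ (E.symm (a, b)) = Ψ b := by
    intro a b
    apply hψ
    intro S hS
    have hpS : ¬ p S := fun hc => (Finset.disjoint_left.1 hAB) hc hS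
    simp [hE, Equiv.piEquivPiSubtypeProd, hpS]
  have hsum : ∀ f : Col n k → ℝ, ∑ r : Col n k, f r = ∑ x, f (E.symm x) :=
    fun f => (Equiv.sum_comp E.symm f).symm
  have h1 : ∑ r : Col n k, φ r * ψ r = (∑ a, Φ a) * (∑ b, Ψ b) := by
    rw [hsum (fun r => φ r * ψ r)]
    rw [Fintype.sum_prod_type]
    rw [Finset.sum_mul_sum]
    apply Finset.sum_congr rfl
    intro a _
    apply Finset.sum_congr rfl
    intro b _
    rw [hφ' a b, hψ' a b]
  have h2 : ∑ r : Col n k, φ r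
      = (Fintype.card (∀ _ : { S // ¬ p S }, Fin (k + 1)) : ℝ) * ∑ a, Φ a := by
    rw [hsum φ, Fintype.sum_prod_type]
    rw [Finset.mul_sum]
    apply Finset.sum_congr rfl
    intro a _
    rw [Finset.sum_congr rfl (fun b _ => hφ' a b), Finset.sum_const, nsmul_eq_mul]
    simp
  have h3 : ∑ r : Col n k, ψ r
      = (Fintype.card (∀ _ : { S // p S }, Fin (k + 1)) : ℝ) * ∑ b, Ψ b := by
    rw [hsum ψ, Fintype.sum_prod_type]
    rw [Finset.sum_comm]
    rw [Finset.mul_sum]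
    apply Finset.sum_congr rfl
    intro b _
    rw [Finset.sum_congr rfl (fun a _ => hψ' a b), Finset.sum_const, nsmul_eq_mul]
    simp
  have hcard : (NΩ n k : ℝ)
      = (Fintype.card (∀ _ : { S // p S }, Fin (k + 1)) : ℝ)
        * (Fintype.card (∀ _ : { S // ¬ p S }, Fin (k + 1)) : ℝ) := by
    rw [NΩ]
    rw [Fintype.card_congr E, Fintype.card_prod]
    push_cast
    ring
  rw [h1, h2, h3, hcard]
  ring

lemma depOn_prod {ι : Type*} {M : Finset ι} {A : ι → Finset (Finset (Fin n))}
    {φ : ι → Col n k → ℝ} (hdep : ∀ e ∈ M, DepOn (A e) (φ e)) :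
    DepOn (M.biUnion A) (fun r => ∏ e ∈ M, φ e r) := by
  classical
  intro r r' hrr
  apply Finset.prod_congr rfl
  intro e he
  apply hdep e he
  intro S hS
  exact hrr S (Finset.mem_biUnion.2 ⟨e, he, hS⟩)

lemma sum_prod_of_depOn {ι : Type*} {M : Finset ι} {A : ι → Finset (Finset (Fin n))}
    {φ : ι → Col n k → ℝ} (hdep : ∀ e ∈ M, DepOn (A e) (φ e))
    (hdisj : ∀ e ∈ M, ∀ e' ∈ M, e ≠ e' → Disjoint (A e) (A e')) :
    (∑ r : Col n k, ∏ e ∈ M, φ e r) * (NΩ n k : ℝ) ^ M.card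
      = (NΩ n k : ℝ) * ∏ e ∈ M, (∑ r : Col n k, φ e r) := by
  classical
  induction M using Finset.cons_induction with
  | empty => simp [NΩ]
  | cons a M ha ih =>
    have hstep := sum_mul_of_depOn (A := A a) (B := M.biUnion A)
      (φ := φ a) (ψ := fun r => ∏ e ∈ M, φ e r)
      (hdep a (Finset.mem_cons_self a M))
      (depOn_prod (fun e he => hdep e (Finset.mem_cons.2 (Or.inr he))))
      (Finset.disjoint_biUnion_right _ _ _ |>.2 (fun e he =>
        hdisj a (Finset.mem_cons_self a M) e (Finset.mem_cons.2 (Or.inr he))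
          (fun hae => ha (hae ▸ he))))
    have ih' := ih (fun e he => hdep e (Finset.mem_cons.2 (Or.inr he)))
      (fun e he e' he' hne => hdisj e (Finset.mem_cons.2 (Or.inr he))
        e' (Finset.mem_cons.2 (Or.inr he')) hne)
    rw [Finset.card_cons, pow_succ]
    calc (∑ r : Col n k, ∏ e ∈ Finset.cons a M ha, φ e r)
          * ((NΩ n k : ℝ) ^ M.card * (NΩ n k : ℝ))
        = ((∑ r : Col n k, φ a r * ∏ e ∈ M, φ e r) * (NΩ n k : ℝ))
            * (NΩ n k : ℝ) ^ M.card := by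
          simp only [Finset.prod_cons]; ring
      _ = (∑ r : Col n k, φ a r)
            * ((∑ r : Col n k, ∏ e ∈ M, φ e r) * (NΩ n k : ℝ) ^ M.card) := by
          rw [hstep]; ring
      _ = (∑ r : Col n k, φ a r) * ((NΩ n k : ℝ) * ∏ e ∈ M, (∑ r : Col n k, φ e r)) := by
          rw [ih']
      _ = (NΩ n k : ℝ) * ∏ e ∈ Finset.cons a M ha, (∑ r : Col n k, φ e r) := by
          rw [Finset.prod_cons]; ring

lemma card_forced {β : Type*} [DecidableEq β] (s : Finset β) (em : β → Finset (Fin n))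
    (hinj : ∀ x ∈ s, ∀ y ∈ s, em x = em y → x = y) (w : β → Fin (k + 1)) :
    (Finset.univ.filter (fun r : Col n k => ∀ x ∈ s, r (em x) = w x)).card
      * (k + 1) ^ s.card = NΩ n k := by
  classical
  induction s using Finset.cons_induction with
  | empty => simp [NΩ]
  | cons a s ha ih =>
    have hQ : ∀ (c : Fin (k + 1)),
        (Finset.univ.filter (fun r : Col n k =>
          r (em a) = c ∧ ∀ x ∈ s, r (em x) = w x)).card
        = (Finset.univ.filter (fun r : Col n k =>
          r (em a) = w a ∧ ∀ x ∈ s, r (em x) = w x)).card := by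
      intro c
      have hne : ∀ x ∈ s, em x ≠ em a := fun x hx hc =>
        ha (hinj x (Finset.mem_cons.2 (Or.inr hx)) a (Finset.mem_cons_self a s) hc ▸ hx)
      refine Finset.card_bij'
        (i := fun r _ => Function.update r (em a) (w a))
        (j := fun r _ => Function.update r (em a) c)
        (hi := ?_) (hj := ?_) (left_inv := ?_) (right_inv := ?_)
      · intro r hr
        obtain ⟨h1, h2⟩ : r (em a) = c ∧ ∀ x ∈ s, r (em x) = w x := by simpa using hr
        refine Finset.mem_filter.2 ⟨Finset.mem_univ _, Function.update_self _ _ _, ?_⟩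
        intro x hx
        rw [Function.update_of_ne (hne x hx)]
        exact h2 x hx
      · intro r hr
        obtain ⟨h1, h2⟩ : r (em a) = w a ∧ ∀ x ∈ s, r (em x) = w x := by simpa using hr
        refine Finset.mem_filter.2 ⟨Finset.mem_univ _, Function.update_self _ _ _, ?_⟩
        intro x hx
        rw [Function.update_of_ne (hne x hx)]
        exact h2 x hx
      · intro r hr
        obtain ⟨h1, h2⟩ : r (em a) = c ∧ ∀ x ∈ s, r (em x) = w x := by simpa using hr
        rw [Function.update_idem, ← h1, Function.update_eq_self]
      · intro r hr
        obtain ⟨h1, h2⟩ : r (em a) = w a ∧ ∀ x ∈ s, r (em x) = w x := by simpa using hr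
        rw [Function.update_idem, ← h1, Function.update_eq_self]
    have hpart : (Finset.univ.filter (fun r : Col n k => ∀ x ∈ s, r (em x) = w x)).card
        = ∑ c : Fin (k + 1), (Finset.univ.filter (fun r : Col n k =>
            r (em a) = c ∧ ∀ x ∈ s, r (em x) = w x)).card := by
      rw [Finset.card_eq_sum_card_fiberwise
        (f := fun r : Col n k => r (em a)) (t := Finset.univ) (fun _ _ => Finset.mem_univ _)]
      apply Finset.sum_congr rfl
      intro c _
      congr 1
      rw [Finset.filter_filter]
      apply Finset.filter_congr
      intro r _
      tauto
    have hcons : (Finset.univ.filter (fun r : Col n k =>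
        ∀ x ∈ Finset.cons a s ha, r (em x) = w x)).card
        = (Finset.univ.filter (fun r : Col n k =>
            r (em a) = w a ∧ ∀ x ∈ s, r (em x) = w x)).card := by
      congr 1
      apply Finset.filter_congr
      intro r _
      simp [Finset.forall_mem_cons]
    rw [hcons, Finset.card_cons, pow_succ]
    have : (Finset.univ.filter (fun r : Col n k =>
        r (em a) = w a ∧ ∀ x ∈ s, r (em x) = w x)).card * (k + 1)
        = (Finset.univ.filter (fun r : Col n k => ∀ x ∈ s, r (em x) = w x)).card := by
      rw [hpart]
      rw [Finset.sum_congr rfl (fun c _ => hQ c)]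
      rw [Finset.sum_const, Finset.card_univ, Fintype.card_fin, smul_eq_mul]
      ring
    calc (Finset.univ.filter (fun r : Col n k =>
            r (em a) = w a ∧ ∀ x ∈ s, r (em x) = w x)).card * ((k + 1) ^ s.card * (k + 1))
        = ((Finset.univ.filter (fun r : Col n k =>
            r (em a) = w a ∧ ∀ x ∈ s, r (em x) = w x)).card * (k + 1)) * (k + 1) ^ s.card := by
          ring
      _ = (Finset.univ.filter (fun r : Col n k =>
            ∀ x ∈ s, r (em x) = w x)).card * (k + 1) ^ s.card := by rw [this]
      _ = NΩ n k := ih (fun x hx y hy => hinj x (Finset.mem_cons.2 (Or.inr hx))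
            y (Finset.mem_cons.2 (Or.inr hy)))

end Stmt10Aux
namespace Stmt10Aux

def dval (k : ℕ) : ℝ := 3 * (((k : ℝ) + 1) ^ k)⁻¹

lemma kpow_pos {k : ℕ} : (0 : ℝ) < ((k : ℝ) + 1) ^ k := by positivity

lemma dval_nonneg {k : ℕ} : 0 ≤ dval k := by
  unfold dval; positivity

lemma dval_le_one {k : ℕ} (hk : 3 ≤ k) : dval k ≤ 1 := by
  unfold dval
  rw [mul_inv_le_iff₀ kpow_pos, one_mul]
  calc (3 : ℝ) ≤ (k : ℝ) + 1 := by
        have : (3 : ℝ) ≤ (k : ℝ) := by exact_mod_cast hk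
        linarith
  _ ≤ ((k : ℝ) + 1) ^ k := by
      apply le_self_pow₀
      · have : (0 : ℝ) ≤ (k : ℝ) := Nat.cast_nonneg k
        linarith
      · omega

lemma patv_lt {k i j t ρ : ℕ} (hρ : ρ < k) : patv k i j t ρ < k + 1 := by
  unfold patv; split_ifs <;> omega

variable {n k i j : ℕ}

lemma card_epred (hk : 3 ≤ k) {e : Finset (Fin n)} (he : e.card = k) (t : ℕ) :
    (Finset.univ.filter (fun r : Col n k => Epred k i j r t e)).card * (k + 1) ^ k
      = NΩ n k := by
  classical
  have hcf := card_forced (n := n) (k := k) e (fun x => e.erase x)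
    (fun x hx y _ hxy => (Finset.erase_inj e hx).1 hxy)
    (fun x => ⟨patv k i j t (rankIn vord e x) % (k + 1), Nat.mod_lt _ (Nat.succ_pos k)⟩)
  rw [he] at hcf
  have hfeq : (Finset.univ.filter (fun r : Col n k => Epred k i j r t e))
      = (Finset.univ.filter (fun r : Col n k => ∀ x ∈ e, r (e.erase x)
          = ⟨patv k i j t (rankIn vord e x) % (k + 1), Nat.mod_lt _ (Nat.succ_pos k)⟩)) := by
    apply Finset.filter_congr
    intro r _
    unfold Epred
    apply forall_congr'
    intro x
    constructor
    · intro hh hx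
      have hw : patv k i j t (rankIn vord e x) < k + 1 :=
        patv_lt (he ▸ rankIn_lt_card vord hx)
      apply Fin.ext
      show (r (e.erase x) : ℕ) = patv k i j t (rankIn vord e x) % (k + 1)
      rw [hh hx]
      exact (Nat.mod_eq_of_lt hw).symm
    · intro hh hx
      have hw : patv k i j t (rankIn vord e x) < k + 1 :=
        patv_lt (he ▸ rankIn_lt_card vord hx)
      have hv : (r (e.erase x) : ℕ) = patv k i j t (rankIn vord e x) % (k + 1) :=
        congrArg Fin.val (hh hx)
      rw [Nat.mod_eq_of_lt hw] at hv
      exact hv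
  rw [hfeq]
  convert hcf using 2
  congr 1
  apply Finset.ext
  intro rr
  simp only [Finset.mem_filter]

lemma epred_disj (hk : 3 ≤ k) (hi : 1 ≤ i) (hij : i < j) (hj : j ≤ k)
    {e : Finset (Fin n)} (he : e.card = k) (r : Col n k) {t t' : ℕ}
    (ht : t < t') (ht' : t' ≤ 2) : ¬ (Epred k i j r t e ∧ Epred k i j r t' e) := by
  rintro ⟨h1, h2⟩
  have hvi : (i - 1) < e.card := by omega
  have hvj : (j - 1) < e.card := by omega
  obtain ⟨xi, hxi, hxir⟩ := rankIn_surj vord (fun a b hab => Fin.val_injective hab) e hvi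
  obtain ⟨xj, hxj, hxjr⟩ := rankIn_surj vord (fun a b hab => Fin.val_injective hab) e hvj
  have hcases : (t = 0 ∧ t' = 1) ∨ (t = 0 ∧ t' = 2) ∨ (t = 1 ∧ t' = 2) := by omega
  rcases hcases with ⟨rfl, rfl⟩ | ⟨rfl, rfl⟩ | ⟨rfl, rfl⟩
  · -- 0, 1
    have e1 := h1 xi hxi
    have e2 := h2 xi hxi
    rw [hxir, patv0] at e1
    rw [hxir, patv1, if_pos rfl] at e2
    omega
  · -- 0, 2
    have e1 := h1 xj hxj
    have e2 := h2 xj hxj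
    rw [hxjr, patv0] at e1
    rw [hxjr, patv2, if_pos rfl] at e2
    omega
  · -- 1, 2
    have e1 := h1 xi hxi
    have e2 := h2 xi hxi
    rw [hxir, patv1, if_pos rfl] at e1
    rw [hxir, patv2, if_neg (by omega)] at e2
    omega

lemma card_mem_Econ (hk : 3 ≤ k) (hi : 1 ≤ i) (hij : i < j) (hj : j ≤ k)
    {e : Finset (Fin n)} (he : e ∈ Finset.powersetCard k (Finset.univ : Finset (Fin n))) :
    (Finset.univ.filter (fun r : Col n k => e ∈ Econ k i j n r)).card * (k + 1) ^ k
      = 3 * NΩ n k := by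
  classical
  have hec : e.card = k := (Finset.mem_powersetCard.1 he).2
  have hiff : ∀ r : Col n k, e ∈ Econ k i j n r ↔
      (Epred k i j r 0 e ∨ Epred k i j r 1 e ∨ Epred k i j r 2 e) := by
    intro r
    unfold Econ
    rw [Finset.mem_filter]
    tauto
  rw [Finset.filter_congr (fun r _ => hiff r)]
  rw [Finset.filter_or, Finset.filter_or]
  have hd12 : Disjoint (Finset.univ.filter (fun r : Col n k => Epred k i j r 1 e))
      (Finset.univ.filter (fun r : Col n k => Epred k i j r 2 e)) := by
    rw [Finset.disjoint_left]
    intro r hr1 hr2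
    exact epred_disj hk hi hij hj hec r (by norm_num) (by norm_num)
      ⟨(Finset.mem_filter.1 hr1).2, (Finset.mem_filter.1 hr2).2⟩
  have hd012 : Disjoint (Finset.univ.filter (fun r : Col n k => Epred k i j r 0 e))
      ((Finset.univ.filter (fun r : Col n k => Epred k i j r 1 e))
        ∪ (Finset.univ.filter (fun r : Col n k => Epred k i j r 2 e))) := by
    rw [Finset.disjoint_left]
    intro r hr0 hr12
    rcases Finset.mem_union.1 hr12 with hr1 | hr2
    · exact epred_disj hk hi hij hj hec r (by norm_num) (by norm_num)
        ⟨(Finset.mem_filter.1 hr0).2, (Finset.mem_filter.1 hr1).2⟩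
    · exact epred_disj hk hi hij hj hec r (by norm_num) (by norm_num : (2:ℕ) ≤ 2)
        ⟨(Finset.mem_filter.1 hr0).2, (Finset.mem_filter.1 hr2).2⟩
  rw [Finset.card_union_of_disjoint hd012, Finset.card_union_of_disjoint hd12]
  rw [add_mul, add_mul]
  rw [card_epred (i := i) (j := j) hk hec 0, card_epred (i := i) (j := j) hk hec 1,
    card_epred (i := i) (j := j) hk hec 2]
  ring

lemma depOn_econ_fun (e : Finset (Fin n)) (Φ : ℝ → ℝ) :
    DepOn (e.image (fun x => e.erase x))
      (fun r : Col n k => Φ ((if e ∈ Econ k i j n r then (1 : ℝ) else 0) - dval k)) := by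
  intro r r' hag
  have hiff : (e ∈ Econ k i j n r) ↔ (e ∈ Econ k i j n r') := by
    have hep : ∀ t, Epred k i j r t e ↔ Epred k i j r' t e := by
      intro t
      unfold Epred
      apply forall_congr'
      intro x
      constructor <;> intro hh hx <;>
        rw [← hh hx, hag (e.erase x) (Finset.mem_image_of_mem _ hx)]
    unfold Econ
    rw [Finset.mem_filter, Finset.mem_filter, hep 0, hep 1, hep 2]
  dsimp only
  by_cases hmem : e ∈ Econ k i j n r
  · rw [if_pos hmem, if_pos (hiff.1 hmem)]
  · rw [if_neg hmem, if_neg (fun hc => hmem (hiff.2 hc))]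

lemma exp_quad {x : ℝ} (hx : |x| ≤ 1) : Real.exp x ≤ 1 + x + x ^ 2 := by
  have h := Real.exp_bound hx (n := 2) (by norm_num)
  have hs : ∑ m ∈ Finset.range 2, x ^ m / m.factorial = 1 + x := by
    simp [Finset.sum_range_succ]
  rw [hs] at h
  have h2 := (abs_le.1 h).2
  norm_num [Nat.factorial] at h2
  nlinarith [sq_nonneg x]

lemma mgf_edge (hk : 3 ≤ k) (hi : 1 ≤ i) (hij : i < j) (hj : j ≤ k)
    {e : Finset (Fin n)} (he : e ∈ Finset.powersetCard k (Finset.univ : Finset (Fin n)))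
    {lam : ℝ} (h0 : 0 ≤ lam) (h1 : lam ≤ 1) :
    ∑ r : Col n k,
        Real.exp (-(lam * ((if e ∈ Econ k i j n r then (1 : ℝ) else 0) - dval k)))
      ≤ (1 + lam ^ 2) * (NΩ n k : ℝ) := by
  classical
  have hd0 : 0 ≤ dval k := dval_nonneg
  have hd1 : dval k ≤ 1 := dval_le_one hk
  set d : ℝ := dval k with hd
  have hsplit := Finset.sum_filter_add_sum_filter_not (Finset.univ : Finset (Col n k))
    (fun r => e ∈ Econ k i j n r)
    (fun r => Real.exp (-(lam * ((if e ∈ Econ k i j n r then (1 : ℝ) else 0) - d))))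
  rw [← hsplit]
  have hin : ∑ r ∈ Finset.univ.filter (fun r : Col n k => e ∈ Econ k i j n r),
      Real.exp (-(lam * ((if e ∈ Econ k i j n r then (1 : ℝ) else 0) - d)))
      = ((Finset.univ.filter (fun r : Col n k => e ∈ Econ k i j n r)).card : ℝ)
        * Real.exp (-(lam * (1 - d))) := by
    calc ∑ r ∈ Finset.univ.filter (fun r : Col n k => e ∈ Econ k i j n r),
        Real.exp (-(lam * ((if e ∈ Econ k i j n r then (1 : ℝ) else 0) - d)))
        = ∑ _r ∈ Finset.univ.filter (fun r : Col n k => e ∈ Econ k i j n r),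
            Real.exp (-(lam * (1 - d))) := by
          apply Finset.sum_congr rfl
          intro r hr
          rw [if_pos (Finset.mem_filter.1 hr).2]
      _ = ((Finset.univ.filter (fun r : Col n k => e ∈ Econ k i j n r)).card : ℝ)
            * Real.exp (-(lam * (1 - d))) := by
          rw [Finset.sum_const, nsmul_eq_mul]
  have hout : ∑ r ∈ Finset.univ.filter (fun r : Col n k => ¬ e ∈ Econ k i j n r),
      Real.exp (-(lam * ((if e ∈ Econ k i j n r then (1 : ℝ) else 0) - d)))
      = ((Finset.univ.filter (fun r : Col n k => ¬ e ∈ Econ k i j n r)).card : ℝ)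
        * Real.exp (lam * d) := by
    calc ∑ r ∈ Finset.univ.filter (fun r : Col n k => ¬ e ∈ Econ k i j n r),
        Real.exp (-(lam * ((if e ∈ Econ k i j n r then (1 : ℝ) else 0) - d)))
        = ∑ _r ∈ Finset.univ.filter (fun r : Col n k => ¬ e ∈ Econ k i j n r),
            Real.exp (lam * d) := by
          apply Finset.sum_congr rfl
          intro r hr
          rw [if_neg (Finset.mem_filter.1 hr).2]
          congr 1
          ring
      _ = ((Finset.univ.filter (fun r : Col n k => ¬ e ∈ Econ k i j n r)).card : ℝ)
            * Real.exp (lam * d) := by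
          rw [Finset.sum_const, nsmul_eq_mul]
  rw [hin, hout]
  -- exact cardinalities
  have hcount := card_mem_Econ (n := n) hk hi hij hj he
  have hc' : ((Finset.univ.filter (fun r : Col n k => e ∈ Econ k i j n r)).card : ℝ)
      * ((k : ℝ) + 1) ^ k = 3 * (NΩ n k : ℝ) := by exact_mod_cast hcount
  have hkp : ((k : ℝ) + 1) ^ k ≠ 0 := ne_of_gt kpow_pos
  have hcardIn : ((Finset.univ.filter (fun r : Col n k => e ∈ Econ k i j n r)).card : ℝ)
      = d * (NΩ n k : ℝ) := by
    have h3 : ((Finset.univ.filter (fun r : Col n k => e ∈ Econ k i j n r)).card : ℝ)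
        = 3 * (((k : ℝ) + 1) ^ k)⁻¹ * (NΩ n k : ℝ) := by
      field_simp
      linarith [hc']
    rw [h3, hd]
    unfold dval
    ring
  have hcardOut : ((Finset.univ.filter (fun r : Col n k => ¬ e ∈ Econ k i j n r)).card : ℝ)
      = (1 - d) * (NΩ n k : ℝ) := by
    have hsum := Finset.card_filter_add_card_filter_not
      (s := (Finset.univ : Finset (Col n k))) (p := fun r => e ∈ Econ k i j n r)
    rw [Finset.card_univ] at hsum
    have hsum' : ((Finset.univ.filter (fun r : Col n k => e ∈ Econ k i j n r)).card : ℝ)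
        + ((Finset.univ.filter (fun r : Col n k => ¬ e ∈ Econ k i j n r)).card : ℝ)
        = (NΩ n k : ℝ) := by exact_mod_cast hsum
    linarith [hcardIn]
  rw [hcardIn, hcardOut]
  have hb1 : Real.exp (-(lam * (1 - d))) ≤ 1 + (-(lam * (1 - d))) + (lam * (1 - d)) ^ 2 := by
    have := exp_quad (x := -(lam * (1 - d))) (by
      rw [abs_neg, abs_of_nonneg (by nlinarith)]
      nlinarith)
    calc Real.exp (-(lam * (1 - d))) ≤ 1 + (-(lam * (1 - d))) + (-(lam * (1 - d))) ^ 2 := this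
    _ = 1 + (-(lam * (1 - d))) + (lam * (1 - d)) ^ 2 := by ring
  have hb2 : Real.exp (lam * d) ≤ 1 + lam * d + (lam * d) ^ 2 := by
    apply exp_quad
    rw [abs_of_nonneg (by nlinarith)]
    nlinarith
  have hN : (0 : ℝ) ≤ (NΩ n k : ℝ) := Nat.cast_nonneg _
  have hdd : d * (1 - d) ≤ 1 := by nlinarith
  nlinarith [mul_le_mul_of_nonneg_left hb1 (mul_nonneg hd0 hN),
    mul_le_mul_of_nonneg_left hb2 (mul_nonneg (sub_nonneg.2 hd1) hN),
    mul_nonneg (mul_nonneg (sq_nonneg lam) (sub_nonneg.2 hdd)) hN]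

end Stmt10Aux
namespace Stmt10Aux

variable {n k i j : ℕ}

def clsOf {n : ℕ} (e : Finset (Fin n)) : ℕ := (∑ v ∈ e, (v : ℕ)) % n

lemma apex_eq_of_cls {e e' : Finset (Fin n)} (hcls : clsOf e = clsOf e')
    {x x' : Fin n} (hx : x ∈ e) (hx' : x' ∈ e') (hS : e.erase x = e'.erase x') : e = e' := by
  have h1 : ∑ v ∈ e.erase x, (v : ℕ) + (x : ℕ) = ∑ v ∈ e, (v : ℕ) :=
    Finset.sum_erase_add e _ hx
  have h2 : ∑ v ∈ e'.erase x', (v : ℕ) + (x' : ℕ) = ∑ v ∈ e', (v : ℕ) :=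
    Finset.sum_erase_add e' _ hx'
  rw [hS] at h1
  have hmod : (∑ v ∈ e'.erase x', (v : ℕ) + (x : ℕ)) % n
      = (∑ v ∈ e'.erase x', (v : ℕ) + (x' : ℕ)) % n := by
    rw [h1, h2]; exact hcls
  have hxx : (x : ℕ) % n = (x' : ℕ) % n := Nat.ModEq.add_left_cancel' _ hmod
  rw [Nat.mod_eq_of_lt x.isLt, Nat.mod_eq_of_lt x'.isLt] at hxx
  have hxe : x = x' := Fin.val_injective hxx
  subst hxe
  rw [← Finset.insert_erase hx, ← Finset.insert_erase hx', hS]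

lemma cls_coords_disjoint {e e' : Finset (Fin n)} (hne : e ≠ e') (hcls : clsOf e = clsOf e') :
    Disjoint (e.image (fun x => e.erase x)) (e'.image (fun x => e'.erase x)) := by
  rw [Finset.disjoint_left]
  rintro S hS hS'
  obtain ⟨x, hx, rfl⟩ := Finset.mem_image.1 hS
  obtain ⟨x', hx', hSx⟩ := Finset.mem_image.1 hS'
  exact hne (apex_eq_of_cls hcls hx hx' hSx.symm)

lemma cls_class_card (hk : 3 ≤ k) (b : ℕ) :
    ((Finset.powersetCard k (Finset.univ : Finset (Fin n))).filter
      (fun e => clsOf e = b)).card ≤ n ^ (k - 1) := by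
  classical
  have hmain : ((Finset.powersetCard k (Finset.univ : Finset (Fin n))).filter
      (fun e => clsOf e = b)).card
      ≤ (Finset.powersetCard (k - 1) (Finset.univ : Finset (Fin n))).card := by
    apply Finset.card_le_card_of_injOn
      (fun e => if h : e.Nonempty then e.erase (e.min' h) else ∅)
    · intro e he
      rw [Finset.mem_coe, Finset.mem_filter, Finset.mem_powersetCard] at he
      have hne : e.Nonempty := Finset.card_pos.1 (by omega)
      dsimp only
      rw [dif_pos hne]
      rw [Finset.mem_coe, Finset.mem_powersetCard]
      refine ⟨Finset.subset_univ _, ?_⟩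
      rw [Finset.card_erase_of_mem (e.min'_mem hne)]
      omega
    · intro e he e' he' heq
      simp only [Finset.coe_filter, Set.mem_setOf_eq] at he he'
      obtain ⟨he1, he2⟩ := he
      obtain ⟨he1', he2'⟩ := he'
      rw [Finset.mem_powersetCard] at he1 he1'
      have hne : e.Nonempty := Finset.card_pos.1 (by omega)
      have hne' : e'.Nonempty := Finset.card_pos.1 (by omega)
      dsimp only at heq
      rw [dif_pos hne, dif_pos hne'] at heq
      exact apex_eq_of_cls (he2.trans he2'.symm) (e.min'_mem hne) (e'.min'_mem hne') heq
  calc _ ≤ (Finset.powersetCard (k - 1) (Finset.univ : Finset (Fin n))).card := hmain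
  _ = Nat.choose n (k - 1) := by
      rw [Finset.card_powersetCard, Finset.card_univ, Fintype.card_fin]
  _ ≤ n ^ (k - 1) := Nat.choose_le_pow _ _

lemma class_tail (hk : 3 ≤ k) (hi : 1 ≤ i) (hij : i < j) (hj : j ≤ k)
    {K : Finset (Finset (Fin n))}
    (hK : K ⊆ Finset.powersetCard k (Finset.univ : Finset (Fin n)))
    (hdisj : ∀ e ∈ K, ∀ e' ∈ K, e ≠ e' →
      Disjoint (e.image (fun x => e.erase x)) (e'.image (fun x => e'.erase x)))
    {lam s' : ℝ} (h0 : 0 ≤ lam) (h1 : lam ≤ 1) :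
    ((Finset.univ.filter (fun r : Col n k =>
        (∑ e ∈ K, ((if e ∈ Econ k i j n r then (1 : ℝ) else 0) - dval k)) ≤ -s')).card : ℝ)
      * Real.exp (lam * s')
      ≤ (NΩ n k : ℝ) * (1 + lam ^ 2) ^ K.card := by
  classical
  set φ : Finset (Fin n) → Col n k → ℝ :=
    fun e r => Real.exp (-(lam * ((if e ∈ Econ k i j n r then (1 : ℝ) else 0) - dval k)))
    with hφ
  have hN : (0 : ℝ) < (NΩ n k : ℝ) := by exact_mod_cast NΩ_pos
  -- step 1 : Markov
  have hstep1 : ((Finset.univ.filter (fun r : Col n k =>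
      (∑ e ∈ K, ((if e ∈ Econ k i j n r then (1 : ℝ) else 0) - dval k)) ≤ -s')).card : ℝ)
      * Real.exp (lam * s') ≤ ∑ r : Col n k, ∏ e ∈ K, φ e r := by
    have hprod : ∀ r : Col n k, Real.exp (-(lam * (∑ e ∈ K,
        ((if e ∈ Econ k i j n r then (1 : ℝ) else 0) - dval k))))
        = ∏ e ∈ K, φ e r := by
      intro r
      rw [← Real.exp_sum]
      congr 1
      rw [Finset.mul_sum, ← Finset.sum_neg_distrib]
    calc ((Finset.univ.filter (fun r : Col n k =>
          (∑ e ∈ K, ((if e ∈ Econ k i j n r then (1 : ℝ) else 0) - dval k)) ≤ -s')).card : ℝ)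
          * Real.exp (lam * s')
        = ∑ _r ∈ Finset.univ.filter (fun r : Col n k =>
            (∑ e ∈ K, ((if e ∈ Econ k i j n r then (1 : ℝ) else 0) - dval k)) ≤ -s'),
            Real.exp (lam * s') := by
          rw [Finset.sum_const, nsmul_eq_mul]
      _ ≤ ∑ r ∈ Finset.univ.filter (fun r : Col n k =>
            (∑ e ∈ K, ((if e ∈ Econ k i j n r then (1 : ℝ) else 0) - dval k)) ≤ -s'),
            ∏ e ∈ K, φ e r := by
          apply Finset.sum_le_sum
          intro r hr
          rw [← hprod r]
          apply Real.exp_le_exp.2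
          have hT := (Finset.mem_filter.1 hr).2
          nlinarith [hT]
      _ ≤ ∑ r : Col n k, ∏ e ∈ K, φ e r := by
          apply Finset.sum_le_sum_of_subset_of_nonneg (Finset.filter_subset _ _)
          intro r _ _
          apply Finset.prod_nonneg
          intro e _
          exact (Real.exp_pos _).le
  -- step 2 : independence
  have hdep : ∀ e ∈ K, DepOn (e.image (fun x => e.erase x)) (φ e) := by
    intro e _
    exact depOn_econ_fun (k := k) (i := i) (j := j) e (fun y => Real.exp (-(lam * y)))
  have hfact := sum_prod_of_depOn (M := K) (A := fun e => e.image (fun x => e.erase x))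
    (φ := φ) hdep hdisj
  have hedge : ∀ e ∈ K, ∑ r : Col n k, φ e r ≤ (1 + lam ^ 2) * (NΩ n k : ℝ) := by
    intro e he
    exact mgf_edge hk hi hij hj (hK he) h0 h1
  have hedge0 : ∀ e ∈ K, 0 ≤ ∑ r : Col n k, φ e r := by
    intro e _
    apply Finset.sum_nonneg
    intro r _
    exact (Real.exp_pos _).le
  have hprodle : ∏ e ∈ K, (∑ r : Col n k, φ e r)
      ≤ ((1 + lam ^ 2) * (NΩ n k : ℝ)) ^ K.card := by
    rw [← Finset.prod_const]
    exact Finset.prod_le_prod hedge0 hedge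
  have hfinal : (∑ r : Col n k, ∏ e ∈ K, φ e r)
      ≤ (NΩ n k : ℝ) * (1 + lam ^ 2) ^ K.card := by
    have hpowpos : (0 : ℝ) < (NΩ n k : ℝ) ^ K.card := pow_pos hN _
    rw [← mul_le_mul_iff_of_pos_right hpowpos]
    calc (∑ r : Col n k, ∏ e ∈ K, φ e r) * (NΩ n k : ℝ) ^ K.card
        = (NΩ n k : ℝ) * ∏ e ∈ K, (∑ r : Col n k, φ e r) := hfact
      _ ≤ (NΩ n k : ℝ) * ((1 + lam ^ 2) * (NΩ n k : ℝ)) ^ K.card := by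
          apply mul_le_mul_of_nonneg_left hprodle hN.le
      _ = (NΩ n k : ℝ) * (1 + lam ^ 2) ^ K.card * (NΩ n k : ℝ) ^ K.card := by
          rw [mul_pow]; ring
  exact hstep1.trans hfinal

end Stmt10Aux
namespace Stmt10Aux

lemma numeric_bound {k : ℕ} (hk : 3 ≤ k) {c : ℝ} (hc : 0 < c) {n : ℕ}
    (hn1 : 1 ≤ n) (hcn : 2 ≤ c * n) :
    (2 : ℝ) ^ (Nat.choose n (k - 2)) * n * Real.exp (-(c * (n : ℝ) ^ (k - 1))) < 1 := by
  have hexp : (0 : ℝ) < Real.exp (c * (n : ℝ) ^ (k - 1)) := Real.exp_pos _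
  rw [Real.exp_neg, ← div_eq_mul_inv, div_lt_one hexp]
  set m : ℕ := n ^ (k - 2) with hm
  have hCle : Nat.choose n (k - 2) ≤ m := Nat.choose_le_pow _ _
  have h2C : (2 : ℝ) ^ (Nat.choose n (k - 2)) ≤ (2 : ℝ) ^ m :=
    pow_le_pow_right₀ (by norm_num) hCle
  have hnm : n ≤ m := Nat.le_self_pow (by omega) n
  have hn2 : n < 2 ^ m :=
    lt_of_lt_of_le (Nat.lt_two_pow_self (n := n)) (Nat.pow_le_pow_right (by norm_num) hnm)
  have hn2' : (n : ℝ) < (2 : ℝ) ^ m := by exact_mod_cast hn2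
  have h4 : (4 : ℝ) ≤ Real.exp (c * n) := by
    have he2 : (4 : ℝ) < Real.exp 2 := by
      have h1 := Real.exp_one_gt_d9
      have h2 : Real.exp 2 = Real.exp 1 * Real.exp 1 := by rw [← Real.exp_add]; norm_num
      nlinarith
    have h3 : Real.exp 2 ≤ Real.exp (c * n) := Real.exp_le_exp.2 hcn
    linarith
  have hmcast : ((m : ℕ) : ℝ) = (n : ℝ) ^ (k - 2) := by rw [hm]; push_cast; ring
  have hpw : (n : ℝ) ^ (k - 2) * (n : ℝ) = (n : ℝ) ^ (k - 1) := by
    rw [← pow_succ]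
    congr 1
    omega
  have hpow : Real.exp (c * n) ^ m = Real.exp (c * (n : ℝ) ^ (k - 1)) := by
    rw [← Real.exp_nat_mul]
    congr 1
    calc ((m : ℕ) : ℝ) * (c * n) = c * ((n : ℝ) ^ (k - 2) * (n : ℝ)) := by
          rw [hmcast]; ring
    _ = c * (n : ℝ) ^ (k - 1) := by rw [hpw]
  calc (2 : ℝ) ^ (Nat.choose n (k - 2)) * n ≤ (2 : ℝ) ^ m * n := by
        apply mul_le_mul_of_nonneg_right h2C (Nat.cast_nonneg n)
  _ < (2 : ℝ) ^ m * (2 : ℝ) ^ m := by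
        apply mul_lt_mul_of_pos_left hn2' (by positivity)
  _ = (4 : ℝ) ^ m := by rw [← mul_pow]; norm_num
  _ ≤ Real.exp (c * n) ^ m := pow_le_pow_left₀ (by norm_num) h4 m
  _ = Real.exp (c * (n : ℝ) ^ (k - 1)) := hpow

variable {k i j : ℕ}

lemma exists_dense (hk : 3 ≤ k) (hi : 1 ≤ i) (hij : i < j) (hj : j ≤ k)
    {μ : ℝ} (hμ0 : 0 < μ) (hμ1 : μ ≤ 1) (n₀ : ℕ) :
    ∃ n : ℕ, n₀ ≤ n ∧ ∃ r : Col n k,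
      IsDense k (k - 2) n (dval k) μ (Econ k i j n r) := by
  classical
  set c : ℝ := μ ^ 2 / 4 with hc
  have hcpos : 0 < c := by rw [hc]; positivity
  refine ⟨max n₀ (max 1 (Nat.ceil ((2 : ℝ) / c))), le_max_left _ _, ?_⟩
  set n : ℕ := max n₀ (max 1 (Nat.ceil ((2 : ℝ) / c))) with hn
  have hn1 : 1 ≤ n := le_trans (le_max_left 1 _) (le_max_right n₀ _)
  have hcn : 2 ≤ c * n := by
    have h1 : ((2 : ℝ) / c) ≤ (Nat.ceil ((2 : ℝ) / c) : ℝ) := Nat.le_ceil _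
    have h2 : (Nat.ceil ((2 : ℝ) / c) : ℕ) ≤ n :=
      le_trans (le_max_right 1 _) (le_max_right n₀ _)
    have h2' : ((Nat.ceil ((2 : ℝ) / c) : ℕ) : ℝ) ≤ (n : ℝ) := by exact_mod_cast h2
    have h3 : (2 : ℝ) / c ≤ (n : ℝ) := le_trans h1 h2'
    calc (2 : ℝ) = c * ((2 : ℝ) / c) := by field_simp
    _ ≤ c * n := mul_le_mul_of_nonneg_left h3 hcpos.le
  set lam : ℝ := μ / 2 with hlam
  have hlam0 : 0 ≤ lam := by rw [hlam]; positivity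
  have hlam1 : lam ≤ 1 := by rw [hlam]; linarith
  set s' : ℝ := μ * (n : ℝ) ^ (k - 1) with hs'
  have hNpos : (0 : ℝ) < (NΩ n k : ℝ) := by exact_mod_cast (NΩ_pos (n := n) (k := k))
  -- the tail bound for each pair (s, b)
  have htail : ∀ s : Finset (Finset (Fin n)), ∀ b : ℕ,
      ((Finset.univ.filter (fun r : Col n k =>
        (∑ e ∈ (cliqueSet k (k - 2) n s).filter (fun e => clsOf e = b),
          ((if e ∈ Econ k i j n r then (1 : ℝ) else 0) - dval k)) ≤ -s')).card : ℝ)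
      ≤ (NΩ n k : ℝ) * Real.exp (-(c * (n : ℝ) ^ (k - 1))) := by
    intro s b
    have hKsub : (cliqueSet k (k - 2) n s).filter (fun e => clsOf e = b)
        ⊆ Finset.powersetCard k (Finset.univ : Finset (Fin n)) :=
      (Finset.filter_subset _ _).trans (Finset.filter_subset _ _)
    have hKdisj : ∀ e ∈ (cliqueSet k (k - 2) n s).filter (fun e => clsOf e = b),
        ∀ e' ∈ (cliqueSet k (k - 2) n s).filter (fun e => clsOf e = b), e ≠ e' →
        Disjoint (e.image (fun x => e.erase x)) (e'.image (fun x => e'.erase x)) := by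
      intro e he e' he' hne
      apply cls_coords_disjoint hne
      rw [(Finset.mem_filter.1 he).2, (Finset.mem_filter.1 he').2]
    have hct := class_tail (s' := s') hk hi hij hj hKsub hKdisj hlam0 hlam1
    have hKcard : ((cliqueSet k (k - 2) n s).filter (fun e => clsOf e = b)).card
        ≤ n ^ (k - 1) := by
      calc ((cliqueSet k (k - 2) n s).filter (fun e => clsOf e = b)).card
          ≤ ((Finset.powersetCard k (Finset.univ : Finset (Fin n))).filter
              (fun e => clsOf e = b)).card :=
            Finset.card_le_card (Finset.filter_subset_filter _ (Finset.filter_subset _ _))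
      _ ≤ n ^ (k - 1) := cls_class_card hk b
    have hKc : (((cliqueSet k (k - 2) n s).filter (fun e => clsOf e = b)).card : ℝ)
        ≤ (n : ℝ) ^ (k - 1) := by exact_mod_cast hKcard
    have hb1 : (1 + lam ^ 2 : ℝ) ^ ((cliqueSet k (k - 2) n s).filter
        (fun e => clsOf e = b)).card ≤ Real.exp (lam ^ 2 * (n : ℝ) ^ (k - 1)) := by
      calc (1 + lam ^ 2 : ℝ) ^ ((cliqueSet k (k - 2) n s).filter
            (fun e => clsOf e = b)).card
          ≤ (Real.exp (lam ^ 2)) ^ ((cliqueSet k (k - 2) n s).filter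
              (fun e => clsOf e = b)).card := by
            apply pow_le_pow_left₀ (by positivity)
            linarith [Real.add_one_le_exp (lam ^ 2)]
      _ = Real.exp ((((cliqueSet k (k - 2) n s).filter
            (fun e => clsOf e = b)).card : ℝ) * lam ^ 2) := by rw [← Real.exp_nat_mul]
      _ ≤ Real.exp (lam ^ 2 * (n : ℝ) ^ (k - 1)) := by
            apply Real.exp_le_exp.2
            nlinarith [sq_nonneg lam]
    have hexps : (0 : ℝ) < Real.exp (lam * s') := Real.exp_pos _
    have hfin : ((Finset.univ.filter (fun r : Col n k =>
        (∑ e ∈ (cliqueSet k (k - 2) n s).filter (fun e => clsOf e = b),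
          ((if e ∈ Econ k i j n r then (1 : ℝ) else 0) - dval k)) ≤ -s')).card : ℝ)
        ≤ (NΩ n k : ℝ) * Real.exp (lam ^ 2 * (n : ℝ) ^ (k - 1) - lam * s') := by
      have hdiv : (NΩ n k : ℝ) * Real.exp (lam ^ 2 * (n : ℝ) ^ (k - 1) - lam * s')
          = ((NΩ n k : ℝ) * Real.exp (lam ^ 2 * (n : ℝ) ^ (k - 1))) / Real.exp (lam * s') := by
        rw [Real.exp_sub]; ring
      rw [hdiv, le_div_iff₀ hexps]
      exact hct.trans (mul_le_mul_of_nonneg_left hb1 hNpos.le)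
    have hexpeq : lam ^ 2 * (n : ℝ) ^ (k - 1) - lam * s' = -(c * (n : ℝ) ^ (k - 1)) := by
      rw [hlam, hs', hc]; ring
    rw [hexpeq] at hfin
    exact hfin
  -- the bad set
  set Bad : Finset (Col n k) :=
    ((Finset.powersetCard (k - 2) (Finset.univ : Finset (Fin n))).powerset).biUnion
      (fun s => Finset.univ.filter (fun r : Col n k =>
        (∑ e ∈ cliqueSet k (k - 2) n s,
          ((if e ∈ Econ k i j n r then (1 : ℝ) else 0) - dval k)) < -(μ * (n : ℝ) ^ k)))
    with hBad
  -- per s, the bad event is inside the union of class tails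
  have hsub : ∀ s : Finset (Finset (Fin n)),
      Finset.univ.filter (fun r : Col n k =>
        (∑ e ∈ cliqueSet k (k - 2) n s,
          ((if e ∈ Econ k i j n r then (1 : ℝ) else 0) - dval k)) < -(μ * (n : ℝ) ^ k))
      ⊆ (Finset.range n).biUnion (fun b => Finset.univ.filter (fun r : Col n k =>
          (∑ e ∈ (cliqueSet k (k - 2) n s).filter (fun e => clsOf e = b),
            ((if e ∈ Econ k i j n r then (1 : ℝ) else 0) - dval k)) ≤ -s')) := by
    intro s r hr
    rw [Finset.mem_filter] at hr
    by_contra hnot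
    rw [Finset.mem_biUnion] at hnot
    push_neg at hnot
    have hgt : ∀ b ∈ Finset.range n, -s' <
        ∑ e ∈ (cliqueSet k (k - 2) n s).filter (fun e => clsOf e = b),
          ((if e ∈ Econ k i j n r then (1 : ℝ) else 0) - dval k) := by
      intro b hb
      have hno := hnot b hb
      exact not_le.1 (fun hle => hno (Finset.mem_filter.2 ⟨Finset.mem_univ r, hle⟩))
    have hfib : ∑ b ∈ Finset.range n,
        ∑ e ∈ (cliqueSet k (k - 2) n s).filter (fun e => clsOf e = b),
          ((if e ∈ Econ k i j n r then (1 : ℝ) else 0) - dval k)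
        = ∑ e ∈ cliqueSet k (k - 2) n s,
            ((if e ∈ Econ k i j n r then (1 : ℝ) else 0) - dval k) := by
      apply Finset.sum_fiberwise_of_maps_to
      intro e _
      exact Finset.mem_range.2 (Nat.mod_lt _ (by omega))
    have hlt : ∑ _b ∈ Finset.range n, (-s') < ∑ b ∈ Finset.range n,
        ∑ e ∈ (cliqueSet k (k - 2) n s).filter (fun e => clsOf e = b),
          ((if e ∈ Econ k i j n r then (1 : ℝ) else 0) - dval k) :=
      Finset.sum_lt_sum_of_nonempty (Finset.nonempty_range_iff.2 (by omega)) hgt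
    rw [Finset.sum_const, Finset.card_range, nsmul_eq_mul, hfib] at hlt
    have hpw : (n : ℝ) ^ (k - 1) * (n : ℝ) = (n : ℝ) ^ k := by
      rw [← pow_succ]
      congr 1
      omega
    have hid : (n : ℝ) * (-s') = -(μ * (n : ℝ) ^ k) := by
      rw [hs', ← hpw]; ring
    linarith [hr.2]
  -- counting the bad set
  have hBadlt : (Bad.card : ℝ) < (NΩ n k : ℝ) := by
    have h1 : Bad.card ≤ ∑ s ∈ (Finset.powersetCard (k - 2)
        (Finset.univ : Finset (Fin n))).powerset,
        (Finset.univ.filter (fun r : Col n k =>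
          (∑ e ∈ cliqueSet k (k - 2) n s,
            ((if e ∈ Econ k i j n r then (1 : ℝ) else 0) - dval k))
          < -(μ * (n : ℝ) ^ k))).card := Finset.card_biUnion_le
    have h2 : ∀ s ∈ (Finset.powersetCard (k - 2)
        (Finset.univ : Finset (Fin n))).powerset,
        ((Finset.univ.filter (fun r : Col n k =>
          (∑ e ∈ cliqueSet k (k - 2) n s,
            ((if e ∈ Econ k i j n r then (1 : ℝ) else 0) - dval k))
          < -(μ * (n : ℝ) ^ k))).card : ℝ)
        ≤ (n : ℝ) * ((NΩ n k : ℝ) * Real.exp (-(c * (n : ℝ) ^ (k - 1)))) := by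
      intro s _
      have hstep : (Finset.univ.filter (fun r : Col n k =>
          (∑ e ∈ cliqueSet k (k - 2) n s,
            ((if e ∈ Econ k i j n r then (1 : ℝ) else 0) - dval k))
          < -(μ * (n : ℝ) ^ k))).card
          ≤ ∑ b ∈ Finset.range n, (Finset.univ.filter (fun r : Col n k =>
            (∑ e ∈ (cliqueSet k (k - 2) n s).filter (fun e => clsOf e = b),
              ((if e ∈ Econ k i j n r then (1 : ℝ) else 0) - dval k)) ≤ -s')).card :=
        le_trans (Finset.card_le_card (hsub s)) Finset.card_biUnion_le
      have hstep' : ((Finset.univ.filter (fun r : Col n k =>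
          (∑ e ∈ cliqueSet k (k - 2) n s,
            ((if e ∈ Econ k i j n r then (1 : ℝ) else 0) - dval k))
          < -(μ * (n : ℝ) ^ k))).card : ℝ)
          ≤ ∑ b ∈ Finset.range n, ((Finset.univ.filter (fun r : Col n k =>
            (∑ e ∈ (cliqueSet k (k - 2) n s).filter (fun e => clsOf e = b),
              ((if e ∈ Econ k i j n r then (1 : ℝ) else 0) - dval k)) ≤ -s')).card : ℝ) := by
        exact_mod_cast hstep
      calc _ ≤ ∑ b ∈ Finset.range n, ((Finset.univ.filter (fun r : Col n k =>
            (∑ e ∈ (cliqueSet k (k - 2) n s).filter (fun e => clsOf e = b),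
              ((if e ∈ Econ k i j n r then (1 : ℝ) else 0) - dval k)) ≤ -s')).card : ℝ) :=
            hstep'
      _ ≤ ∑ _b ∈ Finset.range n,
            ((NΩ n k : ℝ) * Real.exp (-(c * (n : ℝ) ^ (k - 1)))) :=
            Finset.sum_le_sum (fun b _ => htail s b)
      _ = (n : ℝ) * ((NΩ n k : ℝ) * Real.exp (-(c * (n : ℝ) ^ (k - 1)))) := by
            rw [Finset.sum_const, Finset.card_range, nsmul_eq_mul]
    have h1' : (Bad.card : ℝ) ≤ ∑ s ∈ (Finset.powersetCard (k - 2)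
        (Finset.univ : Finset (Fin n))).powerset,
        ((Finset.univ.filter (fun r : Col n k =>
          (∑ e ∈ cliqueSet k (k - 2) n s,
            ((if e ∈ Econ k i j n r then (1 : ℝ) else 0) - dval k))
          < -(μ * (n : ℝ) ^ k))).card : ℝ) := by exact_mod_cast h1
    have hcardpow : (((Finset.powersetCard (k - 2)
        (Finset.univ : Finset (Fin n))).powerset).card : ℝ)
        = (2 : ℝ) ^ (Nat.choose n (k - 2)) := by
      rw [Finset.card_powerset, Finset.card_powersetCard, Finset.card_univ, Fintype.card_fin]
      push_cast
      ring
    have hmain : (Bad.card : ℝ) ≤ (2 : ℝ) ^ (Nat.choose n (k - 2))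
        * ((n : ℝ) * ((NΩ n k : ℝ) * Real.exp (-(c * (n : ℝ) ^ (k - 1))))) := by
      calc (Bad.card : ℝ) ≤ _ := h1'
      _ ≤ ∑ _s ∈ (Finset.powersetCard (k - 2)
            (Finset.univ : Finset (Fin n))).powerset,
            ((n : ℝ) * ((NΩ n k : ℝ) * Real.exp (-(c * (n : ℝ) ^ (k - 1))))) :=
          Finset.sum_le_sum h2
      _ = (((Finset.powersetCard (k - 2)
            (Finset.univ : Finset (Fin n))).powerset).card : ℝ)
            * ((n : ℝ) * ((NΩ n k : ℝ) * Real.exp (-(c * (n : ℝ) ^ (k - 1))))) := by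
          rw [Finset.sum_const, nsmul_eq_mul]
      _ = _ := by rw [hcardpow]
    have hnum := numeric_bound hk hcpos hn1 hcn
    calc (Bad.card : ℝ) ≤ _ := hmain
    _ = (NΩ n k : ℝ) * ((2 : ℝ) ^ (Nat.choose n (k - 2)) * (n : ℝ)
          * Real.exp (-(c * (n : ℝ) ^ (k - 1)))) := by ring
    _ < (NΩ n k : ℝ) * 1 := mul_lt_mul_of_pos_left hnum hNpos
    _ = (NΩ n k : ℝ) := mul_one _
  -- pick a good coloring
  have hex : ∃ r : Col n k, r ∉ Bad := by
    by_contra hno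
    push_neg at hno
    have hsubu : (Finset.univ : Finset (Col n k)) ⊆ Bad := fun r _ => hno r
    have hcard : NΩ n k ≤ Bad.card := by
      unfold NΩ
      rw [← Finset.card_univ]
      exact Finset.card_le_card hsubu
    have : (NΩ n k : ℝ) ≤ (Bad.card : ℝ) := by exact_mod_cast hcard
    linarith
  obtain ⟨r, hr⟩ := hex
  refine ⟨r, ?_⟩
  intro G hG
  have hGs : G ∈ (Finset.powersetCard (k - 2) (Finset.univ : Finset (Fin n))).powerset :=
    Finset.mem_powerset.2 (fun e he => Finset.mem_powersetCard.2
      ⟨Finset.subset_univ _, hG e he⟩)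
  have hnotbad : ¬ ((∑ e ∈ cliqueSet k (k - 2) n G,
      ((if e ∈ Econ k i j n r then (1 : ℝ) else 0) - dval k)) < -(μ * (n : ℝ) ^ k)) := by
    intro hcon
    exact hr (Finset.mem_biUnion.2 ⟨G, hGs,
      Finset.mem_filter.2 ⟨Finset.mem_univ r, hcon⟩⟩)
  push_neg at hnotbad
  have hident : ∑ e ∈ cliqueSet k (k - 2) n G,
      ((if e ∈ Econ k i j n r then (1 : ℝ) else 0) - dval k)
      = ((cliqueSet k (k - 2) n G ∩ Econ k i j n r).card : ℝ)
        - dval k * ((cliqueSet k (k - 2) n G).card : ℝ) := by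
    rw [Finset.sum_sub_distrib, Finset.sum_const, nsmul_eq_mul, Finset.sum_boole,
      Finset.filter_mem_eq_inter]
    ring
  rw [hident] at hnotbad
  linarith

end Stmt10Aux
/-- Theorem 7.1. Let `k ≥ 3` and let `F` be a `k`-graph that fails
property (♠*) for some pair `i < j` in `[k]`.  Then `π_{k−2}(F) ≥ 3·(k+1)^{−k}`. -/
theorem stmt10 (k f : ℕ) (hk : 3 ≤ k) (F : Finset (Finset (Fin f)))
    (hF : HGIsUniform k F)
    (i j : ℕ) (hi : 1 ≤ i) (hij : i < j) (hj : j ≤ k)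
    (h : ¬ SpadeStar k f F i j) :
    3 * (((k : ℝ) + 1) ^ k)⁻¹ ≤ uniformTuranDensity k (k - 2) f F := by
  classical
  have hd : (3 * (((k : ℝ) + 1) ^ k)⁻¹) = Stmt10Aux.dval k := rfl
  rw [uniformTuranDensity]
  apply le_csSup
  · refine ⟨1, ?_⟩
    rintro x ⟨hx, -⟩
    exact hx.2
  · constructor
    · rw [hd]
      exact ⟨Stmt10Aux.dval_nonneg, Stmt10Aux.dval_le_one hk⟩
    · intro μ hμ n₀
      have hμ'0 : 0 < min μ 1 := lt_min hμ one_pos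
      have hμ'1 : min μ 1 ≤ 1 := min_le_right _ _
      obtain ⟨n, hn, r, hdense⟩ :=
        Stmt10Aux.exists_dense (i := i) (j := j) hk hi hij hj hμ'0 hμ'1 n₀
      refine ⟨n, hn, Stmt10Aux.Econ k i j n r, ?_,
        Stmt10Aux.free_of_not_spade hk hF hi hij hj h r, ?_⟩
      · intro e he
        exact (Finset.mem_powersetCard.1 (Finset.mem_filter.1 he).1).2
      · intro G hG
        have hden := hdense G hG
        have hμle : min μ 1 ≤ μ := min_le_left _ _
        have hpow : (0 : ℝ) ≤ (n : ℝ) ^ k := by positivity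
        rw [hd]
        nlinarith [hden]
end
end
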